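/- arXiv:1009.3694 — 8 statements merged into one kernel-verified Lean document; each statement's English description precedes it below -/
import Mathlib

section
/- For a Borel measure η on ℝ with ∫ 1/(1+y²) dη(y) < ∞, fix α ∈ [0,1] and x ∈ ℝ. Then the upper α-derivative D̄_η^α(x) = limsup_{ε→0⁺} η((x-ε,x+ε))/ε^α and the quantity limsup_{ε→0⁺} ε^{1-α} P_η(x+iε) are either both infinite, both zero, or both in (0,+∞). -/
open MeasureTheory Set Filter

open scoped ENNReal

lemma low_bound (η : Measure ℝ) (x α : ℝ) {ε : ℝ} (hε : 0 < ε) :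
    η (Ioo (x - ε) (x + ε)) / ENNReal.ofReal (ε ^ α) ≤
      2 * (ENNReal.ofReal (ε ^ (1 - α)) *
        ∫⁻ y, ENNReal.ofReal (ε / ((y - x) ^ 2 + ε ^ 2)) ∂η) := by
  have hεα : (0:ℝ) < ε ^ α := Real.rpow_pos_of_pos hε α
  rw [ENNReal.div_le_iff (by simp [hεα]) (by simp)]
  have hP : ENNReal.ofReal (1 / (2 * ε)) * η (Ioo (x - ε) (x + ε)) ≤
      ∫⁻ y, ENNReal.ofReal (ε / ((y - x) ^ 2 + ε ^ 2)) ∂η := by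
    rw [← lintegral_indicator_const measurableSet_Ioo]
    refine lintegral_mono fun y => ?_
    by_cases hy : y ∈ Ioo (x - ε) (x + ε)
    · rw [Set.indicator_of_mem hy]
      refine ENNReal.ofReal_le_ofReal ?_
      rw [div_le_div_iff₀ (by positivity) (by positivity)]
      simp only [mem_Ioo] at hy
      nlinarith [sq_nonneg (y - x), hy.1, hy.2]
    · rw [Set.indicator_of_notMem hy]; exact zero_le
  calc η (Ioo (x - ε) (x + ε))
      = ENNReal.ofReal ((2 * ε ^ (1-α) * ε ^ α) * (1 / (2*ε))) * η (Ioo (x - ε) (x + ε)) := by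
        rw [show (2 * ε ^ (1-α) * ε ^ α) * (1 / (2*ε)) = (ε ^ (1-α) * ε ^ α) / ε by ring,
          ← Real.rpow_add hε, show (1 - α) + α = 1 by ring, Real.rpow_one, div_self hε.ne']
        simp
    _ = ENNReal.ofReal (2 * ε ^ (1-α) * ε ^ α) * (ENNReal.ofReal (1 / (2*ε)) * η (Ioo (x - ε) (x + ε))) := by
        rw [ENNReal.ofReal_mul (by positivity), mul_assoc]
    _ ≤ ENNReal.ofReal (2 * ε ^ (1-α) * ε ^ α) * ∫⁻ y, ENNReal.ofReal (ε / ((y - x) ^ 2 + ε ^ 2)) ∂η := by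
        exact mul_le_mul_right hP _
    _ = 2 * (ENNReal.ofReal (ε ^ (1 - α)) * ∫⁻ y, ENNReal.ofReal (ε / ((y - x) ^ 2 + ε ^ 2)) ∂η) * ENNReal.ofReal (ε ^ α) := by
        rw [ENNReal.ofReal_mul (by positivity), ENNReal.ofReal_mul (by norm_num)]
        rw [ENNReal.ofReal_ofNat]
        ring

lemma pointwise_dyadic (x ρ ε : ℝ) (hρ : 0 < ρ) (hε : 0 < ε) {y : ℝ}
    (hy : y ∈ Ioo (x - ρ) (x + ρ)) :
    ENNReal.ofReal (ε / ((y - x) ^ 2 + ε ^ 2)) ≤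
      ∑' k : ℕ, (Ioo (x - min (2 ^ k * ε) ρ) (x + min (2 ^ k * ε) ρ)).indicator
        (fun _ => ENNReal.ofReal (4 / (4 ^ k * ε))) y := by
  simp only [mem_Ioo] at hy
  have hr : |y - x| < ρ := abs_sub_lt_iff.2 ⟨by linarith, by linarith⟩
  have hex : ∃ k : ℕ, |y - x| < 2 ^ k * ε := by
    obtain ⟨n, hn⟩ := pow_unbounded_of_one_lt (|y - x| / ε) (one_lt_two (α := ℝ))
    exact ⟨n, by rwa [div_lt_iff₀ hε] at hn⟩
  classical
  set k := Nat.find hex with hk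
  have hklt : |y - x| < 2 ^ k * ε := Nat.find_spec hex
  have hmem : y ∈ Ioo (x - min (2 ^ k * ε) ρ) (x + min (2 ^ k * ε) ρ) := by
    have : |y - x| < min (2 ^ k * ε) ρ := lt_min hklt hr
    rw [abs_sub_lt_iff] at this
    constructor <;> [linarith [this.1]; linarith [this.2]]
  refine le_trans ?_ (ENNReal.le_tsum k)
  rw [Set.indicator_of_mem hmem]
  refine ENNReal.ofReal_le_ofReal ?_
  have hsq : (0:ℝ) < (y - x) ^ 2 + ε ^ 2 := by positivity
  rw [div_le_div_iff₀ hsq (by positivity)]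
  rcases Nat.eq_zero_or_pos k with h0 | hpos
  · rw [h0]; nlinarith [sq_nonneg (y - x)]
  · obtain ⟨m, hkm⟩ : ∃ m, k = m + 1 := ⟨k - 1, (Nat.succ_pred_eq_of_pos hpos).symm⟩
    rw [hkm]
    have hmin : ¬ (|y - x| < 2 ^ m * ε) := Nat.find_min hex (by omega)
    push_neg at hmin
    have h2 : ((2:ℝ) ^ m * ε) ^ 2 ≤ (y - x) ^ 2 := by
      rw [← sq_abs (y - x)]
      exact pow_le_pow_left₀ (by positivity) hmin 2
    have h4 : (4:ℝ) ^ (m+1) = 4 * (2 ^ m * 2 ^ m) := by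
      rw [show ((2:ℝ) ^ m * 2 ^ m) = 4 ^ m by rw [← mul_pow]; norm_num, pow_succ]
      ring
    rw [h4]
    nlinarith [sq_nonneg (y - x), mul_pos (pow_pos (by norm_num : (0:ℝ) < 2) m) hε]

lemma near_bound (η : Measure ℝ) (x α : ℝ) (hα : α ∈ Icc (0:ℝ) 1) (M : ℝ≥0∞)
    {ρ ε : ℝ} (hρ : 0 < ρ) (hε : 0 < ε)
    (hmono : ∀ s : ℝ, 0 < s → s ≤ ρ → η (Ioo (x - s) (x + s)) ≤ M * ENNReal.ofReal (s ^ α)) :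
    ∫⁻ y in Ioo (x - ρ) (x + ρ), ENNReal.ofReal (ε / ((y - x) ^ 2 + ε ^ 2)) ∂η ≤
      M * ENNReal.ofReal (8 * ε ^ (α - 1)) := by
  classical
  have key : ∀ k : ℕ, ENNReal.ofReal (4 / (4 ^ k * ε)) *
      η (Ioo (x - min (2 ^ k * ε) ρ) (x + min (2 ^ k * ε) ρ)) ≤
      M * ENNReal.ofReal (4 * ε ^ (α - 1)) * (2⁻¹ : ℝ≥0∞) ^ k := by
    intro k
    have hminpos : 0 < min ((2:ℝ) ^ k * ε) ρ := lt_min (by positivity) hρ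
    have hm := hmono _ hminpos (min_le_right _ _)
    calc ENNReal.ofReal (4 / (4 ^ k * ε)) * η (Ioo (x - min (2 ^ k * ε) ρ) (x + min (2 ^ k * ε) ρ))
        ≤ ENNReal.ofReal (4 / (4 ^ k * ε)) * (M * ENNReal.ofReal ((min (2 ^ k * ε) ρ) ^ α)) :=
          mul_le_mul_right hm _
      _ = M * ENNReal.ofReal (4 / (4 ^ k * ε) * (min (2 ^ k * ε) ρ) ^ α) := by
          rw [ENNReal.ofReal_mul (by positivity)]; ring
      _ ≤ M * ENNReal.ofReal (4 * ε ^ (α - 1) * (1/2 : ℝ) ^ k) := by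
          refine mul_le_mul_right (ENNReal.ofReal_le_ofReal ?_) M
          have h1 : (min (2 ^ k * ε) ρ) ^ α ≤ ((2:ℝ) ^ k * ε) ^ α :=
            Real.rpow_le_rpow hminpos.le (min_le_left _ _) hα.1
          have h2 : ((2:ℝ) ^ k * ε) ^ α = ((2:ℝ) ^ (k:ℝ)) ^ α * ε ^ α := by
            rw [Real.mul_rpow (by positivity) hε.le, Real.rpow_natCast]
          have h3 : ((2:ℝ) ^ (k:ℝ)) ^ α ≤ (2:ℝ) ^ (k:ℝ) := by
            rw [← Real.rpow_mul (by norm_num : (0:ℝ) ≤ 2)]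
            exact Real.rpow_le_rpow_of_exponent_le one_le_two
              (by nlinarith [hα.2, Nat.cast_nonneg (α := ℝ) k])
          have h4 : (min (2 ^ k * ε) ρ) ^ α ≤ (2:ℝ) ^ (k:ℝ) * ε ^ α := by
            calc (min (2 ^ k * ε) ρ) ^ α ≤ ((2:ℝ) ^ (k:ℝ)) ^ α * ε ^ α := by
                  rw [← h2]; exact h1
              _ ≤ (2:ℝ) ^ (k:ℝ) * ε ^ α := by
                  exact mul_le_mul_of_nonneg_right h3 (Real.rpow_nonneg hε.le α)
          have h5 : (0:ℝ) < 4 / (4 ^ k * ε) := by positivity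
          calc 4 / (4 ^ k * ε) * (min (2 ^ k * ε) ρ) ^ α
              ≤ 4 / (4 ^ k * ε) * ((2:ℝ) ^ (k:ℝ) * ε ^ α) := by
                exact mul_le_mul_of_nonneg_left h4 h5.le
            _ = 4 * ε ^ (α - 1) * (1/2 : ℝ) ^ k := by
                rw [Real.rpow_natCast, Real.rpow_sub hε, Real.rpow_one,
                  show (4:ℝ) ^ k = 2 ^ k * 2 ^ k by rw [← mul_pow]; norm_num]
                rw [div_pow, one_pow]
                field_simp
      _ = M * ENNReal.ofReal (4 * ε ^ (α - 1)) * (2⁻¹ : ℝ≥0∞) ^ k := by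
          have h12 : ENNReal.ofReal ((1/2 : ℝ)) = 2⁻¹ := by
            rw [one_div, ENNReal.ofReal_inv_of_pos (by norm_num), ENNReal.ofReal_ofNat]
          rw [ENNReal.ofReal_mul (by positivity), ENNReal.ofReal_pow (by norm_num), h12, mul_assoc]
  calc ∫⁻ y in Ioo (x - ρ) (x + ρ), ENNReal.ofReal (ε / ((y - x) ^ 2 + ε ^ 2)) ∂η
      ≤ ∫⁻ y in Ioo (x - ρ) (x + ρ), ∑' k : ℕ,
          (Ioo (x - min (2 ^ k * ε) ρ) (x + min (2 ^ k * ε) ρ)).indicator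
            (fun _ => ENNReal.ofReal (4 / (4 ^ k * ε))) y ∂η := by
        refine setLIntegral_mono (by measurability) fun y hy => pointwise_dyadic x ρ ε hρ hε hy
    _ ≤ ∫⁻ y, ∑' k : ℕ,
          (Ioo (x - min (2 ^ k * ε) ρ) (x + min (2 ^ k * ε) ρ)).indicator
            (fun _ => ENNReal.ofReal (4 / (4 ^ k * ε))) y ∂η := setLIntegral_le_lintegral _ _
    _ = ∑' k : ℕ, ENNReal.ofReal (4 / (4 ^ k * ε)) *
          η (Ioo (x - min (2 ^ k * ε) ρ) (x + min (2 ^ k * ε) ρ)) := by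
        rw [lintegral_tsum fun k => (measurable_const.indicator measurableSet_Ioo).aemeasurable]
        exact tsum_congr fun k => lintegral_indicator_const measurableSet_Ioo _
    _ ≤ ∑' k : ℕ, M * ENNReal.ofReal (4 * ε ^ (α - 1)) * (2⁻¹ : ℝ≥0∞) ^ k :=
        ENNReal.tsum_le_tsum key
    _ = M * ENNReal.ofReal (4 * ε ^ (α - 1)) * 2 := by
        rw [ENNReal.tsum_mul_left, ENNReal.tsum_geometric]
        norm_num
    _ = M * ENNReal.ofReal (8 * ε ^ (α - 1)) := by
        rw [show (8:ℝ) * ε ^ (α-1) = (4 * ε ^ (α-1)) * 2 by ring,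
          ENNReal.ofReal_mul' (by norm_num : (0:ℝ) ≤ 2), ENNReal.ofReal_ofNat, mul_assoc]

lemma tail_bound (η : Measure ℝ) (x : ℝ) {ρ ε : ℝ} (hρ : 0 < ρ) (hε : 0 < ε) :
    ∫⁻ y in (Ioo (x - ρ) (x + ρ))ᶜ, ENNReal.ofReal (ε / ((y - x) ^ 2 + ε ^ 2)) ∂η ≤
      ENNReal.ofReal (ε * ((1 + 2 * x ^ 2) / ρ ^ 2 + 2)) *
        ∫⁻ y, ENNReal.ofReal (1 / (1 + y ^ 2)) ∂η := by
  set C : ℝ := (1 + 2 * x ^ 2) / ρ ^ 2 + 2 with hC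
  have hCpos : 0 < C := by positivity
  calc ∫⁻ y in (Ioo (x - ρ) (x + ρ))ᶜ, ENNReal.ofReal (ε / ((y - x) ^ 2 + ε ^ 2)) ∂η
      ≤ ∫⁻ y in (Ioo (x - ρ) (x + ρ))ᶜ, ENNReal.ofReal (ε * C) * ENNReal.ofReal (1 / (1 + y ^ 2)) ∂η := by
        refine setLIntegral_mono (by measurability) fun y hy => ?_
        rw [← ENNReal.ofReal_mul (by positivity)]
        refine ENNReal.ofReal_le_ofReal ?_
        have hsep : ρ ≤ |y - x| := by
          simp only [mem_compl_iff, mem_Ioo, not_and_or, not_lt] at hy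
          rcases hy with h | h
          · rw [abs_sub_comm, abs_of_nonneg (by linarith)]; linarith
          · rw [abs_of_nonneg (by linarith)]; linarith
        have hsq : ρ ^ 2 ≤ (y - x) ^ 2 := by
          rw [← sq_abs (y - x)]; exact pow_le_pow_left₀ hρ.le hsep 2
        have h2 : (0:ℝ) < 1 + y ^ 2 := by positivity
        rw [mul_assoc, mul_one_div, ← mul_div_assoc, div_le_div_iff₀ (by positivity) h2]
        have key : 1 + y ^ 2 ≤ C * (y - x) ^ 2 := by
          have h1 : 1 + 2 * x ^ 2 ≤ (1 + 2 * x ^ 2) / ρ ^ 2 * (y - x) ^ 2 := by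
            rw [div_mul_eq_mul_div, le_div_iff₀ (by positivity)]
            nlinarith
          rw [hC]
          nlinarith [sq_nonneg (y - 2 * x)]
        have key2 : ε * (1 + y ^ 2) ≤ ε * (C * (y - x) ^ 2) :=
          mul_le_mul_of_nonneg_left key hε.le
        nlinarith [mul_nonneg (mul_nonneg hε.le hCpos.le) (sq_nonneg ε)]
    _ ≤ ∫⁻ y, ENNReal.ofReal (ε * C) * ENNReal.ofReal (1 / (1 + y ^ 2)) ∂η :=
        setLIntegral_le_lintegral _ _
    _ = ENNReal.ofReal (ε * C) * ∫⁻ y, ENNReal.ofReal (1 / (1 + y ^ 2)) ∂η := by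
        rw [lintegral_const_mul _ (by measurability)]

lemma high_bound (η : Measure ℝ) (x α : ℝ) (hα : α ∈ Icc (0:ℝ) 1) (M : ℝ≥0∞)
    {ρ ε : ℝ} (hρ : 0 < ρ) (hε : 0 < ε)
    (hmono : ∀ s : ℝ, 0 < s → s ≤ ρ → η (Ioo (x - s) (x + s)) ≤ M * ENNReal.ofReal (s ^ α)) :
    ENNReal.ofReal (ε ^ (1 - α)) * ∫⁻ y, ENNReal.ofReal (ε / ((y - x) ^ 2 + ε ^ 2)) ∂η ≤
      8 * M + ENNReal.ofReal (ε ^ (2 - α) * ((1 + 2 * x ^ 2) / ρ ^ 2 + 2)) *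
        ∫⁻ y, ENNReal.ofReal (1 / (1 + y ^ 2)) ∂η := by
  rw [← lintegral_add_compl (fun y => ENNReal.ofReal (ε / ((y - x) ^ 2 + ε ^ 2)))
    (measurableSet_Ioo (a := x - ρ) (b := x + ρ)), mul_add]
  refine add_le_add ?_ ?_
  · calc ENNReal.ofReal (ε ^ (1 - α)) *
        ∫⁻ y in Ioo (x - ρ) (x + ρ), ENNReal.ofReal (ε / ((y - x) ^ 2 + ε ^ 2)) ∂η
        ≤ ENNReal.ofReal (ε ^ (1 - α)) * (M * ENNReal.ofReal (8 * ε ^ (α - 1))) :=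
          mul_le_mul_right (near_bound η x α hα M hρ hε hmono) _
      _ = (ENNReal.ofReal (ε ^ (1 - α)) * ENNReal.ofReal (8 * ε ^ (α - 1))) * M := by ring
      _ = 8 * M := by
          rw [← ENNReal.ofReal_mul (by positivity),
            show ε ^ (1-α) * (8 * ε ^ (α-1)) = 8 * (ε ^ (1-α) * ε ^ (α-1)) by ring,
            ← Real.rpow_add hε, show (1 - α) + (α - 1) = 0 by ring, Real.rpow_zero, mul_one,
            ENNReal.ofReal_ofNat]
  · calc ENNReal.ofReal (ε ^ (1 - α)) *
        ∫⁻ y in (Ioo (x - ρ) (x + ρ))ᶜ, ENNReal.ofReal (ε / ((y - x) ^ 2 + ε ^ 2)) ∂η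
        ≤ ENNReal.ofReal (ε ^ (1 - α)) * (ENNReal.ofReal (ε * ((1 + 2 * x ^ 2) / ρ ^ 2 + 2)) *
            ∫⁻ y, ENNReal.ofReal (1 / (1 + y ^ 2)) ∂η) :=
          mul_le_mul_right (tail_bound η x hρ hε) _
      _ = ENNReal.ofReal (ε ^ (2 - α) * ((1 + 2 * x ^ 2) / ρ ^ 2 + 2)) *
            ∫⁻ y, ENNReal.ofReal (1 / (1 + y ^ 2)) ∂η := by
          rw [← mul_assoc, ← ENNReal.ofReal_mul (by positivity)]
          congr 2
          rw [show ε ^ (1 - α) * (ε * ((1 + 2 * x ^ 2) / ρ ^ 2 + 2)) =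
            (ε ^ (1 - α) * ε ^ (1:ℝ)) * ((1 + 2 * x ^ 2) / ρ ^ 2 + 2) by rw [Real.rpow_one]; ring,
            ← Real.rpow_add hε, show (1 - α) + 1 = 2 - α by ring]

theorem stmt_1 (η : Measure ℝ)
    (hη : ∫⁻ y, ENNReal.ofReal (1 / (1 + y ^ 2)) ∂η < ⊤)
    (α : ℝ) (hα : α ∈ Set.Icc (0 : ℝ) 1) (x : ℝ) :
    (Filter.limsup (fun ε : ℝ => η (Set.Ioo (x - ε) (x + ε)) / ENNReal.ofReal (ε ^ α))
        (nhdsWithin 0 (Set.Ioi 0)) = ⊤ ↔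
      Filter.limsup (fun ε : ℝ =>
          ENNReal.ofReal (ε ^ (1 - α)) *
            ∫⁻ y, ENNReal.ofReal (ε / ((y - x) ^ 2 + ε ^ 2)) ∂η)
        (nhdsWithin 0 (Set.Ioi 0)) = ⊤) ∧
    (Filter.limsup (fun ε : ℝ => η (Set.Ioo (x - ε) (x + ε)) / ENNReal.ofReal (ε ^ α))
        (nhdsWithin 0 (Set.Ioi 0)) = 0 ↔
      Filter.limsup (fun ε : ℝ =>
          ENNReal.ofReal (ε ^ (1 - α)) *
            ∫⁻ y, ENNReal.ofReal (ε / ((y - x) ^ 2 + ε ^ 2)) ∂η)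
        (nhdsWithin 0 (Set.Ioi 0)) = 0) := by
  set L : Filter ℝ := nhdsWithin 0 (Set.Ioi 0) with hL
  set F₁ : ℝ → ℝ≥0∞ := fun ε => η (Set.Ioo (x - ε) (x + ε)) / ENNReal.ofReal (ε ^ α) with hF₁
  set F₂ : ℝ → ℝ≥0∞ := fun ε => ENNReal.ofReal (ε ^ (1 - α)) *
      ∫⁻ y, ENNReal.ofReal (ε / ((y - x) ^ 2 + ε ^ 2)) ∂η with hF₂
  set T : ℝ≥0∞ := ∫⁻ y, ENNReal.ofReal (1 / (1 + y ^ 2)) ∂η with hT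
  have hev_low : ∀ᶠ ε in L, F₁ ε ≤ 2 * F₂ ε := by
    filter_upwards [self_mem_nhdsWithin] with ε hε
    exact low_bound η x α hε
  -- tail term tends to zero
  have htail : ∀ ρ : ℝ, 0 < ρ → Tendsto
      (fun ε : ℝ => ENNReal.ofReal (ε ^ (2 - α) * ((1 + 2 * x ^ 2) / ρ ^ 2 + 2)) * T) L (nhds 0) := by
    intro ρ hρ
    have hreal : Tendsto (fun ε : ℝ => ε ^ (2 - α) * ((1 + 2 * x ^ 2) / ρ ^ 2 + 2)) L (nhds 0) := by
      have h1 : Tendsto (fun ε : ℝ => ε ^ (2 - α)) L (nhds 0) := by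
        apply squeeze_zero' (f := fun ε : ℝ => ε ^ (2 - α)) (g := fun ε : ℝ => ε)
        · filter_upwards [self_mem_nhdsWithin] with ε hε
          exact (Real.rpow_pos_of_pos hε _).le
        · have : Ioo (0:ℝ) 1 ∈ L := Ioo_mem_nhdsGT_of_mem (by norm_num)
          filter_upwards [this] with ε hε
          calc ε ^ (2 - α) ≤ ε ^ (1:ℝ) :=
                Real.rpow_le_rpow_of_exponent_ge hε.1 hε.2.le (by linarith [hα.2])
            _ = ε := Real.rpow_one ε
        · exact tendsto_id.mono_left nhdsWithin_le_nhds
      have := h1.mul_const ((1 + 2 * x ^ 2) / ρ ^ 2 + 2)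
      simpa using this
    have h2 : Tendsto (fun ε : ℝ => ENNReal.ofReal (ε ^ (2 - α) * ((1 + 2 * x ^ 2) / ρ ^ 2 + 2))) L (nhds 0) := by
      have := (ENNReal.continuous_ofReal.tendsto 0).comp hreal
      simpa [Function.comp_def] using this
    have := ENNReal.Tendsto.mul_const h2 (Or.inr hη.ne)
    simpa using this
  -- key upper estimate on limsup of F₂
  have key : ∀ M : ℝ≥0∞, (∀ᶠ ε in L, F₁ ε ≤ M) → ∀ δ : ℝ≥0∞, 0 < δ →
      limsup F₂ L ≤ 8 * M + δ := by
    intro M hM δ hδ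
    rw [hL, eventually_iff, mem_nhdsGT_iff_exists_Ioo_subset] at hM
    obtain ⟨ρ₀, hρ₀, hsub⟩ := hM
    rw [Set.mem_Ioi] at hρ₀
    set ρ : ℝ := ρ₀ / 2 with hρdef
    have hρ : 0 < ρ := by positivity
    have hmono : ∀ s : ℝ, 0 < s → s ≤ ρ → η (Ioo (x - s) (x + s)) ≤ M * ENNReal.ofReal (s ^ α) := by
      intro s hs hsρ
      have hs2 : s ∈ Set.Ioo (0:ℝ) ρ₀ := ⟨hs, by rw [hρdef] at hsρ; linarith⟩
      have := hsub hs2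
      simp only [Set.mem_setOf_eq, hF₁] at this
      rwa [ENNReal.div_le_iff (by simp [Real.rpow_pos_of_pos hs α]) (by simp)] at this
    refine limsup_le_of_le (by isBoundedDefault) ?_
    have hevρ : Ioo (0:ℝ) ρ ∈ L := Ioo_mem_nhdsGT_of_mem (by simp [hρ])
    filter_upwards [hevρ, (htail ρ hρ).eventually_lt_const hδ] with ε hε htl
    calc F₂ ε ≤ 8 * M + ENNReal.ofReal (ε ^ (2 - α) * ((1 + 2 * x ^ 2) / ρ ^ 2 + 2)) * T :=
          high_bound η x α hα M hρ hε.1 hmono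
      _ ≤ 8 * M + δ := add_le_add_right htl.le _
  have hconst : ∀ c : ℝ≥0∞, c ≠ ⊤ → (∀ᶠ ε in L, F₁ ε ≤ 2 * c) → limsup F₁ L ≤ 2 * c :=
    fun c _ h => limsup_le_of_le (by isBoundedDefault) h
  refine ⟨⟨?_, ?_⟩, ?_, ?_⟩
  · intro h1
    by_contra h2
    have hev : ∀ᶠ ε in L, F₂ ε < limsup F₂ L + 1 :=
      eventually_lt_of_limsup_lt (ENNReal.lt_add_right h2 one_ne_zero)
    have hle : limsup F₁ L ≤ 2 * (limsup F₂ L + 1) :=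
      limsup_le_of_le (by isBoundedDefault) (by
        filter_upwards [hev_low, hev] with ε ha hb
        exact ha.trans (mul_le_mul_right hb.le 2))
    have hne : 2 * (limsup F₂ L + 1) ≠ ⊤ :=
      ENNReal.mul_ne_top (by simp) (ENNReal.add_ne_top.2 ⟨h2, ENNReal.one_ne_top⟩)
    exact hne (top_le_iff.1 (h1 ▸ hle))
  · intro h2
    by_contra h1
    have hev : ∀ᶠ ε in L, F₁ ε < limsup F₁ L + 1 :=
      eventually_lt_of_limsup_lt (ENNReal.lt_add_right h1 one_ne_zero)
    have hle := key (limsup F₁ L + 1) (hev.mono fun ε h => h.le) 1 one_pos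
    have hne : 8 * (limsup F₁ L + 1) + 1 ≠ ⊤ :=
      ENNReal.add_ne_top.2 ⟨ENNReal.mul_ne_top (by simp)
        (ENNReal.add_ne_top.2 ⟨h1, ENNReal.one_ne_top⟩), ENNReal.one_ne_top⟩
    exact hne (top_le_iff.1 (h2 ▸ hle))
  · intro h1
    refine le_antisymm ?_ zero_le
    refine ENNReal.le_of_forall_pos_le_add fun r hr _ => ?_
    rw [zero_add]
    have hr9 : (0:ℝ≥0∞) < (r : ℝ≥0∞) / 9 :=
      ENNReal.div_pos (by exact_mod_cast hr.ne') (by norm_num)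
    have hev : ∀ᶠ ε in L, F₁ ε ≤ (r : ℝ≥0∞) / 9 :=
      (eventually_lt_of_limsup_lt (h1 ▸ hr9)).mono fun ε h => h.le
    calc limsup F₂ L ≤ 8 * ((r : ℝ≥0∞) / 9) + (r : ℝ≥0∞) / 9 := key _ hev _ hr9
      _ = 9 * ((r : ℝ≥0∞) / 9) := by ring
      _ = r := ENNReal.mul_div_cancel (by norm_num) (by norm_num)
  · intro h2
    refine le_antisymm ?_ zero_le
    refine ENNReal.le_of_forall_pos_le_add fun r hr _ => ?_
    rw [zero_add]
    have hr2 : (0:ℝ≥0∞) < (r : ℝ≥0∞) / 2 :=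
      ENNReal.div_pos (by exact_mod_cast hr.ne') (by norm_num)
    have hev : ∀ᶠ ε in L, F₂ ε < (r : ℝ≥0∞) / 2 := eventually_lt_of_limsup_lt (h2 ▸ hr2)
    refine limsup_le_of_le (by isBoundedDefault) ?_
    filter_upwards [hev_low, hev] with ε ha hb
    calc F₁ ε ≤ 2 * F₂ ε := ha
      _ ≤ 2 * ((r : ℝ≥0∞) / 2) := mul_le_mul_right hb.le 2
      _ = r := ENNReal.mul_div_cancel (by norm_num) (by norm_num)
end

section
/- Let A be a bounded self-adjoint operator, φ a unit vector, A_λ = A + λ⟨φ,·⟩φ with spectral measures μ_λ, and ν a σ-finite Borel measure on ℝ. If ν has no atoms, then the measure κ(B) := ∫ μ_λ(B) dν(λ) has no atoms. -/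
open MeasureTheory Set Polynomial Filter
open scoped RealInnerProductSpace

set_option maxHeartbeats 1000000

theorem key_eigen {H : Type*} [NormedAddCommGroup H] [InnerProductSpace ℝ H]
    [CompleteSpace H]
    (T : H →L[ℝ] H) (hT : IsSelfAdjoint T) (φ : H) (hφ : ‖φ‖ = 1)
    (μ : Measure ℝ) [IsProbabilityMeasure μ]
    (hint : ∀ n : ℕ, Integrable (fun t : ℝ => t ^ n) μ)
    (hmom : ∀ n : ℕ, ⟪φ, (T ^ n) φ⟫ = ∫ t, t ^ n ∂μ)
    (x : ℝ) (hx : μ {x} ≠ 0) :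
    ∃ ψ : H, T ψ = x • ψ ∧ ⟪φ, ψ⟫ = (μ {x}).toReal := by
  -- integrability of polynomials
  have hint_poly : ∀ p : ℝ[X], Integrable (fun t => p.eval t) μ := by
    intro p
    have : (fun t : ℝ => p.eval t)
        = fun t => ∑ i ∈ Finset.range (p.natDegree + 1), p.coeff i * t ^ i := by
      funext t; exact eval_eq_sum_range (p := p) t
    rw [this]
    exact integrable_finset_sum _ fun i _ => (hint i).const_mul _
  -- moments of polynomials
  have hmom_poly : ∀ p : ℝ[X], ⟪φ, (aeval T p) φ⟫ = ∫ t, p.eval t ∂μ := by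
    intro p
    rw [aeval_eq_sum_range]
    simp only [ContinuousLinearMap.coe_sum', Finset.sum_apply,
      ContinuousLinearMap.coe_smul', Pi.smul_apply]
    rw [inner_sum]
    simp only [real_inner_smul_right]
    simp_rw [hmom, ← integral_const_mul]
    rw [← integral_finset_sum _ fun i _ => (hint i).const_mul _]
    congr 1; funext t; exact (eval_eq_sum_range (p := p) t).symm
  -- selfadjointness of polynomials in T
  have hsa_poly : ∀ p : ℝ[X], IsSelfAdjoint (aeval T p) := by
    intro p
    rw [aeval_eq_sum_range]
    refine Finset.sum_induction (fun i => p.coeff i • T ^ i) IsSelfAdjoint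
      (fun a b ha hb => ha.add hb) ?_ (fun i _ => ?_)
    · exact IsSelfAdjoint.zero _
    · have h := hT.pow i
      rw [IsSelfAdjoint, star_smul, star_trivial, h.star_eq]
  -- norms via integrals
  have hnorm : ∀ p : ℝ[X], ‖(aeval T p) φ‖ ^ 2 = ∫ t, (p.eval t) ^ 2 ∂μ := by
    intro p
    have hsym := (ContinuousLinearMap.isSelfAdjoint_iff_isSymmetric.mp (hsa_poly p))
    have h1 : ⟪(aeval T p) φ, (aeval T p) φ⟫ = ⟪φ, (aeval T (p * p)) φ⟫ := by
      rw [map_mul, ContinuousLinearMap.mul_apply]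
      exact hsym φ ((aeval T p) φ)
    rw [← real_inner_self_eq_norm_sq, h1, hmom_poly]
    congr 1; funext t; simp [sq]
  -- moment bounds
  have hmombound : ∀ n : ℕ, 0 < n → ∫ t, t ^ n ∂μ ≤ ‖T‖ ^ n := by
    intro n hn
    rw [← hmom n]
    calc ⟪φ, (T ^ n) φ⟫ ≤ ‖φ‖ * ‖(T ^ n) φ‖ := real_inner_le_norm _ _
      _ ≤ ‖φ‖ * (‖T ^ n‖ * ‖φ‖) := by gcongr; exact (T ^ n).le_opNorm φ
      _ ≤ 1 * (‖T‖ ^ n * 1) := by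
          rw [hφ]; simp only [one_mul, mul_one]; exact norm_pow_le' T hn
      _ = ‖T‖ ^ n := by ring
  -- concentration
  have hconc : μ {t : ℝ | ‖T‖ + 1 ≤ |t|} = 0 := by
    set R := ‖T‖ with hR
    have hR0 : (0:ℝ) ≤ R := norm_nonneg T
    have hbound : ∀ n : ℕ, (μ {t : ℝ | R + 1 ≤ |t|}).toReal
        ≤ (R / (R + 1)) ^ (2 * (n + 1)) := by
      intro n
      have hk : 0 < 2 * (n + 1) := by omega
      have he : Even (2 * (n + 1)) := even_two_mul _
      have hnn : 0 ≤ᵐ[μ] fun t : ℝ => t ^ (2 * (n + 1)) :=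
        Filter.Eventually.of_forall fun t => he.pow_nonneg t
      have markov := mul_meas_ge_le_integral_of_nonneg hnn (hint _) ((R + 1) ^ (2 * (n + 1)))
      have hsub : {t : ℝ | R + 1 ≤ |t|}
          ⊆ {t : ℝ | (R + 1) ^ (2 * (n + 1)) ≤ t ^ (2 * (n + 1))} := by
        intro t ht
        have h1 : (R + 1) ^ (2 * (n + 1)) ≤ |t| ^ (2 * (n + 1)) :=
          pow_le_pow_left₀ (by positivity) ht _
        have h2 : |t| ^ (2 * (n + 1)) = t ^ (2 * (n + 1)) := by
          rw [pow_abs, abs_of_nonneg (he.pow_nonneg t)]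
        rw [Set.mem_setOf_eq, ← h2]; exact h1
      have hmono : (μ {t : ℝ | R + 1 ≤ |t|}).toReal
          ≤ (μ {t : ℝ | (R + 1) ^ (2 * (n + 1)) ≤ t ^ (2 * (n + 1))}).toReal :=
        ENNReal.toReal_mono (measure_ne_top _ _) (measure_mono hsub)
      have hpos : (0:ℝ) < (R + 1) ^ (2 * (n + 1)) := by positivity
      have hint2 := le_trans markov (hmombound _ hk)
      calc (μ {t : ℝ | R + 1 ≤ |t|}).toReal
          ≤ (μ {t : ℝ | (R + 1) ^ (2 * (n + 1)) ≤ t ^ (2 * (n + 1))}).toReal := hmono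
        _ ≤ R ^ (2 * (n + 1)) / (R + 1) ^ (2 * (n + 1)) := by
            rw [le_div_iff₀ hpos]; change _ * (μ _).toReal ≤ _ at hint2; linarith [hint2]
        _ = (R / (R + 1)) ^ (2 * (n + 1)) := by rw [div_pow]
    have hlim : Tendsto (fun n : ℕ => (R / (R + 1)) ^ (2 * (n + 1))) atTop (nhds 0) := by
      have h01 : R / (R + 1) < 1 := by rw [div_lt_one (by positivity)]; linarith
      have h00 : (0:ℝ) ≤ R / (R + 1) := by positivity
      exact (tendsto_pow_atTop_nhds_zero_of_lt_one h00 h01).comp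
        (tendsto_atTop_atTop_of_monotone (fun a b h => by omega) (fun b => ⟨b, by omega⟩))
    have h0 : (μ {t : ℝ | R + 1 ≤ |t|}).toReal ≤ 0 :=
      ge_of_tendsto hlim (Filter.Eventually.of_forall hbound)
    have h00 : (μ {t : ℝ | R + 1 ≤ |t|}).toReal = 0 :=
      le_antisymm h0 ENNReal.toReal_nonneg
    exact (ENNReal.toReal_eq_zero_iff _).mp h00 |>.resolve_right (measure_ne_top μ _)
  have hae : ∀ᵐ t ∂μ, |t| < ‖T‖ + 1 := by
    rw [ae_iff]
    simpa [not_lt] using hconc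
  -- the approximating polynomial
  set c : ℝ := ‖T‖ + 1 + |x| with hc
  have hc0 : 0 < c := by positivity
  set b : ℝ[X] := 1 - C (c ^ 2)⁻¹ * (X - C x) ^ 2 with hbdef
  have hbeval : ∀ t : ℝ, b.eval t = 1 - (c ^ 2)⁻¹ * (t - x) ^ 2 := by
    intro t; simp [hbdef]
  have hbx : b.eval x = 1 := by simp [hbeval]
  have hb_le_one : ∀ t : ℝ, b.eval t ≤ 1 := by
    intro t
    have : 0 ≤ (c ^ 2)⁻¹ * (t - x) ^ 2 := by positivity
    rw [hbeval]; linarith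
  have hb_pos : ∀ t : ℝ, |t| < ‖T‖ + 1 → 0 < b.eval t := by
    intro t ht
    have h1 : |t - x| < c := by
      calc |t - x| ≤ |t| + |x| := by
            have := abs_add_le t (-x); simpa [sub_eq_add_neg] using this
        _ < ‖T‖ + 1 + |x| := by linarith
    have h2 : (t - x) ^ 2 < c ^ 2 := by
      rw [← sq_abs]
      exact pow_lt_pow_left₀ h1 (abs_nonneg _) (by norm_num)
    have h3 : (c ^ 2)⁻¹ * (t - x) ^ 2 < 1 := by
      rw [inv_mul_lt_iff₀ (by positivity)]; linarith
    rw [hbeval]; linarith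
  have hb_lt_one : ∀ t : ℝ, t ≠ x → b.eval t < 1 := by
    intro t ht
    have h1 : 0 < (t - x) ^ 2 := by
      have : t - x ≠ 0 := sub_ne_zero.mpr ht
      positivity
    have : 0 < (c ^ 2)⁻¹ * (t - x) ^ 2 := by positivity
    rw [hbeval]; linarith
  -- convergence of the moments of powers of b
  set L : ℝ := (μ {x}).toReal with hLdef
  have hItend : Tendsto (fun k : ℕ => ∫ t, (b.eval t) ^ k ∂μ) atTop (nhds L) := by
    have hlimint : ∫ t, Set.indicator {x} (fun _ => (1:ℝ)) t ∂μ = L := by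
      rw [integral_indicator_const _ (measurableSet_singleton x)]; simp [hLdef]; rfl
    rw [← hlimint]
    apply tendsto_integral_of_dominated_convergence (fun _ => (1:ℝ))
    · intro k; exact ((b.continuous_aeval).pow k).aestronglyMeasurable
    · exact integrable_const 1
    · intro k
      filter_upwards [hae] with t ht
      have h1 := hb_pos t ht
      have h2 := hb_le_one t
      rw [Real.norm_eq_abs, abs_pow, abs_of_pos h1]
      exact pow_le_one₀ h1.le h2
    · filter_upwards [hae] with t ht
      by_cases hxt : t = x
      · subst hxt
        simp only [hbx, one_pow, Set.indicator_of_mem (Set.mem_singleton t)]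
        exact tendsto_const_nhds
      · have h1 := hb_pos t ht
        have h2 := hb_lt_one t hxt
        rw [Set.indicator_of_notMem (by simpa using hxt)]
        have := tendsto_pow_atTop_nhds_zero_of_lt_one h1.le h2
        exact this
  -- the approximating sequence of vectors
  set ψseq : ℕ → H := fun n => (aeval T (b ^ n)) φ with hψseqdef
  have hintpow : ∀ k : ℕ, Integrable (fun t => (b.eval t) ^ k) μ := by
    intro k
    have := hint_poly (b ^ k)
    simpa [eval_pow] using this
  have hinner : ∀ n : ℕ, ⟪φ, ψseq n⟫ = ∫ t, (b.eval t) ^ n ∂μ := by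
    intro n
    rw [hψseqdef]
    rw [hmom_poly (b ^ n)]
    simp [eval_pow]
  have hnormdiff : ∀ n m : ℕ, ‖ψseq n - ψseq m‖ ^ 2
      = (∫ t, (b.eval t) ^ (2 * n) ∂μ) + (∫ t, (b.eval t) ^ (2 * m) ∂μ)
        - 2 * ∫ t, (b.eval t) ^ (n + m) ∂μ := by
    intro n m
    have h1 : ψseq n - ψseq m = (aeval T (b ^ n - b ^ m)) φ := by
      rw [hψseqdef, map_sub]; rfl
    rw [h1, hnorm]
    have h2 : ∀ t : ℝ, ((b ^ n - b ^ m).eval t) ^ 2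
        = ((b.eval t) ^ (2 * n) + (b.eval t) ^ (2 * m)) - 2 * (b.eval t) ^ (n + m) := by
      intro t; simp only [eval_sub, eval_pow]; ring
    simp_rw [h2]
    have i1 : Integrable (fun t : ℝ => eval t b ^ (2 * n) + eval t b ^ (2 * m)) μ :=
      (hintpow _).add (hintpow _)
    have i2 : Integrable (fun t : ℝ => 2 * eval t b ^ (n + m)) μ :=
      (hintpow _).const_mul 2
    rw [integral_sub i1 i2, integral_add (hintpow _) (hintpow _), integral_const_mul]
  have hcauchy : CauchySeq ψseq := by
    rw [Metric.cauchySeq_iff]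
    intro ε hε
    have hε2 : 0 < ε ^ 2 / 4 := by positivity
    obtain ⟨N, hN⟩ := (Metric.tendsto_atTop.mp hItend) (ε ^ 2 / 4) hε2
    refine ⟨N, fun m hm n hn => ?_⟩
    have e1 := hN (2 * m) (by omega)
    have e2 := hN (2 * n) (by omega)
    have e3 := hN (m + n) (by omega)
    rw [Real.dist_eq] at e1 e2 e3
    rw [dist_eq_norm]
    have hsq : ‖ψseq m - ψseq n‖ ^ 2 < ε ^ 2 := by
      rw [hnormdiff m n]
      have a1 := abs_lt.mp e1
      have a2 := abs_lt.mp e2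
      have a3 := abs_lt.mp e3
      linarith [a1.1, a1.2, a2.1, a2.2, a3.1, a3.2]
    exact lt_of_pow_lt_pow_left₀ 2 hε.le hsq
  obtain ⟨ψ, hψ⟩ := cauchySeq_tendsto_of_complete hcauchy
  refine ⟨ψ, ?_, ?_⟩
  · -- eigenvector equation
    have h3 : Tendsto (fun n => T (ψseq n) - x • ψseq n) atTop (nhds (T ψ - x • ψ)) :=
      Filter.Tendsto.sub ((T.continuous.tendsto ψ).comp hψ) (hψ.const_smul x)
    have h4 : ∀ n : ℕ, T (ψseq n) - x • ψseq n = (aeval T ((X - C x) * b ^ n)) φ := by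
      intro n
      rw [map_mul, map_sub, aeval_X, aeval_C, Algebra.algebraMap_eq_smul_one]
      rw [hψseqdef]
      simp [ContinuousLinearMap.mul_apply, ContinuousLinearMap.sub_apply,
        ContinuousLinearMap.smul_apply, ContinuousLinearMap.one_apply]
    have h5 : Tendsto (fun n => ‖T (ψseq n) - x • ψseq n‖ ^ 2) atTop (nhds 0) := by
      have heq : ∀ n : ℕ, ‖T (ψseq n) - x • ψseq n‖ ^ 2
          = ∫ t, ((t - x) * (b.eval t) ^ n) ^ 2 ∂μ := by
        intro n
        rw [h4, hnorm]
        congr 1; funext t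
        simp [eval_pow]
      simp_rw [heq]
      have h0int : ∫ t, (0:ℝ) ∂μ = 0 := by simp
      rw [← h0int]
      apply tendsto_integral_of_dominated_convergence (fun t => (t - x) ^ 2)
      · intro k
        exact (((continuous_id.sub continuous_const).mul
          ((b.continuous_aeval).pow k)).pow 2).aestronglyMeasurable
      · have := hint_poly ((X - C x) ^ 2)
        simpa using this
      · intro k
        filter_upwards [hae] with t ht
        have h1 := hb_pos t ht
        have h2 := hb_le_one t
        rw [Real.norm_eq_abs, abs_pow]
        calc |(t - x) * (b.eval t) ^ k| ^ 2
            = (t - x) ^ 2 * ((b.eval t) ^ k) ^ 2 := by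
              rw [abs_mul, mul_pow, sq_abs, abs_pow, ← abs_pow, sq_abs]
          _ ≤ (t - x) ^ 2 * 1 := by
              have hle : ((b.eval t) ^ k) ^ 2 ≤ 1 := by
                have := pow_le_one₀ h1.le h2 (n := k)
                nlinarith [pow_nonneg h1.le k]
              nlinarith [sq_nonneg (t - x)]
          _ = (t - x) ^ 2 := mul_one _
      · filter_upwards [hae] with t ht
        by_cases hxt : t = x
        · subst hxt
          simpa using tendsto_const_nhds
        · have h1 := hb_pos t ht
          have h2 := hb_lt_one t hxt
          have hp := tendsto_pow_atTop_nhds_zero_of_lt_one h1.le h2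
          have : Tendsto (fun n : ℕ => ((t - x) * (b.eval t) ^ n) ^ 2) atTop (nhds (((t-x) * 0)^2)) := by
            exact ((tendsto_const_nhds.mul hp).pow 2)
          simpa using this
    have h6 : Tendsto (fun n => T (ψseq n) - x • ψseq n) atTop (nhds 0) := by
      rw [tendsto_zero_iff_norm_tendsto_zero]
      have h7 : Tendsto (fun n => Real.sqrt (‖T (ψseq n) - x • ψseq n‖ ^ 2)) atTop
          (nhds (Real.sqrt 0)) := (Real.continuous_sqrt.tendsto 0).comp h5
      rw [Real.sqrt_zero] at h7
      exact h7.congr fun n => Real.sqrt_sq (norm_nonneg _)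
    have h8 := tendsto_nhds_unique h3 h6
    exact sub_eq_zero.mp h8
  · -- inner product value
    have h8 : Tendsto (fun n => ⟪φ, ψseq n⟫) atTop (nhds ⟪φ, ψ⟫) :=
      Filter.Tendsto.inner tendsto_const_nhds hψ
    have h9 : (fun n => ⟪φ, ψseq n⟫) = fun n => ∫ t, (b.eval t) ^ n ∂μ := funext hinner
    rw [h9] at h8
    exact tendsto_nhds_unique h8 hItend

theorem stmt_4 {H : Type*} [NormedAddCommGroup H] [InnerProductSpace ℝ H]
    [CompleteSpace H] [TopologicalSpace.SeparableSpace H]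
    (A : H →L[ℝ] H) (hA : IsSelfAdjoint A) (φ : H) (hφ : ‖φ‖ = 1)
    (μ : ℝ → Measure ℝ) (hprob : ∀ l : ℝ, IsProbabilityMeasure (μ l))
    (hmom : ∀ (l : ℝ) (n : ℕ),
      Integrable (fun x : ℝ => x ^ n) (μ l) ∧
      ⟪φ, (((A + l • ((innerSL ℝ φ).smulRight φ)) ^ n) φ)⟫ = ∫ x, x ^ n ∂(μ l))
    (ν : Measure ℝ) [SigmaFinite ν] [NullSingletonClass ν] :
    ∀ x : ℝ, ∫⁻ l, μ l {x} ∂ν = 0 := by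
  intro x
  set K : H →L[ℝ] H := (innerSL ℝ φ).smulRight φ with hKdef
  have hKapp : ∀ w : H, K w = ⟪φ, w⟫ • φ := fun w => rfl
  have hK : IsSelfAdjoint K := by
    rw [ContinuousLinearMap.isSelfAdjoint_iff_isSymmetric]
    intro u v
    show ⟪K u, v⟫ = ⟪u, K v⟫
    rw [hKapp u, hKapp v, real_inner_smul_left, real_inner_smul_right,
      real_inner_comm u φ]
    ring
  have hTl : ∀ l : ℝ, IsSelfAdjoint (A + l • K) := by
    intro l
    have hlK : IsSelfAdjoint (l • K) := by
      rw [IsSelfAdjoint, star_smul, star_trivial, hK.star_eq]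
    exact hA.add hlK
  -- at most one l can have an atom at x
  have huniq : ∀ l l' : ℝ, μ l {x} ≠ 0 → μ l' {x} ≠ 0 → l = l' := by
    intro l l' hl hl'
    by_contra hne
    haveI := hprob l
    haveI := hprob l'
    obtain ⟨ψ, hψ1, hψ2⟩ := key_eigen (A + l • K) (hTl l) φ hφ (μ l)
      (fun n => (hmom l n).1) (fun n => (hmom l n).2) x hl
    obtain ⟨ψ', hψ1', hψ2'⟩ := key_eigen (A + l' • K) (hTl l') φ hφ (μ l')
      (fun n => (hmom l' n).1) (fun n => (hmom l' n).2) x hl'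
    have e1 : ⟪ψ', (A + l • K) ψ⟫ = x * ⟪ψ', ψ⟫ := by
      rw [hψ1, real_inner_smul_right]
    have e2 : ⟪ψ', (A + l' • K) ψ⟫ = x * ⟪ψ', ψ⟫ := by
      have hsym := ContinuousLinearMap.isSelfAdjoint_iff_isSymmetric.mp (hTl l')
      calc ⟪ψ', (A + l' • K) ψ⟫ = ⟪(A + l' • K) ψ', ψ⟫ := (hsym ψ' ψ).symm
        _ = x * ⟪ψ', ψ⟫ := by rw [hψ1', real_inner_smul_left]
    have e3 : ⟪ψ', (A + l • K) ψ⟫ - ⟪ψ', (A + l' • K) ψ⟫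
        = (l - l') * (⟪φ, ψ⟫ * ⟪φ, ψ'⟫) := by
      rw [← inner_sub_right]
      have hd : (A + l • K) ψ - (A + l' • K) ψ = (l - l') • (K ψ) := by
        simp only [ContinuousLinearMap.add_apply, ContinuousLinearMap.smul_apply, sub_smul]
        abel
      rw [hd, real_inner_smul_right]
      rw [hKapp ψ, real_inner_smul_right, real_inner_comm ψ' φ]
    have e4 : (l - l') * (⟪φ, ψ⟫ * ⟪φ, ψ'⟫) = 0 := by
      rw [← e3, e1, e2]; ring
    have hne1 : l - l' ≠ 0 := sub_ne_zero.mpr hne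
    have hp1 : ⟪φ, ψ⟫ ≠ 0 := by
      rw [hψ2]
      exact ENNReal.toReal_ne_zero.mpr ⟨hl, measure_ne_top _ _⟩
    have hp2 : ⟪φ, ψ'⟫ ≠ 0 := by
      rw [hψ2']
      exact ENNReal.toReal_ne_zero.mpr ⟨hl', measure_ne_top _ _⟩
    rcases mul_eq_zero.mp e4 with h | h
    · exact hne1 h
    · rcases mul_eq_zero.mp h with h' | h'
      · exact hp1 h'
      · exact hp2 h'
  -- the set of atoms is a subsingleton, hence ν-null
  have hnull : ν {l : ℝ | μ l {x} ≠ 0} = 0 := by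
    have hsub : ({l : ℝ | μ l {x} ≠ 0} : Set ℝ).Subsingleton := fun a ha b hb =>
      huniq a b ha hb
    rcases hsub.eq_empty_or_singleton with h | ⟨l₀, h⟩
    · rw [h]; exact measure_empty
    · rw [h]; exact measure_singleton l₀
  have hae : (fun l => μ l {x}) =ᵐ[ν] 0 := by
    rw [Filter.EventuallyEq, ae_iff]
    simpa only [Pi.zero_apply, ne_eq] using hnull
  rw [lintegral_congr_ae hae]
  simp
end

section
/- Let μ and ν be Borel measures on ℝ with ∫ 1/(1+y²) dν(y) < ∞, μ finite, and let F_μ(z) = ∫ dμ(y)/(y−z) for z in the upper half-plane. Define κ(B) = ∫ μ_λ(B) dν(λ), where μ_λ are the spectral measures of the rank-one perturbation family with unperturbed spectral measure μ. Then for all z in the upper half-plane, P_κ(z) = P_ν(−1/F_μ(z)), where P_η denotes the Poisson transform (imaginary part of the Borel transform evaluated via ∫ Im(−1/(y−z)) weights). -/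
open MeasureTheory Set Filter Metric
open scoped RealInnerProductSpace

set_option synthInstance.maxHeartbeats 1000000
set_option maxHeartbeats 1000000

section AuxLemmas

lemma im_inv_sub (y : ℝ) (z : ℂ) :
    (((y:ℂ) - z)⁻¹).im = z.im / ((y - z.re)^2 + z.im^2) := by
  rw [Complex.inv_im]
  simp [Complex.normSq_apply, Complex.sub_re, Complex.sub_im, Complex.ofReal_re,
    Complex.ofReal_im]
  ring_nf

lemma im_le_norm_sub (y : ℝ) {z : ℂ} (hz : 0 < z.im) : z.im ≤ ‖(y:ℂ) - z‖ := by
  have h := Complex.abs_im_le_norm ((y:ℂ) - z)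
  rw [Complex.sub_im, Complex.ofReal_im, zero_sub, abs_neg, abs_of_pos hz] at h
  simpa using h

lemma integrable_cauchy (η : Measure ℝ) [IsFiniteMeasure η] {z : ℂ} (hz : 0 < z.im) :
    Integrable (fun y : ℝ => ((y:ℂ) - z)⁻¹) η := by
  have hne : ∀ y : ℝ, ((y:ℂ) - z) ≠ 0 := by
    intro y h
    have := congrArg Complex.im h
    simp [Complex.sub_im] at this
    exact absurd this.symm (ne_of_lt hz)
  have hcont : Continuous fun y : ℝ => ((y:ℂ) - z)⁻¹ :=
    ((Complex.continuous_ofReal.sub continuous_const).inv₀ hne)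
  refine (integrable_const (z.im)⁻¹).mono' hcont.aestronglyMeasurable ?_
  refine Filter.Eventually.of_forall fun y => ?_
  rw [norm_inv]
  exact inv_anti₀ hz (im_le_norm_sub y hz)

lemma im_integral_cauchy (η : Measure ℝ) [IsFiniteMeasure η] {z : ℂ} (hz : 0 < z.im) :
    (∫ y, ((y:ℂ) - z)⁻¹ ∂η).im = ∫ y, z.im / ((y - z.re)^2 + z.im^2) ∂η := by
  rw [show (∫ y, ((y:ℂ) - z)⁻¹ ∂η).im = RCLike.im (∫ y, ((y:ℂ) - z)⁻¹ ∂η) from rfl,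
    ← integral_im (integrable_cauchy η hz)]
  exact integral_congr_ae (Filter.Eventually.of_forall fun y => im_inv_sub y z)

lemma integrable_poisson (η : Measure ℝ) [IsFiniteMeasure η] {z : ℂ} (hz : 0 < z.im) :
    Integrable (fun y : ℝ => z.im / ((y - z.re)^2 + z.im^2)) η := by
  have h := (integrable_cauchy η hz).im
  refine h.congr (Filter.Eventually.of_forall fun y => im_inv_sub y z)

lemma poisson_pos (η : Measure ℝ) [IsProbabilityMeasure η] {C : ℝ}
    (hsupp : ∀ᵐ y ∂η, |y| ≤ C) {z : ℂ} (hz : 0 < z.im) :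
    0 < ∫ y, z.im / ((y - z.re)^2 + z.im^2) ∂η := by
  set c : ℝ := z.im / ((C + |z.re|)^2 + z.im^2) with hc
  have hcpos : 0 < c := by positivity
  have hmono : ∀ᵐ y ∂η, c ≤ z.im / ((y - z.re)^2 + z.im^2) := by
    filter_upwards [hsupp] with y hy
    apply div_le_div_of_nonneg_left (le_of_lt hz) (by positivity)
    have h1 : |y - z.re| ≤ C + |z.re| := by
      calc |y - z.re| ≤ |y| + |z.re| := abs_sub _ _
      _ ≤ C + |z.re| := by linarith
    obtain ⟨h2, h3⟩ := abs_le.mp h1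
    have := sq_le_sq' h2 h3
    linarith
  calc (0:ℝ) < c := hcpos
  _ = ∫ _, c ∂η := by simp
  _ ≤ _ := integral_mono_ae (integrable_const c) (integrable_poisson η hz) hmono

lemma ae_abs_le_of_moments (η : Measure ℝ) [IsProbabilityMeasure η] {C : ℝ} (hC : 0 ≤ C)
    (hm : ∀ n : ℕ, Integrable (fun x : ℝ => x ^ n) η)
    (hb : ∀ n : ℕ, ∫ x, x ^ (2 * n) ∂η ≤ C ^ (2 * n)) :
    ∀ᵐ y ∂η, |y| ≤ C := by
  have key : ∀ t : ℝ, C < t → η {y : ℝ | t ≤ |y|} = 0 := by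
    intro t ht
    have ht0 : 0 < t := lt_of_le_of_lt hC ht
    set S : Set ℝ := {y : ℝ | t ≤ |y|} with hS
    have hSm : MeasurableSet S := by
      have : S = (fun y : ℝ => |y|) ⁻¹' Ici t := rfl
      rw [this]; exact measurable_abs measurableSet_Ici
    have hfin : η S ≠ ⊤ := measure_ne_top η S
    have hcheb : ∀ n : ℕ, (η S).toReal ≤ ((C / t) ^ 2) ^ n := by
      intro n
      have h1 : t ^ (2 * n) * (η S).toReal ≤ ∫ x in S, x ^ (2 * n) ∂η := by
        refine setIntegral_ge_of_const_le_real hSm hfin (fun x hx => ?_)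
          ((hm (2 * n)).integrableOn)
        have hx' : t ≤ |x| := hx
        calc t ^ (2 * n) ≤ |x| ^ (2 * n) := pow_le_pow_left₀ (le_of_lt ht0) hx' _
        _ = x ^ (2 * n) := by rw [← abs_pow, abs_of_nonneg (even_two_mul n |>.pow_nonneg x)]
      have h2 : ∫ x in S, x ^ (2 * n) ∂η ≤ ∫ x, x ^ (2 * n) ∂η := by
        refine setIntegral_le_integral (hm (2 * n)) ?_
        exact Filter.Eventually.of_forall fun x => (even_two_mul n).pow_nonneg x
      have h3 : t ^ (2 * n) * (η S).toReal ≤ C ^ (2 * n) := le_trans h1 (le_trans h2 (hb n))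
      have h4 : (η S).toReal ≤ C ^ (2 * n) / t ^ (2 * n) := by
        rw [le_div_iff₀ (by positivity)]
        linarith
      calc (η S).toReal ≤ C ^ (2 * n) / t ^ (2 * n) := h4
      _ = ((C / t) ^ 2) ^ n := by rw [← pow_mul, div_pow]
    have hr : (C / t) ^ 2 < 1 := by
      have : C / t < 1 := (div_lt_one ht0).mpr ht
      nlinarith [div_nonneg hC (le_of_lt ht0)]
    have hlim : Tendsto (fun n : ℕ => ((C / t) ^ 2) ^ n) atTop (nhds 0) :=
      tendsto_pow_atTop_nhds_zero_of_lt_one (by positivity) hr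
    have : (η S).toReal ≤ 0 := ge_of_tendsto' hlim hcheb
    have h0 : (η S).toReal = 0 := le_antisymm this ENNReal.toReal_nonneg
    exact (ENNReal.toReal_eq_zero_iff _).mp h0 |>.resolve_right hfin
  have hsub : {y : ℝ | ¬ |y| ≤ C} ⊆ ⋃ k : ℕ, {y : ℝ | C + 1/(k+1) ≤ |y|} := by
    intro y hy
    rw [mem_setOf_eq, not_le] at hy
    obtain ⟨k, hk⟩ := exists_nat_one_div_lt (sub_pos.mpr hy)
    exact mem_iUnion.mpr ⟨k, by simp only [mem_setOf_eq]; push_cast at hk ⊢; linarith⟩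
  refine measure_mono_null hsub (measure_iUnion_null fun k => key _ ?_)
  have : (0:ℝ) < 1/((k:ℝ)+1) := by positivity
  linarith

variable {H' : Type*} [NormedAddCommGroup H'] [InnerProductSpace ℝ H']

lemma op_expand (A P : H' →L[ℝ] H') (c : ℝ) (n : ℕ) :
    (A + c • P) ^ n
      = A ^ n + c • ∑ j ∈ Finset.range n, (A + c • P) ^ j * P * A ^ (n - 1 - j) := by
  induction n with
  | zero => simp
  | succ n ih =>
    have step : (A + c • P) ^ (n + 1) = (A + c • P) ^ n * A + c • ((A + c • P) ^ n * P) := by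
      rw [pow_succ, mul_add, mul_smul_comm]
    rw [step, Finset.sum_range_succ]
    nth_rewrite 1 [ih]
    rw [add_mul, smul_mul_assoc, Finset.sum_mul]
    have hshift : ∀ j ∈ Finset.range n,
        ((A + c • P) ^ j * P * A ^ (n - 1 - j)) * A = (A + c • P) ^ j * P * A ^ (n + 1 - 1 - j) := by
      intro j hj
      rw [Finset.mem_range] at hj
      rw [mul_assoc, ← pow_succ]
      congr 2
      omega
    rw [Finset.sum_congr rfl hshift, ← pow_succ]
    have hlast : (A + c • P) ^ n * P * A ^ (n + 1 - 1 - n) = (A + c • P) ^ n * P := by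
      simp [Nat.sub_self]
    rw [hlast, smul_add]
    abel

lemma moment_recursion (A : H' →L[ℝ] H') (φ : H') (c : ℝ) (n : ℕ) :
    ⟪φ, (((A + c • ((innerSL ℝ φ).smulRight φ)) ^ n) φ)⟫
      = ⟪φ, ((A ^ n) φ)⟫ + c * ∑ j ∈ Finset.range n,
          ⟪φ, (((A + c • ((innerSL ℝ φ).smulRight φ)) ^ j) φ)⟫ * ⟪φ, ((A ^ (n - 1 - j)) φ)⟫ := by
  set P := (innerSL ℝ φ).smulRight φ with hP
  have hPapp : ∀ x : H', P x = ⟪φ, x⟫ • φ := fun x => by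
    simp [hP, ContinuousLinearMap.smulRight_apply]
  rw [op_expand A P c n]
  simp only [ContinuousLinearMap.add_apply, ContinuousLinearMap.smul_apply,
    ContinuousLinearMap.coe_sum', Finset.sum_apply, inner_add_right, inner_smul_right,
    inner_sum]
  congr 1
  congr 1
  refine Finset.sum_congr rfl fun j hj => ?_
  rw [ContinuousLinearMap.mul_apply, ContinuousLinearMap.mul_apply, hPapp,
    ContinuousLinearMap.map_smul, inner_smul_right]
  ring

-- geometric-type summability of coefficient norms
lemma summable_coeff {a : ℕ → ℝ} {C : ℝ} (hC : 0 ≤ C) (ha : ∀ n, |a n| ≤ C ^ n)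
    {z : ℂ} (hz : C < ‖z‖) :
    Summable (fun n : ℕ => ‖-(((a n : ℝ)) : ℂ) * ((z ^ (n+1))⁻¹)‖) := by
  have hz0 : (0:ℝ) < ‖z‖ := lt_of_le_of_lt hC hz
  have hr : C / ‖z‖ < 1 := (div_lt_one hz0).mpr hz
  have hr0 : 0 ≤ C / ‖z‖ := div_nonneg hC (le_of_lt hz0)
  refine Summable.of_nonneg_of_le (fun n => norm_nonneg _)
    (fun n => ?_) (((summable_geometric_of_lt_one hr0 hr).mul_left (‖z‖⁻¹)))
  rw [norm_mul, norm_neg, norm_inv, norm_pow, Complex.norm_real]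
  calc |a n| * (‖z‖ ^ (n+1))⁻¹ ≤ C ^ n * (‖z‖ ^ (n+1))⁻¹ := by
        apply mul_le_mul_of_nonneg_right (ha n) (by positivity)
  _ = ‖z‖⁻¹ * (C / ‖z‖) ^ n := by rw [div_pow]; field_simp; ring

lemma pointwise_series {C : ℝ} {z : ℂ} (hC : 0 ≤ C) (hz : C < ‖z‖) {y : ℝ} (hy : |y| ≤ C) :
    ((y:ℂ) - z)⁻¹ = ∑' n : ℕ, -((y:ℂ) ^ n * (z ^ (n+1))⁻¹) := by
  have hz0 : z ≠ 0 := by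
    intro h; rw [h, norm_zero] at hz; exact absurd hz (not_lt.mpr hC)
  have hnorm : ‖(y:ℂ) / z‖ < 1 := by
    rw [norm_div, div_lt_one (lt_of_le_of_lt hC hz), Complex.norm_real]
    exact lt_of_le_of_lt hy hz
  have hgeom : ∑' n : ℕ, ((y:ℂ) / z) ^ n = (1 - (y:ℂ)/z)⁻¹ :=
    tsum_geometric_of_norm_lt_one hnorm
  have hne : (1 : ℂ) - (y:ℂ)/z ≠ 0 := by
    intro h
    have : ‖(1:ℂ)‖ = ‖(y:ℂ)/z‖ := by rw [show (y:ℂ)/z = 1 from by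
      field_simp at h ⊢; linear_combination -h]
    simp at this; rw [this] at hnorm; simp at hnorm
  have key : ((y:ℂ) - z)⁻¹ = -(z⁻¹ * (1 - (y:ℂ)/z)⁻¹) := by
    rw [← mul_inv]
    rw [show (y:ℂ) - z = -(z * (1 - (y:ℂ)/z)) from by field_simp; ring]
    rw [inv_neg]
  rw [key, ← hgeom, ← tsum_mul_left, ← tsum_neg]
  congr 1; funext n
  rw [div_pow, pow_succ]
  field_simp

lemma cauchy_transform_series (η : Measure ℝ) [IsProbabilityMeasure η] {C : ℝ} (hC : 0 ≤ C)
    (hsupp : ∀ᵐ y ∂η, |y| ≤ C) (hm : ∀ n : ℕ, Integrable (fun x : ℝ => x ^ n) η)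
    {z : ℂ} (hz : C < ‖z‖) :
    ∫ y, ((y:ℂ) - z)⁻¹ ∂η = ∑' n : ℕ, -((((∫ x, x ^ n ∂η : ℝ)) : ℂ) * (z ^ (n+1))⁻¹) := by
  set f : ℕ → ℝ → ℂ := fun n y => -((y:ℂ) ^ n * (z ^ (n+1))⁻¹) with hf
  have hint : ∀ n, Integrable (f n) η := by
    intro n
    have h1 : Integrable (fun y : ℝ => ((y ^ n : ℝ) : ℂ)) η := (hm n).ofReal
    have h2 := (h1.mul_const ((z ^ (n+1))⁻¹)).neg
    refine h2.congr (Eventually.of_forall fun y => ?_)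
    simp [hf]
  have hsum : Summable fun n => ∫ y, ‖f n y‖ ∂η := by
    have hgeo := summable_coeff (a := fun n => C ^ n) hC
      (fun n => by rw [abs_of_nonneg (by positivity)]) hz
    refine Summable.of_nonneg_of_le (fun n => integral_nonneg fun y => norm_nonneg _)
      (fun n => ?_) hgeo
    have hb : ∀ᵐ y ∂η, ‖f n y‖ ≤ C ^ n * ‖(z ^ (n+1))⁻¹‖ := by
      filter_upwards [hsupp] with y hy
      simp only [hf, norm_neg, norm_mul, norm_pow, Complex.norm_real]
      exact mul_le_mul_of_nonneg_right (pow_le_pow_left₀ (abs_nonneg y) hy n)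
        (norm_nonneg _)
    calc ∫ y, ‖f n y‖ ∂η ≤ ∫ _, C ^ n * ‖(z ^ (n+1))⁻¹‖ ∂η :=
          integral_mono_ae (hint n).norm (integrable_const _) hb
    _ = C ^ n * ‖(z ^ (n+1))⁻¹‖ := by simp
    _ = ‖-(((C ^ n : ℝ)) : ℂ) * ((z ^ (n+1))⁻¹)‖ := by
          rw [norm_mul, norm_neg, Complex.norm_real, Real.norm_eq_abs,
            abs_of_nonneg (by positivity : (0:ℝ) ≤ C ^ n)]
  have step1 : ∫ y, ((y:ℂ) - z)⁻¹ ∂η = ∫ y, (∑' n, f n y) ∂η := by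
    refine integral_congr_ae ?_
    filter_upwards [hsupp] with y hy
    exact pointwise_series hC hz hy
  rw [step1, ← integral_tsum_of_summable_integral_norm hint hsum]
  congr 1; funext n
  have : ∫ y, f n y ∂η = -((∫ y, ((y ^ n : ℝ) : ℂ) ∂η) * (z ^ (n+1))⁻¹) := by
    rw [← integral_mul_const, ← integral_neg]
    exact integral_congr_ae (Eventually.of_forall fun y => by simp [hf])
  rw [this, show (∫ y, ((y ^ n : ℝ) : ℂ) ∂η) = ((∫ x, x ^ n ∂η : ℝ) : ℂ) from
    integral_ofReal]

lemma moment_bound (η : Measure ℝ) [IsProbabilityMeasure η] {C : ℝ}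
    (hs : ∀ᵐ y ∂η, |y| ≤ C) (hm : ∀ n : ℕ, Integrable (fun x : ℝ => x ^ n) η) (n : ℕ) :
    |∫ x, x ^ n ∂η| ≤ C ^ n := by
  calc |∫ x, x ^ n ∂η| = ‖∫ x, x ^ n ∂η‖ := (Real.norm_eq_abs _).symm
  _ ≤ ∫ x, |x ^ n| ∂η := norm_integral_le_integral_norm _
  _ ≤ ∫ _, C ^ n ∂η := by
      refine integral_mono_ae (hm n).abs (integrable_const _) ?_
      filter_upwards [hs] with y hy
      rw [abs_pow]
      exact pow_le_pow_left₀ (abs_nonneg y) hy n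
  _ = C ^ n := by simp

lemma ak_large (η₀ η₁ : Measure ℝ) [IsProbabilityMeasure η₀] [IsProbabilityMeasure η₁]
    {C : ℝ} (hC : 0 ≤ C) (l : ℝ)
    (hs0 : ∀ᵐ y ∂η₀, |y| ≤ C) (hs1 : ∀ᵐ y ∂η₁, |y| ≤ C)
    (hm0 : ∀ n : ℕ, Integrable (fun x : ℝ => x ^ n) η₀)
    (hm1 : ∀ n : ℕ, Integrable (fun x : ℝ => x ^ n) η₁)
    (hrec : ∀ n : ℕ, (∫ x, x ^ n ∂η₁) = (∫ x, x ^ n ∂η₀)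
      + l * ∑ j ∈ Finset.range n, (∫ x, x ^ j ∂η₁) * (∫ x, x ^ (n-1-j) ∂η₀))
    {z : ℂ} (hz : C < ‖z‖) :
    (∫ y, ((y:ℂ) - z)⁻¹ ∂η₁) * (1 + l * ∫ y, ((y:ℂ) - z)⁻¹ ∂η₀)
      = ∫ y, ((y:ℂ) - z)⁻¹ ∂η₀ := by
  set a0 : ℕ → ℝ := fun n => ∫ x, x ^ n ∂η₀ with ha0
  set a1 : ℕ → ℝ := fun n => ∫ x, x ^ n ∂η₁ with ha1
  set u : ℕ → ℂ := fun n => -(((a0 n : ℝ)) : ℂ) * ((z ^ (n+1))⁻¹) with hu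
  set v : ℕ → ℂ := fun n => -(((a1 n : ℝ)) : ℂ) * ((z ^ (n+1))⁻¹) with hv
  have hb0 : ∀ n, |a0 n| ≤ C ^ n := moment_bound η₀ hs0 hm0
  have hb1 : ∀ n, |a1 n| ≤ C ^ n := moment_bound η₁ hs1 hm1
  have hsu : Summable fun n => ‖u n‖ := summable_coeff hC hb0 hz
  have hsv : Summable fun n => ‖v n‖ := summable_coeff hC hb1 hz
  have hF0 : (∫ y, ((y:ℂ) - z)⁻¹ ∂η₀) = ∑' n, u n := by
    rw [cauchy_transform_series η₀ hC hs0 hm0 hz]; exact tsum_congr fun n => by rw [hu]; ring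
  have hF1 : (∫ y, ((y:ℂ) - z)⁻¹ ∂η₁) = ∑' n, v n := by
    rw [cauchy_transform_series η₁ hC hs1 hm1 hz]; exact tsum_congr fun n => by rw [hv]; ring
  set d : ℕ → ℂ := fun n => (((a1 n - a0 n : ℝ)) : ℂ) * ((z ^ (n+1))⁻¹) with hd
  have hdsum : Summable d := by
    have : d = fun n => u n - v n := by
      funext n; rw [hd, hu, hv]; push_cast; ring
    rw [this]; exact hsu.of_norm.sub hsv.of_norm
  -- key : F₀ - F₁ = l * (F₀ * F₁)
  have key : (∑' n, u n) - (∑' n, v n) = (l:ℂ) * ((∑' n, u n) * (∑' n, v n)) := by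
    have hprod := tsum_mul_tsum_eq_tsum_sum_range_of_summable_norm hsu hsv
    rw [hprod]
    symm
    have hterm : ∀ n : ℕ, l * (∑ k ∈ Finset.range (n+1), u k * v (n-k)) = d (n+1) := by
      intro n
      have step1 : ∀ k ∈ Finset.range (n+1),
          u k * v (n-k) = (((a0 k * a1 (n-k) : ℝ)) : ℂ) * ((z ^ (n+2))⁻¹) := by
        intro k hk
        rw [Finset.mem_range] at hk
        rw [hu, hv]
        have hpow : z ^ (k+1) * z ^ (n-k+1) = z ^ (n+2) := by
          rw [← pow_add]; congr 1; omega
        rw [← hpow, mul_inv]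
        push_cast
        ring
      rw [Finset.sum_congr rfl step1, ← Finset.sum_mul, hd]
      have hsum_cast : (∑ k ∈ Finset.range (n+1), ((((a0 k * a1 (n-k) : ℝ))) : ℂ))
          = (((∑ k ∈ Finset.range (n+1), a0 k * a1 (n-k) : ℝ)) : ℂ) := by push_cast; ring
      rw [hsum_cast]
      have hrefl : ∑ k ∈ Finset.range (n+1), a0 k * a1 (n-k)
          = ∑ j ∈ Finset.range (n+1), a1 j * a0 (n-j) := by
        rw [← Finset.sum_range_reflect (fun j => a1 j * a0 (n-j)) (n+1)]
        refine Finset.sum_congr rfl fun j hj => ?_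
        rw [Finset.mem_range] at hj
        have h1 : n + 1 - 1 - j = n - j := by omega
        have h2 : n - (n - j) = j := by omega
        rw [h1, h2, mul_comm]
      have hrec' : a1 (n+1) - a0 (n+1) = l * ∑ j ∈ Finset.range (n+1), a1 j * a0 (n-j) := by
        have h := hrec (n+1)
        rw [show (∑ j ∈ Finset.range (n+1), (∫ x, x ^ j ∂η₁) * (∫ x, x ^ (n+1-1-j) ∂η₀))
          = ∑ j ∈ Finset.range (n+1), a1 j * a0 (n-j) from Finset.sum_congr rfl
            fun j hj => rfl] at h
        rw [ha1, ha0]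
        simp only []
        linarith
      show _ = (((a1 (n+1) - a0 (n+1) : ℝ)) : ℂ) * ((z ^ (n+2))⁻¹)
      rw [hrefl, hrec']
      push_cast
      ring
    calc l * ∑' n, ∑ k ∈ Finset.range (n+1), u k * v (n-k)
        = ∑' n, l * ∑ k ∈ Finset.range (n+1), u k * v (n-k) := by
          rw [← tsum_mul_left]
      _ = ∑' n, d (n+1) := tsum_congr hterm
      _ = (∑' n, d n) - d 0 := by
          rw [Summable.tsum_eq_zero_add hdsum]; ring
      _ = ∑' n, d n := by
          have : d 0 = 0 := by
            have h0 : a1 0 = a0 0 := by simp [ha1, ha0]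
            rw [hd]; simp [h0]
          rw [this]; ring
      _ = (∑' n, u n) - (∑' n, v n) := by
          rw [show d = fun n => u n - v n from by funext n; rw [hd, hu, hv]; push_cast; ring]
          simpa using Summable.tsum_sub hsu.of_norm hsv.of_norm
  rw [hF0, hF1]
  set U := ∑' n, u n
  set V := ∑' n, v n
  linear_combination -key

lemma im_pos_of_mem_ball {z₀ z : ℂ} (h : z ∈ ball z₀ (z₀.im / 2)) : z₀.im / 2 ≤ z.im := by
  have h1 : |z.im - z₀.im| ≤ ‖z - z₀‖ := by
    have := Complex.abs_im_le_norm (z - z₀)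
    simpa [Complex.sub_im] using this
  have h2 : ‖z - z₀‖ < z₀.im / 2 := by simpa [dist_eq_norm] using h
  have := abs_le.mp (le_of_lt (lt_of_le_of_lt h1 h2))
  linarith [this.1]

lemma analyticOnNhd_cauchy (η : Measure ℝ) [IsFiniteMeasure η] :
    AnalyticOnNhd ℂ (fun z => ∫ y, ((y:ℂ) - z)⁻¹ ∂η) {z : ℂ | 0 < z.im} := by
  have hopen : IsOpen {z : ℂ | 0 < z.im} := isOpen_lt continuous_const Complex.continuous_im
  refine DifferentiableOn.analyticOnNhd ?_ hopen
  intro z₀ hz₀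
  have him : 0 < z₀.im := hz₀
  set ε := z₀.im / 2 with hε
  have hεpos : 0 < ε := by positivity
  have hball : ∀ z ∈ ball z₀ ε, 0 < z.im := fun z hz =>
    lt_of_lt_of_le hεpos (im_pos_of_mem_ball hz)
  have hne : ∀ (y : ℝ) (z : ℂ), z ∈ ball z₀ ε → ((y:ℂ) - z) ≠ 0 := by
    intro y z hz h
    have := congrArg Complex.im h
    simp [Complex.sub_im] at this
    exact absurd this.symm (ne_of_lt (hball z hz))
  have hlow : ∀ (y : ℝ) (z : ℂ), z ∈ ball z₀ ε → ε ≤ ‖(y:ℂ) - z‖ := by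
    intro y z hz
    have h1 := Complex.abs_im_le_norm ((y:ℂ) - z)
    rw [Complex.sub_im, Complex.ofReal_im, zero_sub, abs_neg,
      abs_of_pos (hball z hz)] at h1
    exact le_trans (im_pos_of_mem_ball hz) (by simpa using h1)
  have key := hasDerivAt_integral_of_dominated_loc_of_deriv_le (μ := η)
    (F := fun (z : ℂ) (y : ℝ) => ((y:ℂ) - z)⁻¹)
    (F' := fun (z : ℂ) (y : ℝ) => (((y:ℂ) - z)^2)⁻¹)
    (x₀ := z₀) (bound := fun _ => (ε^2)⁻¹) (ball_mem_nhds z₀ hεpos)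
    ?_ (integrable_cauchy η him) ?_ ?_ (integrable_const _) ?_
  · exact (key.2.differentiableAt).differentiableWithinAt
  · refine Eventually.of_forall fun z => ?_
    exact ((Complex.measurable_ofReal.sub measurable_const).inv).aestronglyMeasurable
  · exact (((Complex.measurable_ofReal.sub measurable_const).pow_const
      2).inv).aestronglyMeasurable
  · refine Eventually.of_forall fun y => fun z hz => ?_
    rw [norm_inv, norm_pow]
    have h1 := hlow y z hz
    have h2 : ε^2 ≤ ‖(y:ℂ) - z‖^2 := by nlinarith [norm_nonneg ((y:ℂ) - z)]
    exact inv_anti₀ (by positivity) h2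
  · refine Eventually.of_forall fun y => fun z hz => ?_
    have h1 : HasDerivAt (fun w : ℂ => (y:ℂ) - w) (-1) z := by
      simpa using (hasDerivAt_id z).const_sub (y:ℂ)
    have h2 := h1.inv (hne y z hz)
    rw [neg_neg, one_div] at h2
    exact h2

lemma ak_uhp (η₀ η₁ : Measure ℝ) [IsProbabilityMeasure η₀] [IsProbabilityMeasure η₁]
    {C : ℝ} (hC : 0 ≤ C) (l : ℝ)
    (hs0 : ∀ᵐ y ∂η₀, |y| ≤ C) (hs1 : ∀ᵐ y ∂η₁, |y| ≤ C)
    (hm0 : ∀ n : ℕ, Integrable (fun x : ℝ => x ^ n) η₀)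
    (hm1 : ∀ n : ℕ, Integrable (fun x : ℝ => x ^ n) η₁)
    (hrec : ∀ n : ℕ, (∫ x, x ^ n ∂η₁) = (∫ x, x ^ n ∂η₀)
      + l * ∑ j ∈ Finset.range n, (∫ x, x ^ j ∂η₁) * (∫ x, x ^ (n-1-j) ∂η₀))
    {z : ℂ} (him : 0 < z.im) :
    (∫ y, ((y:ℂ) - z)⁻¹ ∂η₁) * (1 + l * ∫ y, ((y:ℂ) - z)⁻¹ ∂η₀)
      = ∫ y, ((y:ℂ) - z)⁻¹ ∂η₀ := by
  set U : Set ℂ := {w : ℂ | 0 < w.im} with hU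
  set F0 : ℂ → ℂ := fun w => ∫ y, ((y:ℂ) - w)⁻¹ ∂η₀ with hF0
  set F1 : ℂ → ℂ := fun w => ∫ y, ((y:ℂ) - w)⁻¹ ∂η₁ with hF1
  set g : ℂ → ℂ := fun w => F1 w * (1 + l * F0 w) - F0 w with hg
  have han : AnalyticOnNhd ℂ g U := by
    have h0 := analyticOnNhd_cauchy η₀
    have h1 := analyticOnNhd_cauchy η₁
    exact (h1.mul ((analyticOnNhd_const).add ((analyticOnNhd_const).mul h0))).sub h0
  set z₀ : ℂ := ((2*C+2 : ℝ) : ℂ) * Complex.I with hz₀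
  have him₀ : z₀.im = 2*C+2 := by simp [hz₀]
  have hnorm₀ : ‖z₀‖ = 2*C+2 := by
    rw [hz₀, norm_mul, Complex.norm_I, Complex.norm_real, Real.norm_eq_abs,
      abs_of_pos (by linarith), mul_one]
  have hz₀U : z₀ ∈ U := by rw [hU, mem_setOf_eq, him₀]; linarith
  have hzero : ∀ w ∈ ball z₀ 1, g w = 0 := by
    intro w hw
    have hd : ‖w - z₀‖ < 1 := by simpa [dist_eq_norm] using hw
    have hnw : C < ‖w‖ := by
      have h1 : ‖z₀‖ - ‖w - z₀‖ ≤ ‖w‖ := by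
        have := norm_sub_norm_le z₀ w
        have h2 : ‖z₀ - w‖ = ‖w - z₀‖ := norm_sub_rev _ _
        linarith [norm_sub_norm_le z₀ w, h2 ▸ (le_refl ‖z₀ - w‖)]
      rw [hnorm₀] at h1
      linarith
    have := ak_large η₀ η₁ hC l hs0 hs1 hm0 hm1 hrec hnw
    rw [hg]
    simp only [hF0, hF1]
    rw [sub_eq_zero]
    exact this
  have hev : g =ᶠ[nhds z₀] 0 := by
    filter_upwards [ball_mem_nhds z₀ one_pos] with w hw
    exact hzero w hw
  have hpre : IsPreconnected U := (convex_halfSpace_im_gt 0).isPreconnected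
  have heq := han.eqOn_zero_of_preconnected_of_eventuallyEq_zero hpre hz₀U hev
  have hzU : z ∈ U := him
  have := heq hzU
  rw [hg] at this
  simp only [Pi.zero_apply] at this
  have : F1 z * (1 + l * F0 z) - F0 z = 0 := this
  rw [sub_eq_zero] at this
  exact this


end AuxLemmas


/-- Relation between the Poisson transforms of the averaged measure `κ` and of `ν`:
`P_κ(z) = P_ν(-1/F_μ(z))`.  Here `P_κ(z)` is written as the iterated integral
`∫ P_{μ_λ}(z) dν(λ)`. -/
theorem stmt_5 {H : Type*} [NormedAddCommGroup H] [InnerProductSpace ℝ H]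
    [CompleteSpace H] [TopologicalSpace.SeparableSpace H]
    (A : H →L[ℝ] H) (hA : IsSelfAdjoint A) (φ : H) (hφ : ‖φ‖ = 1)
    (μ : ℝ → Measure ℝ) (hprob : ∀ l : ℝ, IsProbabilityMeasure (μ l))
    (hmom : ∀ (l : ℝ) (n : ℕ),
      Integrable (fun x : ℝ => x ^ n) (μ l) ∧
      ⟪φ, (((A + l • ((innerSL ℝ φ).smulRight φ)) ^ n) φ)⟫ = ∫ x, x ^ n ∂(μ l))
    (ν : Measure ℝ) (hν : ∫⁻ y, ENNReal.ofReal (1 / (1 + y ^ 2)) ∂ν < ⊤) :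
    ∀ z : ℂ, 0 < z.im → ∀ w : ℂ, w = -(∫ y, ((y : ℂ) - z)⁻¹ ∂(μ 0))⁻¹ →
      (∫ l, (∫ y, z.im / ((y - z.re) ^ 2 + z.im ^ 2) ∂(μ l)) ∂ν)
        = ∫ y, w.im / ((y - w.re) ^ 2 + w.im ^ 2) ∂ν := by
  intro z him w hw
  haveI : ∀ l : ℝ, IsProbabilityMeasure (μ l) := hprob
  set P : H →L[ℝ] H := (innerSL ℝ φ).smulRight φ with hP
  -- operator norm bound
  have hPnorm : ‖P‖ = 1 := by
    rw [hP, ContinuousLinearMap.norm_smulRight_apply, innerSL_apply_norm, hφ, mul_one]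
  have hBnorm : ∀ l : ℝ, ‖A + l • P‖ ≤ ‖A‖ + |l| := by
    intro l
    calc ‖A + l • P‖ ≤ ‖A‖ + ‖l • P‖ := norm_add_le _ _
    _ = ‖A‖ + |l| := by rw [norm_smul l P, hPnorm, mul_one, Real.norm_eq_abs]
  have hpow : ∀ (l : ℝ) (n : ℕ), ‖(((A + l • P) ^ n)) φ‖ ≤ (‖A‖ + |l|) ^ n := by
    intro l n
    induction n with
    | zero => simp [hφ]
    | succ n ih =>
      rw [pow_succ']
      rw [ContinuousLinearMap.mul_apply]
      calc ‖(A + l • P) (((A + l • P) ^ n) φ)‖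
          ≤ ‖A + l • P‖ * ‖((A + l • P) ^ n) φ‖ := ContinuousLinearMap.le_opNorm _ _
      _ ≤ (‖A‖ + |l|) * (‖A‖ + |l|) ^ n := by
          apply mul_le_mul (hBnorm l) ih (norm_nonneg _)
          positivity
      _ = (‖A‖ + |l|) ^ (n+1) := by rw [pow_succ]; ring
  -- moment bound
  have hmb : ∀ (l : ℝ) (n : ℕ), |∫ x, x ^ n ∂(μ l)| ≤ (‖A‖ + |l|) ^ n := by
    intro l n
    rw [← (hmom l n).2]
    calc |⟪φ, (((A + l • P) ^ n) φ)⟫| ≤ ‖φ‖ * ‖((A + l • P) ^ n) φ‖ :=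
          abs_real_inner_le_norm _ _
    _ = ‖((A + l • P) ^ n) φ‖ := by rw [hφ, one_mul]
    _ ≤ (‖A‖ + |l|) ^ n := hpow l n
  have hCpos : ∀ l : ℝ, (0:ℝ) ≤ ‖A‖ + |l| := fun l => by positivity
  -- support bound
  have hsupp : ∀ l : ℝ, ∀ᵐ y ∂(μ l), |y| ≤ ‖A‖ + |l| := by
    intro l
    refine ae_abs_le_of_moments (μ l) (hCpos l) (fun n => (hmom l n).1) (fun n => ?_)
    exact le_trans (le_abs_self _) (hmb l (2*n))
  have hsupp0 : ∀ᵐ y ∂(μ 0), |y| ≤ ‖A‖ := by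
    have := hsupp 0; simpa using this
  -- recursion for moments
  have hrec : ∀ (l : ℝ) (n : ℕ), (∫ x, x ^ n ∂(μ l)) = (∫ x, x ^ n ∂(μ 0))
      + l * ∑ j ∈ Finset.range n, (∫ x, x ^ j ∂(μ l)) * (∫ x, x ^ (n-1-j) ∂(μ 0)) := by
    intro l n
    have hA0 : ∀ k : ℕ, ⟪φ, ((A ^ k) φ)⟫ = ∫ x, x ^ k ∂(μ 0) := by
      intro k
      have := (hmom 0 k).2
      rw [show A + (0:ℝ) • P = A from by rw [zero_smul, add_zero]] at this
      exact this
    have h1 := moment_recursion A φ l n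
    rw [(hmom l n).2, hA0 n] at h1
    rw [h1]
    congr 1
    congr 1
    refine Finset.sum_congr rfl fun j hj => ?_
    rw [(hmom l j).2, hA0 (n-1-j)]
  -- Aronszajn-Krein identity at z, for each l
  set F0 : ℂ := ∫ y, ((y:ℂ) - z)⁻¹ ∂(μ 0) with hF0
  have himF0 : 0 < F0.im := by
    rw [hF0, im_integral_cauchy (μ 0) him]
    exact poisson_pos (μ 0) hsupp0 him
  have hF0ne : F0 ≠ 0 := by
    intro h; rw [h] at himF0; simp at himF0
  have hwim : 0 < w.im := by
    rw [hw]
    rw [Complex.neg_im, Complex.inv_im]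
    rw [neg_div, neg_neg]
    exact div_pos himF0 (Complex.normSq_pos.mpr hF0ne)
  -- pointwise identity in l
  have hpoint : ∀ l : ℝ, (∫ y, z.im / ((y - z.re) ^ 2 + z.im ^ 2) ∂(μ l))
      = w.im / ((l - w.re) ^ 2 + w.im ^ 2) := by
    intro l
    set F1 : ℂ := ∫ y, ((y:ℂ) - z)⁻¹ ∂(μ l) with hF1
    have hs0' : ∀ᵐ y ∂(μ 0), |y| ≤ ‖A‖ + |l| := by
      filter_upwards [hsupp0] with y hy
      have : (0:ℝ) ≤ |l| := abs_nonneg l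
      linarith
    have hak : F1 * (1 + (l:ℂ) * F0) = F0 := by
      rw [hF1, hF0]
      exact ak_uhp (μ 0) (μ l) (hCpos l) l hs0' (hsupp l)
        (fun n => (hmom 0 n).1) (fun n => (hmom l n).1) (hrec l) him
    have hlF0ne : (1 : ℂ) + (l:ℂ) * F0 ≠ 0 := by
      intro h
      have h1 := congrArg Complex.im h
      simp [Complex.add_im, Complex.mul_im, Complex.ofReal_im, Complex.ofReal_re] at h1
      rcases h1 with hl | hF
      · rw [hl] at h
        simp at h
      · exact absurd hF (ne_of_gt himF0)
    have hF1eq : F1 = (((l:ℝ):ℂ) - w)⁻¹ := by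
      have hlw : ((l:ℝ):ℂ) - w = (1 + (l:ℂ) * F0) / F0 := by
        rw [hw, sub_neg_eq_add]
        field_simp
        ring
      rw [hlw, div_eq_mul_inv, mul_inv, inv_inv]
      have : F1 * (1 + (l:ℂ) * F0) * ((1 + (l:ℂ) * F0))⁻¹ = F0 * ((1 + (l:ℂ) * F0))⁻¹ := by
        rw [hak]
      rw [mul_assoc, mul_inv_cancel₀ hlF0ne, mul_one] at this
      rw [this]
      ring
    have him1 : (∫ y, z.im / ((y - z.re) ^ 2 + z.im ^ 2) ∂(μ l)) = F1.im := by
      rw [hF1, im_integral_cauchy (μ l) him]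
    rw [him1, hF1eq, im_inv_sub l w]
  rw [integral_congr_ae (Eventually.of_forall hpoint)]
end

section
/- The Aronszajn–Krein formula: if A is a bounded self-adjoint operator, φ a unit vector, μ and μ_λ the spectral measures of A and A_λ = A + λ⟨φ,·⟩φ with respect to φ, then for all z in the upper half-plane, F_{μ_λ}(z) = F_μ(z)/(1 + λ F_μ(z)), where F_η(z) = ∫ dη(y)/(y − z). -/
open MeasureTheory Set
open scoped RealInnerProductSpace

namespace AKaux


lemma sub_ne {y : ℝ} {z : ℂ} (hz : 0 < z.im) : (y:ℂ) - z ≠ 0 := by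
  intro h
  have : ((y:ℂ) - z).im = 0 := by rw [h]; simp
  simp [Complex.sub_im] at this
  linarith

lemma norm_inv_le {y : ℝ} {z : ℂ} (hz : 0 < z.im) : ‖((y:ℂ) - z)⁻¹‖ ≤ (z.im)⁻¹ := by
  rw [norm_inv]
  apply inv_anti₀ hz
  calc z.im = |((y:ℂ) - z).im| := by
        simp only [Complex.sub_im, Complex.ofReal_im, zero_sub, abs_neg]
        rw [abs_of_nonneg hz.le]
    _ ≤ ‖(y:ℂ) - z‖ := Complex.abs_im_le_norm _

lemma integrable_inv (ν : Measure ℝ) [IsProbabilityMeasure ν] {z : ℂ} (hz : 0 < z.im) :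
    Integrable (fun y : ℝ => ((y:ℂ) - z)⁻¹) ν := by
  refine Integrable.mono' (integrable_const ((z.im)⁻¹)) ?_ ?_
  · exact ((Complex.measurable_ofReal.sub measurable_const).inv).aestronglyMeasurable
  · exact Filter.Eventually.of_forall fun y => norm_inv_le hz

lemma im_pos (ν : Measure ℝ) [IsProbabilityMeasure ν] {z : ℂ} (hz : 0 < z.im) :
    0 < (∫ y, ((y:ℂ) - z)⁻¹ ∂ν).im := by
  have hint := integrable_inv ν hz
  have h : ∫ y, (((y:ℂ) - z)⁻¹).im ∂ν = (∫ y, ((y:ℂ) - z)⁻¹ ∂ν).im := by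
    simpa using integral_im (μ := ν) (𝕜 := ℂ) hint
  rw [← h]
  have himeq : ∀ y : ℝ, (((y:ℂ) - z)⁻¹).im = z.im / Complex.normSq ((y:ℂ) - z) := by
    intro y; rw [Complex.inv_im]; simp [Complex.sub_im, neg_div]
  apply (integral_pos_iff_support_of_nonneg ?_ ?_).2
  · have : Function.support (fun y : ℝ => (((y:ℂ) - z)⁻¹).im) = Set.univ := by
      ext y; simp only [Function.mem_support, mem_univ, iff_true]
      rw [himeq y]
      have h0 : Complex.normSq ((y:ℂ) - z) ≠ 0 := by
        simpa [Complex.normSq_eq_zero] using sub_ne hz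
      positivity
    rw [this]; simp [(IsProbabilityMeasure.ne_zero ν)]
  · intro y
    show (0:ℝ) ≤ (((y:ℂ) - z)⁻¹).im
    rw [himeq y]
    have h0 : 0 ≤ Complex.normSq ((y:ℂ) - z) := Complex.normSq_nonneg _
    positivity
  · exact hint.im

lemma denom_ne (ν : Measure ℝ) [IsProbabilityMeasure ν] {z : ℂ} (hz : 0 < z.im) (l : ℝ) :
    1 + (l:ℂ) * ∫ y, ((y:ℂ) - z)⁻¹ ∂ν ≠ 0 := by
  rcases eq_or_ne l 0 with rfl | hl
  · simp
  · intro h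
    have him := congrArg Complex.im h
    simp [Complex.add_im, Complex.mul_im] at him
    rcases him with h | h
    · exact hl h
    · exact (im_pos ν hz).ne' h



lemma ae_bound (ν : Measure ℝ) [IsProbabilityMeasure ν] {K : ℝ} (hK : 0 ≤ K)
    (hint : ∀ n : ℕ, Integrable (fun x : ℝ => x ^ n) ν)
    (hbd : ∀ n : ℕ, |∫ x, x ^ n ∂ν| ≤ K ^ n) :
    ∀ᵐ y ∂ν, |y| ≤ K + 1 := by
  have hS : ν {x : ℝ | K + 1 ≤ |x|} = 0 := by
    have key : ∀ n : ℕ, (ν {x : ℝ | K + 1 ≤ |x|}).toReal ≤ (K / (K + 1)) ^ (2 * n) := by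
      intro n
      have hcheb := mul_meas_ge_le_integral_of_nonneg
        (μ := ν) (f := fun x : ℝ => x ^ (2 * n))
        (Filter.Eventually.of_forall fun x => even_two_mul n |>.pow_nonneg x)
        (hint (2 * n)) (((K + 1)) ^ (2 * n))
      have hsub : {x : ℝ | K + 1 ≤ |x|} ⊆ {x : ℝ | (K + 1) ^ (2 * n) ≤ x ^ (2 * n)} := by
        intro x hx
        simp only [mem_setOf_eq] at hx ⊢
        calc (K + 1) ^ (2 * n) ≤ |x| ^ (2 * n) := pow_le_pow_left₀ (by linarith) hx _
          _ = x ^ (2 * n) := by rw [← abs_pow, abs_of_nonneg (even_two_mul n |>.pow_nonneg x)]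
      have hmono : ν {x : ℝ | K + 1 ≤ |x|} ≤ ν {x : ℝ | (K + 1) ^ (2 * n) ≤ x ^ (2 * n)} :=
        measure_mono hsub
      have hfin1 : (ν {x : ℝ | K + 1 ≤ |x|}).toReal ≤ (ν {x : ℝ | (K + 1) ^ (2 * n) ≤ x ^ (2 * n)}).toReal :=
        ENNReal.toReal_mono (measure_ne_top _ _) hmono
      have hpos : (0:ℝ) < (K + 1) ^ (2 * n) := by positivity
      have h2 : (K + 1) ^ (2 * n) * (ν {x : ℝ | K + 1 ≤ |x|}).toReal ≤ K ^ (2 * n) := by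
        calc (K + 1) ^ (2 * n) * (ν {x : ℝ | K + 1 ≤ |x|}).toReal
            ≤ (K + 1) ^ (2 * n) * (ν {x : ℝ | (K + 1) ^ (2 * n) ≤ x ^ (2 * n)}).toReal := by
              exact mul_le_mul_of_nonneg_left hfin1 hpos.le
          _ ≤ ∫ x, x ^ (2 * n) ∂ν := hcheb
          _ ≤ K ^ (2 * n) := (le_abs_self _).trans (hbd (2 * n))
      rw [div_pow]
      rw [le_div_iff₀ hpos]
      linarith [h2]
    have hlim : Filter.Tendsto (fun n : ℕ => (K / (K + 1)) ^ (2 * n)) Filter.atTop (nhds 0) := by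
      have h1 : |K / (K + 1)| < 1 := by
        rw [abs_of_nonneg (by positivity)]
        rw [div_lt_one (by linarith)]; linarith
      have h2 : |(K / (K + 1)) ^ 2| < 1 := by
        rw [abs_pow]; exact pow_lt_one₀ (abs_nonneg _) h1 two_ne_zero
      simpa [pow_mul] using tendsto_pow_atTop_nhds_zero_of_abs_lt_one h2
    have : (ν {x : ℝ | K + 1 ≤ |x|}).toReal ≤ 0 :=
      le_of_tendsto_of_tendsto' tendsto_const_nhds hlim key
    have h0 : (ν {x : ℝ | K + 1 ≤ |x|}).toReal = 0 :=
      le_antisymm this ENNReal.toReal_nonneg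
    exact (ENNReal.toReal_eq_zero_iff _).1 h0 |>.resolve_right (measure_ne_top _ _)
  rw [ae_iff]
  refine measure_mono_null ?_ hS
  intro x hx
  simp only [mem_setOf_eq, not_le] at hx ⊢
  linarith



lemma geom_ptwise {M : ℝ} {z : ℂ} (hM : 0 ≤ M) (hz : M < ‖z‖) {y : ℝ} (hy : |y| ≤ M) :
    HasSum (fun n : ℕ => -(((y:ℂ) ^ n) / z ^ (n + 1))) (((y:ℂ) - z)⁻¹) := by
  have hz0 : z ≠ 0 := by intro h; rw [h] at hz; simp at hz; linarith
  have hlt : ‖(y:ℂ) / z‖ < 1 := by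
    rw [norm_div, div_lt_one (by linarith [hz] : (0:ℝ) < ‖z‖)]
    calc ‖(y:ℂ)‖ = |y| := by simp
      _ ≤ M := hy
      _ < ‖z‖ := hz
  have h1 := (hasSum_geometric_of_norm_lt_one hlt).mul_right (-z⁻¹)
  have hne : (1:ℂ) - (y:ℂ)/z ≠ 0 := by
    intro h
    have : ‖(1:ℂ) - (y:ℂ)/z‖ = 0 := by rw [h]; simp
    have h2 : (1:ℝ) - ‖(y:ℂ)/z‖ ≤ ‖(1:ℂ) - (y:ℂ)/z‖ := by
      have := norm_sub_norm_le (1:ℂ) ((y:ℂ)/z); simpa using this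
    rw [this] at h2; linarith
  have hfun : ∀ n : ℕ, ((y:ℂ)/z) ^ n * -z⁻¹ = -(((y:ℂ) ^ n) / z ^ (n + 1)) := by
    intro n
    rw [div_pow, pow_succ]
    ring
  have h2 : ((1:ℂ) - (y:ℂ)/z) * z = z - (y:ℂ) := by field_simp
  have hval : ((1:ℂ) - (y:ℂ)/z)⁻¹ * -z⁻¹ = ((y:ℂ) - z)⁻¹ := by
    calc ((1:ℂ) - (y:ℂ)/z)⁻¹ * -z⁻¹ = -((((1:ℂ) - (y:ℂ)/z) * z)⁻¹) := by
          rw [mul_inv]; ring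
      _ = -((z - (y:ℂ))⁻¹) := by rw [h2]
      _ = ((y:ℂ) - z)⁻¹ := by
          rw [show (y:ℂ) - z = -(z - (y:ℂ)) by ring, inv_neg]
  have hfe : (fun n : ℕ => ((y:ℂ)/z) ^ n * -z⁻¹) = fun n => -(((y:ℂ) ^ n) / z ^ (n + 1)) :=
    funext hfun
  rw [hfe, hval] at h1
  exact h1

lemma borel_series (ν : Measure ℝ) [IsProbabilityMeasure ν] {M : ℝ} (hM : 0 ≤ M) {z : ℂ}
    (hz : M < ‖z‖) (hae : ∀ᵐ y ∂ν, |y| ≤ M)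
    (hint : ∀ n : ℕ, Integrable (fun x : ℝ => x ^ n) ν) :
    HasSum (fun n : ℕ => -(((∫ x, x ^ n ∂ν : ℝ) : ℂ) / z ^ (n + 1)))
      (∫ y, ((y:ℂ) - z)⁻¹ ∂ν) := by
  have hz0 : (0:ℝ) < ‖z‖ := lt_of_le_of_lt hM hz
  set f : ℕ → ℝ → ℂ := fun n y => -(((y:ℂ) ^ n) / z ^ (n + 1)) with hf
  have hfint : ∀ n, Integrable (f n) ν := by
    intro n
    have : Integrable (fun y : ℝ => ((y ^ n : ℝ) : ℂ)) ν := (hint n).ofReal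
    have h2 : Integrable (fun y : ℝ => ((y ^ n : ℝ) : ℂ) * (-(z ^ (n+1))⁻¹)) ν := this.mul_const _
    apply h2.congr
    filter_upwards with y
    simp [hf]
    push_cast
    field_simp
  have hnorm : ∀ n, ∫ y, ‖f n y‖ ∂ν ≤ M ^ n / ‖z‖ ^ (n + 1) := by
    intro n
    have : ∀ᵐ y ∂ν, ‖f n y‖ ≤ M ^ n / ‖z‖ ^ (n + 1) := by
      filter_upwards [hae] with y hy
      simp only [hf, norm_neg, norm_div, norm_pow]
      gcongr
      simpa using hy
    calc ∫ y, ‖f n y‖ ∂ν ≤ ∫ _, M ^ n / ‖z‖ ^ (n + 1) ∂ν :=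
          integral_mono_ae (hfint n).norm (integrable_const _) this
      _ = M ^ n / ‖z‖ ^ (n + 1) := by simp
  have hsum : Summable fun n => ∫ y, ‖f n y‖ ∂ν := by
    apply Summable.of_nonneg_of_le (fun n => integral_nonneg fun y => norm_nonneg _) hnorm
    have hr : M / ‖z‖ < 1 := by rw [div_lt_one hz0]; exact hz
    have : Summable fun n : ℕ => (‖z‖)⁻¹ * (M / ‖z‖) ^ n :=
      (summable_geometric_of_lt_one (by positivity) hr).mul_left _
    apply this.congr
    intro n
    rw [div_pow, pow_succ]
    ring
  have hkey := hasSum_integral_of_summable_integral_norm hfint hsum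
  have heq : ∫ y, (∑' n, f n y) ∂ν = ∫ y, ((y:ℂ) - z)⁻¹ ∂ν := by
    apply integral_congr_ae
    filter_upwards [hae] with y hy
    exact (geom_ptwise hM hz hy).tsum_eq
  rw [heq] at hkey
  have hfi : ∀ n, ∫ y, f n y ∂ν = -(((∫ x, x ^ n ∂ν : ℝ) : ℂ) / z ^ (n + 1)) := by
    intro n
    simp only [hf]
    rw [integral_neg]
    congr 1
    rw [div_eq_mul_inv]
    have : ∀ y : ℝ, ((y:ℂ) ^ n) * (z ^ (n+1))⁻¹ = ((y ^ n : ℝ) : ℂ) * (z ^ (n+1))⁻¹ := by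
      intro y; push_cast; ring
    calc ∫ y, ((y:ℂ) ^ n) / z ^ (n+1) ∂ν = ∫ y, ((y ^ n : ℝ) : ℂ) * (z ^ (n+1))⁻¹ ∂ν := by
          simp only [div_eq_mul_inv]
          exact integral_congr_ae (Filter.Eventually.of_forall this)
      _ = (∫ y, ((y ^ n : ℝ) : ℂ) ∂ν) * (z ^ (n+1))⁻¹ := integral_mul_const _ _
      _ = ((∫ x, x ^ n ∂ν : ℝ) : ℂ) * (z ^ (n+1))⁻¹ :=
          congrArg (· * (z ^ (n+1))⁻¹) (integral_ofReal (𝕜 := ℂ) (f := fun x : ℝ => x ^ n))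
  have hfe : (fun n => ∫ y, f n y ∂ν)
      = fun n : ℕ => -(((∫ x, x ^ n ∂ν : ℝ) : ℂ) / z ^ (n + 1)) := funext hfi
  rwa [hfe] at hkey



variable {H : Type*} [NormedAddCommGroup H] [InnerProductSpace ℝ H]

lemma vec_id (A T : H →L[ℝ] H) (φ : H) (l : ℝ)
    (hT : ∀ x, T x = A x + l • (⟪φ, x⟫ • φ)) : ∀ n : ℕ,
    (T ^ n) φ = (A ^ n) φ
      + l • ∑ j ∈ Finset.range n, ⟪φ, (T ^ j) φ⟫ • (A ^ (n - 1 - j)) φ := by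
  intro n
  induction n with
  | zero => simp
  | succ n ih =>
    set b : ℕ → ℝ := fun j => ⟪φ, (T ^ j) φ⟫ with hb
    set m : ℕ → ℝ := fun j => ⟪φ, (A ^ j) φ⟫ with hm
    have hbn : b n = m n + l * ∑ j ∈ Finset.range n, b j * m (n - 1 - j) := by
      rw [hb]
      simp only []
      rw [ih]
      rw [inner_add_right, real_inner_smul_right, inner_sum]
      simp only [real_inner_smul_right]
      rfl
    have happ : ∀ (S : H →L[ℝ] H) (x : H) (k : ℕ), (S ^ (k+1)) x = S ((S ^ k) x) := by
      intro S x k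
      rw [pow_succ']
      rfl
    have hAk : ∀ j ∈ Finset.range n, A ((A ^ (n - 1 - j)) φ) = (A ^ (n - j)) φ := by
      intro j hj
      rw [Finset.mem_range] at hj
      have : n - 1 - j + 1 = n - j := by omega
      rw [← happ, this]
    have hinA : ∀ k : ℕ, ⟪φ, (A ^ k) φ⟫ = m k := fun k => rfl
    rw [happ T φ n, ih]
    rw [map_add, _root_.map_smul, _root_.map_sum]
    rw [hT ((A ^ n) φ)]
    have hTsum : ∀ j ∈ Finset.range n,
        T (b j • (A ^ (n - 1 - j)) φ)
          = b j • (A ^ (n - j)) φ + (b j * (l * m (n - 1 - j))) • φ := by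
      intro j hj
      rw [ContinuousLinearMap.map_smul, hT]
      rw [hAk j hj, hinA]
      rw [smul_add]
      rw [smul_smul, smul_smul]
      ring_nf
    rw [Finset.sum_congr rfl hTsum]
    rw [Finset.sum_add_distrib]
    rw [← happ A φ n]
    -- target : rewrite RHS sum over range (n+1)
    rw [Finset.sum_range_succ]
    have hlast : b n • (A ^ (n + 1 - 1 - n)) φ = b n • φ := by
      norm_num
    rw [hlast]
    have hexp : ∀ j ∈ Finset.range n, b j • (A ^ (n + 1 - 1 - j)) φ = b j • (A ^ (n - j)) φ := by
      intro j hj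
      have h : n + 1 - 1 - j = n - j := by omega
      rw [h]
    rw [Finset.sum_congr rfl hexp]
    rw [hbn]
    rw [show (∑ j ∈ Finset.range n, (b j * (l * m (n - 1 - j))) • φ)
        = (∑ j ∈ Finset.range n, b j * (l * m (n - 1 - j))) • φ from
      (Finset.sum_smul).symm]
    set X := ∑ j ∈ Finset.range n, b j • (A ^ (n - j)) φ with hX
    set c := ∑ j ∈ Finset.range n, b j * m (n - 1 - j) with hc
    have : ∑ j ∈ Finset.range n, b j * (l * m (n - 1 - j)) = l * c := by
      rw [hc, Finset.mul_sum]
      apply Finset.sum_congr rfl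
      intro j _
      ring
    rw [this]
    rw [hinA n]
    module

lemma scalar_rec (A T : H →L[ℝ] H) (φ : H) (l : ℝ)
    (hT : ∀ x, T x = A x + l • (⟪φ, x⟫ • φ)) (n : ℕ) :
    ⟪φ, (T ^ n) φ⟫ = ⟪φ, (A ^ n) φ⟫
      + l * ∑ j ∈ Finset.range n, ⟪φ, (T ^ j) φ⟫ * ⟪φ, (A ^ (n - 1 - j)) φ⟫ := by
  rw [vec_id A T φ l hT n]
  rw [inner_add_right, real_inner_smul_right, inner_sum]
  simp only [real_inner_smul_right]

lemma inner_pow_bound (T : H →L[ℝ] H) (φ : H) (hφ : ‖φ‖ = 1) (n : ℕ) :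
    |⟪φ, (T ^ n) φ⟫| ≤ ‖T‖ ^ n := by
  have h1 : ‖T ^ n‖ ≤ ‖T‖ ^ n := by
    rcases Nat.eq_zero_or_pos n with rfl | hn
    · rw [pow_zero, pow_zero]; exact ContinuousLinearMap.norm_id_le
    · exact norm_pow_le' T hn
  calc |⟪φ, (T ^ n) φ⟫| ≤ ‖φ‖ * ‖(T ^ n) φ‖ := abs_real_inner_le_norm _ _
    _ ≤ ‖φ‖ * (‖T ^ n‖ * ‖φ‖) := by gcongr; exact (T ^ n).le_opNorm φ
    _ = ‖T ^ n‖ := by rw [hφ]; ring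
    _ ≤ ‖T‖ ^ n := h1

lemma im_lb {y : ℝ} {z : ℂ} : z.im ≤ ‖(y:ℂ) - z‖ := by
  calc z.im ≤ |((y:ℂ) - z).im| := by
        simp only [Complex.sub_im, Complex.ofReal_im, zero_sub, abs_neg]
        exact le_abs_self _
    _ ≤ ‖(y:ℂ) - z‖ := Complex.abs_im_le_norm _

lemma diffOn (ν : Measure ℝ) [IsProbabilityMeasure ν] :
    DifferentiableOn ℂ (fun z => ∫ y, ((y:ℂ) - z)⁻¹ ∂ν) {z : ℂ | 0 < z.im} := by
  intro z₀ hz₀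
  simp only [mem_setOf_eq] at hz₀
  set ε := z₀.im / 2 with hε'
  have hε : 0 < ε := half_pos hz₀
  have hball : ∀ z ∈ Metric.ball z₀ ε, ε ≤ z.im := by
    intro z hz
    rw [Metric.mem_ball, Complex.dist_eq] at hz
    have h1 : |z.im - z₀.im| ≤ ‖z - z₀‖ := by
      simpa [Complex.sub_im] using Complex.abs_im_le_norm (z - z₀)
    have h2 : |z.im - z₀.im| < ε := lt_of_le_of_lt h1 hz
    have := abs_lt.1 h2
    rw [hε']
    linarith [this.1]
  have key := hasDerivAt_integral_of_dominated_loc_of_deriv_le (μ := ν)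
      (F := fun (z : ℂ) (y : ℝ) => ((y:ℂ) - z)⁻¹)
      (F' := fun (z : ℂ) (y : ℝ) => (((y:ℂ) - z) ^ 2)⁻¹)
      (x₀ := z₀) (bound := fun _ : ℝ => (ε ^ 2)⁻¹) (Metric.ball_mem_nhds z₀ hε)
      (Filter.Eventually.of_forall fun z =>
        ((Complex.measurable_ofReal.sub measurable_const).inv).aestronglyMeasurable)
      (integrable_inv ν hz₀)
      (((Complex.measurable_ofReal.sub measurable_const).pow_const 2).inv.aestronglyMeasurable)
      ?_ (integrable_const _) ?_
  · exact key.2.differentiableAt.differentiableWithinAt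
  · refine Filter.Eventually.of_forall fun y => fun z hz => ?_
    have h1 : ε ≤ ‖(y:ℂ) - z‖ := le_trans (hball z hz) im_lb
    rw [norm_inv, norm_pow]
    have h2 : ε ^ 2 ≤ ‖(y:ℂ) - z‖ ^ 2 := by gcongr
    exact inv_anti₀ (by positivity) h2
  · refine Filter.Eventually.of_forall fun y => fun z hz => ?_
    have hzim : 0 < z.im := lt_of_lt_of_le hε (hball z hz)
    have h := ((hasDerivAt_id z).const_sub ((y:ℂ))).inv (sub_ne hzim)
    simpa [Pi.inv_def] using h

lemma summable_norm_aux {K : ℝ} (hK : 0 ≤ K) {w : ℂ} (hw : K + 1 < ‖w‖) {a : ℕ → ℝ}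
    (ha : ∀ n, |a n| ≤ K ^ n) :
    Summable fun n : ℕ => ‖-(((a n : ℝ) : ℂ) / w ^ (n + 1))‖ := by
  have hw0 : (0:ℝ) < ‖w‖ := by linarith
  have hr : (K + 1) / ‖w‖ < 1 := by rw [div_lt_one hw0]; exact hw
  have hgeo : Summable fun n : ℕ => (‖w‖)⁻¹ * ((K + 1) / ‖w‖) ^ n :=
    (summable_geometric_of_lt_one (by positivity) hr).mul_left _
  apply Summable.of_nonneg_of_le (fun n => norm_nonneg _) ?_ hgeo
  intro n
  rw [norm_neg, norm_div, norm_pow]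
  have h1 : ‖((a n : ℝ) : ℂ)‖ ≤ (K + 1) ^ n := by
    simp only [Complex.norm_real, Real.norm_eq_abs]
    exact (ha n).trans (pow_le_pow_left₀ hK (by linarith) n)
  calc ‖((a n : ℝ) : ℂ)‖ / ‖w‖ ^ (n + 1) ≤ (K + 1) ^ n / ‖w‖ ^ (n + 1) := by gcongr
    _ = (‖w‖)⁻¹ * ((K + 1) / ‖w‖) ^ n := by rw [div_pow]; field_simp; ring

lemma main_eq (νl ν0 : Measure ℝ) [IsProbabilityMeasure νl] [IsProbabilityMeasure ν0]
    {K : ℝ} (hK : 0 ≤ K) (l : ℝ)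
    (hintl : ∀ n, Integrable (fun x : ℝ => x ^ n) νl)
    (hint0 : ∀ n, Integrable (fun x : ℝ => x ^ n) ν0)
    (hael : ∀ᵐ y ∂νl, |y| ≤ K + 1) (hae0 : ∀ᵐ y ∂ν0, |y| ≤ K + 1)
    (hbdl : ∀ n, |∫ x, x ^ n ∂νl| ≤ K ^ n) (hbd0 : ∀ n, |∫ x, x ^ n ∂ν0| ≤ K ^ n)
    (hrec : ∀ k : ℕ, (∫ x, x ^ (k+1) ∂νl) - (∫ x, x ^ (k+1) ∂ν0)
        = l * ∑ j ∈ Finset.range (k+1), (∫ x, x ^ j ∂νl) * (∫ x, x ^ (k - j) ∂ν0))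
    {w : ℂ} (hw : K + 1 < ‖w‖) :
    (∫ y, ((y:ℂ) - w)⁻¹ ∂νl) * (1 + l * ∫ y, ((y:ℂ) - w)⁻¹ ∂ν0)
      = ∫ y, ((y:ℂ) - w)⁻¹ ∂ν0 := by
  have hw0 : (0:ℝ) < ‖w‖ := by linarith
  have hwne : w ≠ 0 := by intro h; rw [h] at hw0; simp at hw0
  set bC : ℕ → ℂ := fun n => ((∫ x, x ^ n ∂νl : ℝ) : ℂ) with hbC
  set mC : ℕ → ℂ := fun n => ((∫ x, x ^ n ∂ν0 : ℝ) : ℂ) with hmC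
  set p : ℕ → ℂ := fun n => -(bC n / w ^ (n + 1)) with hp
  set q : ℕ → ℂ := fun n => -(mC n / w ^ (n + 1)) with hq
  have hK1 : (0:ℝ) ≤ K + 1 := by linarith
  have hSl : HasSum p (∫ y, ((y:ℂ) - w)⁻¹ ∂νl) := borel_series νl hK1 hw hael hintl
  have hS0 : HasSum q (∫ y, ((y:ℂ) - w)⁻¹ ∂ν0) := borel_series ν0 hK1 hw hae0 hint0
  have hpn : Summable fun n => ‖p n‖ := summable_norm_aux hK hw hbdl
  have hqn : Summable fun n => ‖q n‖ := summable_norm_aux hK hw hbd0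
  set Fl := ∫ y, ((y:ℂ) - w)⁻¹ ∂νl
  set F0 := ∫ y, ((y:ℂ) - w)⁻¹ ∂ν0
  -- Cauchy product
  have hcauchy : Fl * F0 = ∑' n : ℕ,
      (∑ j ∈ Finset.range (n+1), bC j * mC (n - j)) / w ^ (n + 2) := by
    rw [← hSl.tsum_eq, ← hS0.tsum_eq]
    rw [tsum_mul_tsum_eq_tsum_sum_antidiagonal_of_summable_norm hpn hqn]
    apply tsum_congr
    intro n
    rw [Finset.Nat.sum_antidiagonal_eq_sum_range_succ_mk]
    rw [Finset.sum_div]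
    apply Finset.sum_congr rfl
    intro j hj
    rw [Finset.mem_range] at hj
    simp only [hp, hq]
    rw [neg_mul_neg, div_mul_div_comm, ← pow_add]
    congr 2
    omega
  -- difference
  have hdiffsum : HasSum (fun n => (mC n - bC n) / w ^ (n + 1)) (Fl - F0) := by
    have h := hSl.sub hS0
    have heq : (fun n => p n - q n) = fun n => (mC n - bC n) / w ^ (n + 1) := by
      funext n; simp only [hp, hq]; ring
    rwa [heq] at h
  have h00 : mC 0 = bC 0 := by
    simp only [hbC, hmC, pow_zero]
    norm_num
  have hrecC : ∀ k : ℕ, mC (k+1) - bC (k+1)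
      = -((l:ℂ) * ∑ j ∈ Finset.range (k+1), bC j * mC (k - j)) := by
    intro k
    have h := hrec k
    have : (∫ x, x ^ (k+1) ∂ν0 : ℝ) - ∫ x, x ^ (k+1) ∂νl
        = -(l * ∑ j ∈ Finset.range (k+1), (∫ x, x ^ j ∂νl) * (∫ x, x ^ (k - j) ∂ν0)) := by
      linarith
    simp only [hbC, hmC]
    exact_mod_cast this
  have hdiff : Fl - F0 = -(l:ℂ) * ∑' k : ℕ,
      (∑ j ∈ Finset.range (k+1), bC j * mC (k - j)) / w ^ (k + 2) := by
    rw [← hdiffsum.tsum_eq]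
    rw [hdiffsum.summable.tsum_eq_zero_add]
    rw [show (mC 0 - bC 0) / w ^ (0 + 1) = 0 by rw [h00]; simp]
    rw [zero_add]
    rw [← tsum_mul_left]
    apply tsum_congr
    intro k
    rw [hrecC k]
    ring_nf
  -- combine
  have : Fl - F0 = -(l:ℂ) * (Fl * F0) := by rw [hcauchy, hdiff]
  linear_combination this


end AKaux

open AKaux in
/-- The Aronszajn–Krein formula: `F_{μ_λ}(z) = F_μ(z) / (1 + λ F_μ(z))`. -/
theorem stmt_6 {H : Type*} [NormedAddCommGroup H] [InnerProductSpace ℝ H]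
    [CompleteSpace H] [TopologicalSpace.SeparableSpace H]
    (A : H →L[ℝ] H) (hA : IsSelfAdjoint A) (φ : H) (hφ : ‖φ‖ = 1)
    (μ : ℝ → Measure ℝ) (hprob : ∀ l : ℝ, IsProbabilityMeasure (μ l))
    (hmom : ∀ (l : ℝ) (n : ℕ),
      Integrable (fun x : ℝ => x ^ n) (μ l) ∧
      ⟪φ, (((A + l • ((innerSL ℝ φ).smulRight φ)) ^ n) φ)⟫ = ∫ x, x ^ n ∂(μ l)) :
    ∀ (l : ℝ) (z : ℂ), 0 < z.im →
      (∫ y, ((y : ℂ) - z)⁻¹ ∂(μ l))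
        = (∫ y, ((y : ℂ) - z)⁻¹ ∂(μ 0)) / (1 + l * ∫ y, ((y : ℂ) - z)⁻¹ ∂(μ 0)) := by
  intro l z hz
  haveI := hprob l
  haveI := hprob 0
  set T : H →L[ℝ] H := A + l • ((innerSL ℝ φ).smulRight φ) with hTdef
  have hT : ∀ x, T x = A x + l • (⟪φ, x⟫ • φ) := by
    intro x
    rw [hTdef]
    simp [ContinuousLinearMap.smulRight_apply]
  have hb : ∀ n, ⟪φ, (T ^ n) φ⟫ = ∫ x, x ^ n ∂(μ l) := fun n => (hmom l n).2
  have hm : ∀ n, ⟪φ, (A ^ n) φ⟫ = ∫ x, x ^ n ∂(μ 0) := by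
    intro n
    have h := (hmom 0 n).2
    simp only [zero_smul, add_zero] at h
    exact h
  set K : ℝ := max ‖A‖ ‖T‖ with hK
  have hK0 : (0:ℝ) ≤ K := le_trans (norm_nonneg A) (le_max_left _ _)
  have hbdl : ∀ n, |∫ x, x ^ n ∂(μ l)| ≤ K ^ n := by
    intro n
    rw [← hb n]
    exact (inner_pow_bound T φ hφ n).trans
      (pow_le_pow_left₀ (norm_nonneg _) (le_max_right _ _) n)
  have hbd0 : ∀ n, |∫ x, x ^ n ∂(μ 0)| ≤ K ^ n := by
    intro n
    rw [← hm n]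
    exact (inner_pow_bound A φ hφ n).trans
      (pow_le_pow_left₀ (norm_nonneg _) (le_max_left _ _) n)
  have hintl : ∀ n, Integrable (fun x : ℝ => x ^ n) (μ l) := fun n => (hmom l n).1
  have hint0 : ∀ n, Integrable (fun x : ℝ => x ^ n) (μ 0) := fun n => (hmom 0 n).1
  have hael : ∀ᵐ y ∂(μ l), |y| ≤ K + 1 := ae_bound (μ l) hK0 hintl hbdl
  have hae0 : ∀ᵐ y ∂(μ 0), |y| ≤ K + 1 := ae_bound (μ 0) hK0 hint0 hbd0
  have hrec : ∀ k : ℕ, (∫ x, x ^ (k+1) ∂(μ l)) - (∫ x, x ^ (k+1) ∂(μ 0))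
      = l * ∑ j ∈ Finset.range (k+1), (∫ x, x ^ j ∂(μ l)) * (∫ x, x ^ (k - j) ∂(μ 0)) := by
    intro k
    have h := scalar_rec A T φ l hT (k+1)
    simp only [Nat.add_sub_cancel] at h
    simp only [hb, hm] at h
    rw [h]
    ring
  set U : Set ℂ := {w : ℂ | 0 < w.im} with hU
  have hUopen : IsOpen U := isOpen_lt continuous_const Complex.continuous_im
  have hg1 : DifferentiableOn ℂ (fun w => ∫ y, ((y:ℂ) - w)⁻¹ ∂(μ l)) U := diffOn (μ l)
  have hd0 : DifferentiableOn ℂ (fun w => ∫ y, ((y:ℂ) - w)⁻¹ ∂(μ 0)) U := diffOn (μ 0)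
  have hg2 : DifferentiableOn ℂ
      (fun w => (∫ y, ((y:ℂ) - w)⁻¹ ∂(μ 0)) / (1 + l * ∫ y, ((y:ℂ) - w)⁻¹ ∂(μ 0))) U := by
    apply DifferentiableOn.div hd0
    · exact (differentiableOn_const _).add ((differentiableOn_const _).mul hd0)
    · intro w hw
      exact denom_ne (μ 0) hw l
  set V : Set ℂ := U ∩ {w : ℂ | K + 1 < ‖w‖} with hV
  have hVopen : IsOpen V := hUopen.inter (isOpen_lt continuous_const continuous_norm)
  set z₀ : ℂ := ((K + 2 : ℝ) : ℂ) * Complex.I with hz₀def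
  have hz₀im : z₀.im = K + 2 := by simp [hz₀def]
  have hz₀norm : ‖z₀‖ = K + 2 := by
    rw [hz₀def]
    rw [norm_mul, Complex.norm_I, Complex.norm_real, Real.norm_eq_abs,
      abs_of_nonneg (by linarith), mul_one]
  have hz₀U : z₀ ∈ U := by rw [hU]; simp only [mem_setOf_eq, hz₀im]; linarith
  have hz₀V : z₀ ∈ V := by
    refine ⟨hz₀U, ?_⟩
    simp only [mem_setOf_eq, hz₀norm]
    linarith
  have heqV : ∀ w ∈ V, (fun w => ∫ y, ((y:ℂ) - w)⁻¹ ∂(μ l)) w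
      = (fun w => (∫ y, ((y:ℂ) - w)⁻¹ ∂(μ 0)) / (1 + l * ∫ y, ((y:ℂ) - w)⁻¹ ∂(μ 0))) w := by
    intro w hw
    have hwim : 0 < w.im := hw.1
    have hwnorm : K + 1 < ‖w‖ := hw.2
    have h := main_eq (μ l) (μ 0) hK0 l hintl hint0 hael hae0 hbdl hbd0 hrec hwnorm
    rw [eq_div_iff (denom_ne (μ 0) hwim l)]
    exact h
  have hfg : (fun w => ∫ y, ((y:ℂ) - w)⁻¹ ∂(μ l))
      =ᶠ[nhds z₀]
      (fun w => (∫ y, ((y:ℂ) - w)⁻¹ ∂(μ 0)) / (1 + l * ∫ y, ((y:ℂ) - w)⁻¹ ∂(μ 0))) :=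
    Filter.eventuallyEq_of_mem (hVopen.mem_nhds hz₀V) heqV
  have hpre : IsPreconnected U := (convex_halfSpace_im_gt 0).isPreconnected
  have := (hg1.analyticOnNhd hUopen).eqOn_of_preconnected_of_eventuallyEq
    (hg2.analyticOnNhd hUopen) hpre hz₀U hfg (show z ∈ U from hz)
  simpa using this
end

section
/- If ν is uniformly 1-Hölder continuous (ν(I) ≤ K|I| for all intervals I), then the averaged measure κ(B) = ∫ μ_λ(B) dν(λ) over the rank-one perturbation family is also uniformly 1-Hölder continuous, with constant depending only on K. -/
open MeasureTheory Set Polynomial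
open scoped RealInnerProductSpace

namespace Stmt12Aux

set_option linter.unusedSectionVars false
set_option linter.deprecated false

variable {H : Type} [NormedAddCommGroup H] [InnerProductSpace ℝ H] [CompleteSpace H]



lemma semi_cs (T : H →L[ℝ] H) (hsym : ∀ x y : H, ⟪T x, y⟫ = ⟪x, T y⟫)
    (hpos : ∀ x : H, 0 ≤ ⟪x, T x⟫) (x y : H) :
    ⟪x, T y⟫ ^ 2 ≤ ⟪x, T x⟫ * ⟪y, T y⟫ := by
  have key : ∀ t : ℝ, 0 ≤ ⟪y, T y⟫ * (t * t) + (2 * ⟪x, T y⟫) * t + ⟪x, T x⟫ := by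
    intro t
    have h0 := hpos (x + t • y)
    have hxy : ⟪y, T x⟫ = ⟪x, T y⟫ := by
      rw [← hsym y x, real_inner_comm]
    have : ⟪x + t • y, T (x + t • y)⟫
        = ⟪y, T y⟫ * (t * t) + (2 * ⟪x, T y⟫) * t + ⟪x, T x⟫ := by
      rw [map_add, ContinuousLinearMap.map_smul]
      simp only [inner_add_left, inner_add_right, real_inner_smul_left,
        real_inner_smul_right, hxy]
      ring
    linarith [this ▸ h0]
  have hd := discrim_le_zero key
  rw [discrim] at hd
  nlinarith [hd]

lemma norm_sq_le (T : H →L[ℝ] H) (hsym : ∀ x y : H, ⟪T x, y⟫ = ⟪x, T y⟫)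
    (hpos : ∀ x : H, 0 ≤ ⟪x, T x⟫) (x : H) :
    ‖T x‖ ^ 2 ≤ ‖T‖ * ⟪x, T x⟫ := by
  have hw : ‖T x‖ ^ 2 = ⟪x, T (T x)⟫ := by
    rw [← hsym x (T x), real_inner_self_eq_norm_sq]
  have hcs := semi_cs T hsym hpos x (T x)
  have h1 : ⟪T x, T (T x)⟫ ≤ ‖T x‖ * (‖T‖ * ‖T x‖) := by
    calc ⟪T x, T (T x)⟫ ≤ ‖T x‖ * ‖T (T x)‖ := real_inner_le_norm _ _
    _ ≤ ‖T x‖ * (‖T‖ * ‖T x‖) := by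
        have := T.le_opNorm (T x)
        nlinarith [norm_nonneg (T x)]
  have hs := hpos x
  have hw0 : (0:ℝ) ≤ ‖T x‖ ^ 2 := sq_nonneg _
  rcases eq_or_lt_of_le hw0 with h | h
  · nlinarith [hpos x, norm_nonneg (T : H →L[ℝ] H)]
  · nlinarith [hcs, h1, hs, h]

lemma contraction (T : H →L[ℝ] H) (hsym : ∀ x y : H, ⟪T x, y⟫ = ⟪x, T y⟫)
    (δ : ℝ) (hδ0 : 0 ≤ δ) (hδ1 : δ ≤ 1)
    (hpos : ∀ x : H, δ * ‖x‖ ^ 2 ≤ ⟪x, T x⟫) (hn : ‖T‖ ≤ 1) :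
    ‖1 - T‖ ≤ Real.sqrt (1 - δ) := by
  refine ContinuousLinearMap.opNorm_le_bound _ (Real.sqrt_nonneg _) fun x => ?_
  have hpos' : ∀ x : H, 0 ≤ ⟪x, T x⟫ := fun x => le_trans (by positivity) (hpos x)
  have h1 : ‖(1 - T) x‖ ^ 2 ≤ (1 - δ) * ‖x‖ ^ 2 := by
    have hxx : (1 - T) x = x - T x := by simp
    rw [hxx, @norm_sub_sq_real]
    have h2 : ‖T x‖ ^ 2 ≤ ‖T‖ * ⟪x, T x⟫ := norm_sq_le T hsym hpos' x
    have h3 : ‖T‖ * ⟪x, T x⟫ ≤ ⟪x, T x⟫ := by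
      nlinarith [hpos' x, hn, norm_nonneg T]
    have h4 := hpos x
    have h5 : ⟪x, T x⟫ = ⟪T x, x⟫ := real_inner_comm _ _
    nlinarith
  calc ‖(1 - T) x‖ = Real.sqrt (‖(1 - T) x‖ ^ 2) := by
        rw [Real.sqrt_sq (norm_nonneg _)]
  _ ≤ Real.sqrt ((1 - δ) * ‖x‖ ^ 2) := Real.sqrt_le_sqrt h1
  _ = Real.sqrt (1 - δ) * ‖x‖ := by
      rw [Real.sqrt_mul (by linarith), Real.sqrt_sq (norm_nonneg _)]




lemma poly_bridge (A' : H →L[ℝ] H) (φ : H) (μ' : Measure ℝ)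
    (hm : ∀ n : ℕ, Integrable (fun x : ℝ => x ^ n) μ' ∧
      ⟪φ, (A' ^ n) φ⟫ = ∫ x, x ^ n ∂μ') (p : Polynomial ℝ) :
    Integrable (fun x => p.eval x) μ' ∧
      ⟪φ, (Polynomial.aeval A' p) φ⟫ = ∫ x, p.eval x ∂μ' := by
  induction p using Polynomial.induction_on' with
  | add p q hp hq =>
    refine ⟨by simpa [eval_add, Pi.add_def] using hp.1.add hq.1, ?_⟩
    rw [map_add, ContinuousLinearMap.add_apply, inner_add_right, hp.2, hq.2,
      ← integral_add hp.1 hq.1]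
    simp [eval_add]
  | monomial n a =>
    have h1 : ∀ x : ℝ, (monomial n a).eval x = a * x ^ n := by
      intro x; simp [eval_monomial]
    constructor
    · simpa [h1] using (hm n).1.const_mul a
    · have h2 : (Polynomial.aeval A' (monomial n a)) φ = a • ((A' ^ n) φ) := by
        simp [aeval_monomial, Algebra.algebraMap_eq_smul_one]
      rw [h2, real_inner_smul_right, (hm n).2]
      simp_rw [h1]
      rw [MeasureTheory.integral_const_mul]

lemma ae_support (A' : H →L[ℝ] H) (φ : H) (hφ : ‖φ‖ = 1) (μ' : Measure ℝ)
    [IsProbabilityMeasure μ']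
    (hm : ∀ n : ℕ, Integrable (fun x : ℝ => x ^ n) μ' ∧
      ⟪φ, (A' ^ n) φ⟫ = ∫ x, x ^ n ∂μ') :
    ∀ᵐ x ∂μ', |x| ≤ ‖A'‖ := by
  set c := ‖A'‖ with hc
  have hc0 : 0 ≤ c := norm_nonneg _
  -- moments are bounded by c^n
  have hmb : ∀ n : ℕ, ∫ x, x ^ n ∂μ' ≤ c ^ n := by
    intro n
    rw [← (hm n).2]
    calc ⟪φ, (A' ^ n) φ⟫ ≤ ‖φ‖ * ‖(A' ^ n) φ‖ := real_inner_le_norm _ _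
    _ ≤ ‖φ‖ * (‖A' ^ n‖ * ‖φ‖) := by
        have := (A' ^ n).le_opNorm φ
        nlinarith [norm_nonneg (A' ^ n), norm_nonneg φ]
    _ ≤ c ^ n := by
        rw [hφ]
        rcases Nat.eq_zero_or_pos n with h | h
        · subst h
          simpa [ContinuousLinearMap.one_def] using ContinuousLinearMap.norm_id_le
        · simpa using norm_pow_le' A' h
  -- tail bound
  have key : ∀ R : ℝ, c < R → μ' {x : ℝ | R ≤ |x|} = 0 := by
    intro R hR
    have hR0 : 0 < R := lt_of_le_of_lt hc0 hR
    set S : Set ℝ := {x : ℝ | R ≤ |x|} with hS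
    have hSm : MeasurableSet S := measurableSet_le measurable_const measurable_id.abs
    have hfin : μ' S ≠ ⊤ := measure_ne_top _ _
    have hbound : ∀ j : ℕ, (μ' S).toReal ≤ ((c / R) ^ 2) ^ j := by
      intro j
      have h1 : R ^ (2 * j) * (μ' S).toReal ≤ ∫ x, x ^ (2 * j) ∂μ' := by
        have hnn : 0 ≤ᵐ[μ'] fun x : ℝ => x ^ (2 * j) := by
          refine Filter.Eventually.of_forall fun x => ?_
          simpa [pow_mul] using pow_nonneg (sq_nonneg x) j
        have h2 : ∫ x in S, x ^ (2 * j) ∂μ' ≤ ∫ x, x ^ (2 * j) ∂μ' :=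
          setIntegral_le_integral (hm (2 * j)).1 hnn
        have h3 : R ^ (2 * j) * (μ' S).toReal ≤ ∫ x in S, x ^ (2 * j) ∂μ' := by
          have h4 : ∫ x in S, R ^ (2 * j) ∂μ' ≤ ∫ x in S, x ^ (2 * j) ∂μ' := by
            refine setIntegral_mono_on (integrableOn_const (LT.lt.ne ?_))
              ((hm (2 * j)).1.integrableOn) hSm ?_
            · exact lt_of_le_of_ne (le_top) hfin |>.trans_le le_rfl
            · intro x hx
              have : R ≤ |x| := hx
              calc R ^ (2*j) = |R| ^ (2*j) := by rw [abs_of_pos hR0]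
              _ ≤ |x| ^ (2*j) := pow_le_pow_left₀ (abs_nonneg R) (by rwa [abs_of_pos hR0]) _
              _ = x ^ (2*j) := by rw [pow_mul, pow_mul, sq_abs]
          simpa [mul_comm, Measure.real] using h4
        linarith
      have h5 : ∫ x, x ^ (2*j) ∂μ' ≤ c ^ (2*j) := hmb (2*j)
      have h6 : R ^ (2*j) * (μ' S).toReal ≤ c ^ (2*j) := le_trans h1 h5
      have h7 : (0:ℝ) < R ^ (2*j) := pow_pos hR0 _
      calc (μ' S).toReal ≤ c ^ (2*j) / R ^ (2*j) := by
            rw [le_div_iff₀ h7]; linarith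
      _ = ((c/R)^2)^j := by rw [← div_pow, ← pow_mul]
    have hlim : Filter.Tendsto (fun j : ℕ => ((c / R) ^ 2) ^ j) Filter.atTop (nhds 0) := by
      apply tendsto_pow_atTop_nhds_zero_of_lt_one
      · positivity
      · have : c / R < 1 := (div_lt_one hR0).2 hR
        nlinarith [div_nonneg hc0 hR0.le]
    have hle : (μ' S).toReal ≤ 0 := ge_of_tendsto' hlim fun j => hbound j
    have : (μ' S).toReal = 0 := le_antisymm hle ENNReal.toReal_nonneg
    exact (ENNReal.toReal_eq_zero_iff _).1 this |>.resolve_right hfin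
  -- combine
  have : μ' {x : ℝ | c < |x|} = 0 := by
    have hU : {x : ℝ | c < |x|} ⊆ ⋃ k : ℕ, {x : ℝ | c + 1/(k+1) ≤ |x|} := by
      intro x hx
      obtain ⟨k, hk⟩ := exists_nat_one_div_lt (show (0:ℝ) < |x| - c from sub_pos.2 hx)
      exact mem_iUnion.2 ⟨k, by simp only [mem_setOf_eq]; push_cast; linarith [hk]⟩
    refine measure_mono_null hU (measure_iUnion_null fun k => key _ ?_)
    have : (0:ℝ) < 1/((k:ℝ)+1) := by positivity
    linarith
  filter_upwards [measure_eq_zero_iff_ae_notMem.1 this] with x hx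
  simpa using not_lt.1 (by simpa using hx)




set_option synthInstance.maxHeartbeats 1000000 in
set_option maxHeartbeats 1000000 in
lemma neumann_main (A' : H →L[ℝ] H) (hsym : ∀ x y : H, ⟪A' x, y⟫ = ⟪x, A' y⟫)
    (φ : H) (hφ : ‖φ‖ = 1) (μ' : Measure ℝ) [IsProbabilityMeasure μ']
    (hm : ∀ n : ℕ, Integrable (fun x : ℝ => x ^ n) μ' ∧
      ⟪φ, (A' ^ n) φ⟫ = ∫ x, x ^ n ∂μ')
    (u ε : ℝ) (hε : 0 < ε) :
    (∀ y : H, ∃ v : H,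
      ((A' - u • (1 : H →L[ℝ] H)) ^ 2 + ε ^ 2 • (1 : H →L[ℝ] H)) v = y) ∧
    (∀ w : H, ((A' - u • (1 : H →L[ℝ] H)) ^ 2 + ε ^ 2 • (1 : H →L[ℝ] H)) w = φ →
      ∫ x, ((x - u) ^ 2 + ε ^ 2)⁻¹ ∂μ' = ⟪φ, w⟫) := by
  set P : H →L[ℝ] H := A' - u • 1 with hP
  have hPapp : ∀ x : H, P x = A' x - u • x := by
    intro x; simp [hP]
  have hsymP : ∀ x y : H, ⟪P x, y⟫ = ⟪x, P y⟫ := by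
    intro x y
    rw [hPapp, hPapp, inner_sub_left, inner_sub_right, hsym,
      real_inner_smul_left, real_inner_smul_right]
  set B : H →L[ℝ] H := P ^ 2 + ε ^ 2 • 1 with hBdef
  have hBapp : ∀ x : H, B x = P (P x) + ε ^ 2 • x := by
    intro x; simp [hBdef, pow_two]
  have hsymB : ∀ x y : H, ⟪B x, y⟫ = ⟪x, B y⟫ := by
    intro x y
    rw [hBapp, hBapp, inner_add_left, inner_add_right, hsymP, hsymP,
      real_inner_smul_left, real_inner_smul_right]
  have hform : ∀ x : H, ⟪x, B x⟫ = ‖P x‖ ^ 2 + ε ^ 2 * ‖x‖ ^ 2 := by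
    intro x
    rw [hBapp, inner_add_right, real_inner_smul_right, ← hsymP x (P x),
      real_inner_self_eq_norm_sq, real_inner_self_eq_norm_sq]
  set M : ℝ := ‖B‖ + (‖A'‖ + |u|) ^ 2 + ε ^ 2 + 1 with hMdef
  have hM0 : 0 < M := by positivity
  have hMB : ‖B‖ < M := by nlinarith [norm_nonneg A', abs_nonneg u, sq_nonneg (‖A'‖ + |u|), sq_nonneg ε]
  have hMε : ε ^ 2 < M := by nlinarith [norm_nonneg A', norm_nonneg B, sq_nonneg (‖A'‖ + |u|)]
  set δ : ℝ := ε ^ 2 / M with hδdef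
  have hδ0 : 0 < δ := by positivity
  have hδ1 : δ < 1 := (div_lt_one hM0).2 hMε
  set T : H →L[ℝ] H := 1 - M⁻¹ • B with hTdef
  have h1T : (1 : H →L[ℝ] H) - T = M⁻¹ • B := by simp [hTdef]
  have hTnorm : ‖T‖ ≤ Real.sqrt (1 - δ) := by
    refine contraction (M⁻¹ • B) ?_ δ hδ0.le hδ1.le ?_ ?_
    · intro x y
      simp only [ContinuousLinearMap.smul_apply, real_inner_smul_left,
        real_inner_smul_right, hsymB]
    · intro x
      have := hform x
      have h1 : ⟪x, (M⁻¹ • B) x⟫ = M⁻¹ * ⟪x, B x⟫ := by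
        simp [real_inner_smul_right]
      rw [h1, this, hδdef]
      rw [div_mul_eq_mul_div, ← sub_nonneg]
      have : M⁻¹ * (‖P x‖ ^ 2 + ε ^ 2 * ‖x‖ ^ 2) - ε ^ 2 * ‖x‖ ^ 2 / M
          = M⁻¹ * ‖P x‖ ^ 2 := by field_simp; ring
      rw [this]; positivity
    · refine (norm_smul_le M⁻¹ B).trans ?_
      simp only [norm_inv, Real.norm_eq_abs, abs_of_pos hM0]
      rw [inv_mul_le_iff₀ hM0]
      linarith
  have hT1 : ‖T‖ < 1 := by
    have h5 : Real.sqrt (1 - δ) < Real.sqrt 1 :=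
      Real.sqrt_lt_sqrt (by linarith) (by linarith)
    rw [Real.sqrt_one] at h5
    exact lt_of_le_of_lt hTnorm h5
  have hsummable : Summable (fun n : ℕ => T ^ n) :=
    summable_geometric_of_norm_lt_one hT1
  -- surjectivity
  have hsurj : ∀ y : H, ∃ v : H, B v = y := by
    intro y
    refine ⟨M⁻¹ • ((∑' n : ℕ, T ^ n) y), ?_⟩
    have h2 : ((1 - T) * ∑' n : ℕ, T ^ n) y = y := by
      rw [mul_neg_geom_series T hT1]; simp
    calc B (M⁻¹ • ((∑' n : ℕ, T ^ n) y)) = M⁻¹ • B ((∑' n : ℕ, T ^ n) y) := by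
          rw [ContinuousLinearMap.map_smul]
    _ = ((M⁻¹ • B) : H →L[ℝ] H) ((∑' n : ℕ, T ^ n) y) := by
          simp
    _ = ((1 - T) * ∑' n : ℕ, T ^ n) y := by rw [h1T]; rfl
    _ = y := h2
  refine ⟨hsurj, fun w hw => ?_⟩
  have hBw : B w = φ := hw
  -- w in terms of the geometric series
  have hw2 : w = M⁻¹ • ((∑' n : ℕ, T ^ n) φ) := by
    have h3 : ((∑' n : ℕ, T ^ n) * (1 - T)) w = w := by
      rw [geom_series_mul_neg T hT1]; simp
    calc w = ((∑' n : ℕ, T ^ n) * (1 - T)) w := h3.symm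
    _ = (∑' n : ℕ, T ^ n) ((1 - T) w) := rfl
    _ = (∑' n : ℕ, T ^ n) (M⁻¹ • φ) := by
        rw [h1T]
        congr 1
        simp only [ContinuousLinearMap.smul_apply]
        rw [hBw]
    _ = M⁻¹ • ((∑' n : ℕ, T ^ n) φ) := by rw [ContinuousLinearMap.map_smul]
  -- inner product as a series
  have happly : HasSum (fun n : ℕ => (T ^ n) φ) ((∑' n : ℕ, T ^ n) φ) := by
    have := hsummable.hasSum.mapL (ContinuousLinearMap.apply ℝ H φ)
    simpa using this
  have hinner : HasSum (fun n : ℕ => ⟪φ, (T ^ n) φ⟫) ⟪φ, (∑' n : ℕ, T ^ n) φ⟫ := by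
    have := happly.mapL (innerSL ℝ φ)
    simpa using this
  -- identify terms with integrals of polynomials
  set q : Polynomial ℝ := C 1 - C M⁻¹ * ((X - C u) ^ 2 + C (ε ^ 2)) with hq
  have haq : Polynomial.aeval A' q = T := by
    rw [hq]
    simp only [map_sub, map_mul, map_add, map_pow, aeval_X, aeval_C]
    rw [hTdef]
    congr 1
    · simp [Algebra.algebraMap_eq_smul_one]
    · rw [hBdef, hP]
      simp only [Algebra.algebraMap_eq_smul_one, smul_mul_assoc, one_mul,
        _root_.smul_pow, one_pow]
  have hterm : ∀ n : ℕ, ⟪φ, (T ^ n) φ⟫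
      = ∫ x, (1 - M⁻¹ * ((x - u) ^ 2 + ε ^ 2)) ^ n ∂μ' := by
    intro n
    have h4 := (poly_bridge A' φ μ' hm (q ^ n)).2
    rw [map_pow, haq] at h4
    rw [h4]
    congr 1
    funext x
    simp [hq, eval_pow]
  -- a.e. bounds on g
  set g : ℝ → ℝ := fun x => 1 - M⁻¹ * ((x - u) ^ 2 + ε ^ 2) with hg
  have hae : ∀ᵐ x ∂μ', 0 ≤ g x ∧ g x ≤ 1 - δ := by
    filter_upwards [ae_support A' φ hφ μ' hm] with x hx
    have hb1 : ε ^ 2 ≤ (x - u) ^ 2 + ε ^ 2 := by nlinarith [sq_nonneg (x - u)]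
    have hb2 : (x - u) ^ 2 + ε ^ 2 ≤ M := by
      have h5 : |x - u| ≤ ‖A'‖ + |u| := by
        calc |x - u| ≤ |x| + |u| := abs_sub _ _
        _ ≤ ‖A'‖ + |u| := by linarith
      have h6 : (x - u) ^ 2 ≤ (‖A'‖ + |u|) ^ 2 := by
        nlinarith [abs_nonneg (x - u), sq_abs (x - u)]
      have h7 : (0:ℝ) ≤ ‖B‖ := norm_nonneg B
      nlinarith
    have hMinv : (0:ℝ) < M⁻¹ := inv_pos.2 hM0
    constructor
    · have h8 : M⁻¹ * ((x - u) ^ 2 + ε ^ 2) ≤ M⁻¹ * M :=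
        mul_le_mul_of_nonneg_left hb2 hMinv.le
      rw [inv_mul_cancel₀ hM0.ne'] at h8
      simp only [hg, sub_nonneg]
      exact h8
    · have h9 : M⁻¹ * ε ^ 2 ≤ M⁻¹ * ((x - u) ^ 2 + ε ^ 2) :=
        mul_le_mul_of_nonneg_left hb1 hMinv.le
      simp only [hg, hδdef]
      rw [div_eq_inv_mul]
      linarith
  have haesm : ∀ n : ℕ, AEStronglyMeasurable (fun x => (g x) ^ n) μ' := by
    intro n
    apply Continuous.aestronglyMeasurable
    exact (continuous_const.sub (continuous_const.mul
      (((continuous_id.sub continuous_const).pow 2).add continuous_const))).pow n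
  have hlint : ∀ n : ℕ, ∫⁻ x, ‖(g x) ^ n‖₊ ∂μ' ≤ ENNReal.ofReal ((1 - δ) ^ n) := by
    intro n
    calc ∫⁻ x, ‖(g x) ^ n‖₊ ∂μ'
        ≤ ∫⁻ _, ENNReal.ofReal ((1 - δ) ^ n) ∂μ' := by
          apply lintegral_mono_ae
          filter_upwards [hae] with x hx
          have h10 : |g x ^ n| ≤ (1 - δ) ^ n := by
            rw [abs_pow]
            exact pow_le_pow_left₀ (abs_nonneg _)
              (by rw [abs_of_nonneg hx.1]; exact hx.2) n
          rw [← enorm_eq_nnnorm, Real.enorm_eq_ofReal_abs]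
          exact ENNReal.ofReal_le_ofReal h10
    _ = ENNReal.ofReal ((1 - δ) ^ n) := by simp
  have hsum_ne : (∑' n : ℕ, ∫⁻ x, ‖(g x) ^ n‖₊ ∂μ') ≠ ⊤ := by
    have h11 : (∑' n : ℕ, ENNReal.ofReal ((1 - δ) ^ n)) ≠ ⊤ := by
      rw [← ENNReal.ofReal_tsum_of_nonneg (fun n => pow_nonneg (by linarith) n)
        (summable_geometric_of_lt_one (by linarith) (by linarith))]
      exact ENNReal.ofReal_ne_top
    exact ne_top_of_le_ne_top h11 (ENNReal.tsum_le_tsum hlint)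
  have hswap := integral_tsum haesm hsum_ne
  have hptw : ∀ᵐ x ∂μ', ∑' n : ℕ, (g x) ^ n = M * ((x - u) ^ 2 + ε ^ 2)⁻¹ := by
    filter_upwards [hae] with x hx
    have habs : |g x| < 1 := by
      rw [abs_of_nonneg hx.1]; linarith
    rw [tsum_geometric_of_abs_lt_one habs]
    have h1g : 1 - g x = M⁻¹ * ((x - u) ^ 2 + ε ^ 2) := by
      simp only [hg]; ring
    rw [h1g, mul_inv, inv_inv]
  have hint_eq : ∫ x, (∑' n : ℕ, (g x) ^ n) ∂μ'
      = M * ∫ x, ((x - u) ^ 2 + ε ^ 2)⁻¹ ∂μ' := by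
    rw [integral_congr_ae hptw, MeasureTheory.integral_const_mul]
  have hsum_eq : ⟪φ, (∑' n : ℕ, T ^ n) φ⟫ = ∑' n : ℕ, ∫ x, (g x) ^ n ∂μ' := by
    rw [← hinner.tsum_eq]
    congr 1
    funext n
    exact hterm n
  rw [hw2, real_inner_smul_right, hsum_eq, ← hswap, hint_eq]
  rw [← mul_assoc, inv_mul_cancel₀ hM0.ne', one_mul]




set_option maxHeartbeats 1000000 in
lemma key (A : H →L[ℝ] H) (hA : IsSelfAdjoint A) (φ : H) (hφ : ‖φ‖ = 1)
    (μ : ℝ → Measure ℝ) (hprob : ∀ l : ℝ, IsProbabilityMeasure (μ l))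
    (hmom : ∀ (l : ℝ) (n : ℕ),
      Integrable (fun x : ℝ => x ^ n) (μ l) ∧
      ⟪φ, (((A + l • ((innerSL ℝ φ).smulRight φ)) ^ n) φ)⟫ = ∫ x, x ^ n ∂(μ l))
    (u ε : ℝ) (hε : 0 < ε) :
    ∃ p₀ q₀ : ℝ, 0 < p₀ ∧ ∀ l : ℝ,
      ∫ x, ((x - u) ^ 2 + ε ^ 2)⁻¹ ∂(μ l)
        = p₀ / ((1 + l * q₀) ^ 2 + l ^ 2 * ε ^ 2 * p₀ ^ 2) := by
  haveI := fun l => hprob l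
  have hsymA : ∀ x y : H, ⟪A x, y⟫ = ⟪x, A y⟫ := fun x y =>
    (ContinuousLinearMap.isSelfAdjoint_iff_isSymmetric.1 hA) x y
  set P : H →L[ℝ] H := (innerSL ℝ φ).smulRight φ with hPdef
  have hPapp : ∀ x : H, P x = ⟪φ, x⟫ • φ := fun x => rfl
  set Pop : H →L[ℝ] H := A - u • 1 with hPopdef
  have hPopapp : ∀ x : H, Pop x = A x - u • x := by intro x; simp [hPopdef]
  -- moments of the unperturbed operator
  have hm0 : ∀ n : ℕ, Integrable (fun x : ℝ => x ^ n) (μ 0) ∧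
      ⟪φ, (A ^ n) φ⟫ = ∫ x, x ^ n ∂(μ 0) := by
    intro n
    have h := hmom 0 n
    rwa [zero_smul, add_zero] at h
  obtain ⟨σ, hσ⟩ := (neumann_main A hsymA φ hφ (μ 0) hm0 u ε hε).1 φ
  have hσ' : Pop (Pop σ) + ε ^ 2 • σ = φ := by
    have : ((Pop ^ 2 + ε ^ 2 • (1 : H →L[ℝ] H)) σ) = Pop (Pop σ) + ε ^ 2 • σ := by
      simp [pow_two]
    rw [← this]; exact hσ
  set p₀ : ℝ := ⟪φ, σ⟫ with hp₀def
  set q₀ : ℝ := ⟪φ, Pop σ⟫ with hq₀def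
  have hσ0 : σ ≠ 0 := by
    intro h
    rw [h] at hσ
    simp only [map_zero] at hσ
    rw [← hσ] at hφ
    simp at hφ
  have hp₀pos : 0 < p₀ := by
    have h1 : p₀ = ⟪σ, Pop (Pop σ) + ε ^ 2 • σ⟫ := by
      rw [hp₀def, ← hσ', real_inner_comm]
    have h2 : ⟪σ, Pop (Pop σ) + ε ^ 2 • σ⟫ = ‖Pop σ‖ ^ 2 + ε ^ 2 * ‖σ‖ ^ 2 := by
      have hsymPop : ∀ x y : H, ⟪Pop x, y⟫ = ⟪x, Pop y⟫ := by
        intro x y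
        rw [hPopapp, hPopapp, inner_sub_left, inner_sub_right, hsymA,
          real_inner_smul_left, real_inner_smul_right]
      rw [inner_add_right, real_inner_smul_right, ← hsymPop σ (Pop σ),
        real_inner_self_eq_norm_sq, real_inner_self_eq_norm_sq]
    have h3 : 0 < ‖σ‖ ^ 2 := pow_pos (norm_pos_iff.2 hσ0) 2
    rw [h1, h2]
    nlinarith [sq_nonneg ‖Pop σ‖, mul_pos (pow_pos hε 2) h3]
  refine ⟨p₀, q₀, hp₀pos, fun l => ?_⟩
  set D : ℝ := (1 + l * q₀) ^ 2 + l ^ 2 * ε ^ 2 * p₀ ^ 2 with hDdef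
  have hD0 : 0 < D := by
    rcases eq_or_ne l 0 with h | h
    · simp [hDdef, h]
    · have hl2 : 0 < l ^ 2 := by rcases h.lt_or_gt with h' | h' <;> nlinarith
      have h1 : 0 < l ^ 2 * ε ^ 2 * p₀ ^ 2 :=
        mul_pos (mul_pos hl2 (pow_pos hε 2)) (pow_pos hp₀pos 2)
      nlinarith [sq_nonneg (1 + l * q₀)]
  set c₁ : ℝ := (1 + l * q₀) / D with hc₁def
  set c₂ : ℝ := -(l * ε * p₀) / D with hc₂def
  have s1 : c₁ + l * (c₁ * q₀ - c₂ * (ε * p₀)) = 1 := by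
    rw [hc₁def, hc₂def]; field_simp; rw [hDdef]; ring
  have s2 : c₂ + l * (c₁ * (ε * p₀) + c₂ * q₀) = 0 := by
    rw [hc₁def, hc₂def]; field_simp; ring
  have s3 : ε⁻¹ * (c₁ * (ε * p₀) + c₂ * q₀) = p₀ / D := by
    rw [hc₁def, hc₂def]; field_simp; ring
  set ψ₁ : H := Pop σ with hψ₁def
  set ψ₂ : H := ε • σ with hψ₂def
  set w₁ : H := c₁ • ψ₁ - c₂ • ψ₂ with hw₁def
  set w₂ : H := c₁ • ψ₂ + c₂ • ψ₁ with hw₂def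
  set Al : H →L[ℝ] H := A + l • P with hAldef
  have hPl : Al - u • (1 : H →L[ℝ] H) = Pop + l • P := by
    rw [hAldef, hPopdef]; abel
  have hPlapp : ∀ x : H, (Al - u • (1 : H →L[ℝ] H)) x = Pop x + l • (⟪φ, x⟫ • φ) := by
    intro x
    rw [hPl]
    simp [hPapp]
  -- basic images
  have f1 : Pop ψ₁ = φ - ε • ψ₂ := by
    rw [hψ₁def, hψ₂def, smul_smul]
    have : Pop (Pop σ) = φ - ε ^ 2 • σ := by
      rw [← hσ']; abel
    rw [this, pow_two]
  have f2 : Pop ψ₂ = ε • ψ₁ := by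
    rw [hψ₁def, hψ₂def, ContinuousLinearMap.map_smul]
  have g1 : ⟪φ, ψ₁⟫ = q₀ := rfl
  have g2 : ⟪φ, ψ₂⟫ = ε * p₀ := by
    rw [hψ₂def, real_inner_smul_right]
  clear_value ψ₁ ψ₂
  -- the two resolvent equations
  have e1 : (Al - u • (1 : H →L[ℝ] H)) w₁ + ε • w₂ = φ := by
    have h1 : (Al - u • (1 : H →L[ℝ] H)) w₁
        = Pop w₁ + l • (⟪φ, w₁⟫ • φ) := hPlapp w₁
    have h2 : Pop w₁ = c₁ • (φ - ε • ψ₂) - c₂ • (ε • ψ₁) := by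
      rw [hw₁def, map_sub, ContinuousLinearMap.map_smul, ContinuousLinearMap.map_smul,
        f1, f2]
    have h3 : ⟪φ, w₁⟫ = c₁ * q₀ - c₂ * (ε * p₀) := by
      rw [hw₁def, inner_sub_right, real_inner_smul_right, real_inner_smul_right, g1, g2]
    rw [h1, h2, h3, hw₂def]
    have expand : c₁ • (φ - ε • ψ₂) - c₂ • (ε • ψ₁)
        + l • ((c₁ * q₀ - c₂ * (ε * p₀)) • φ) + ε • (c₁ • ψ₂ + c₂ • ψ₁)
        = (c₁ + l * (c₁ * q₀ - c₂ * (ε * p₀))) • φ := by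
      module
    rw [expand, s1, one_smul]
  have e2 : (Al - u • (1 : H →L[ℝ] H)) w₂ = ε • w₁ := by
    have h1 : (Al - u • (1 : H →L[ℝ] H)) w₂
        = Pop w₂ + l • (⟪φ, w₂⟫ • φ) := hPlapp w₂
    have h2 : Pop w₂ = c₁ • (ε • ψ₁) + c₂ • (φ - ε • ψ₂) := by
      rw [hw₂def, map_add, ContinuousLinearMap.map_smul, ContinuousLinearMap.map_smul,
        f1, f2]
    have h3 : ⟪φ, w₂⟫ = c₁ * (ε * p₀) + c₂ * q₀ := by
      rw [hw₂def, inner_add_right, real_inner_smul_right, real_inner_smul_right, g1, g2]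
    rw [h1, h2, h3, hw₁def]
    have expand : c₁ • (ε • ψ₁) + c₂ • (φ - ε • ψ₂)
        + l • ((c₁ * (ε * p₀) + c₂ * q₀) • φ)
        = (c₂ + l * (c₁ * (ε * p₀) + c₂ * q₀)) • φ + ε • (c₁ • ψ₁ - c₂ • ψ₂) := by
      module
    rw [expand, s2, zero_smul, zero_add]
  -- B_l applied to w₂
  have hsymAl : ∀ x y : H, ⟪Al x, y⟫ = ⟪x, Al y⟫ := by
    intro x y
    rw [hAldef]
    simp only [ContinuousLinearMap.add_apply, ContinuousLinearMap.smul_apply,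
      inner_add_left, inner_add_right, real_inner_smul_left, real_inner_smul_right,
      hsymA, hPapp]
    rw [real_inner_comm x φ]
    ring
  have hBl : ((Al - u • (1 : H →L[ℝ] H)) ^ 2 + ε ^ 2 • (1 : H →L[ℝ] H)) (ε⁻¹ • w₂) = φ := by
    have h4 : ((Al - u • (1 : H →L[ℝ] H)) ^ 2 + ε ^ 2 • (1 : H →L[ℝ] H)) w₂
        = (Al - u • (1 : H →L[ℝ] H)) ((Al - u • (1 : H →L[ℝ] H)) w₂) + ε ^ 2 • w₂ := by
      simp [pow_two]
    have h5 : ((Al - u • (1 : H →L[ℝ] H)) ^ 2 + ε ^ 2 • (1 : H →L[ℝ] H)) w₂ = ε • φ := by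
      rw [h4, e2, ContinuousLinearMap.map_smul]
      have h6 : (Al - u • (1 : H →L[ℝ] H)) w₁ = φ - ε • w₂ := by
        rw [← e1]; abel
      rw [h6, smul_sub, smul_smul, ← pow_two]
      abel
    rw [ContinuousLinearMap.map_smul, h5, smul_smul, inv_mul_cancel₀ hε.ne', one_smul]
  have hval := (neumann_main Al hsymAl φ hφ (μ l) (hmom l) u ε hε).2 (ε⁻¹ • w₂) hBl
  rw [hval, real_inner_smul_right]
  have h6 : ⟪φ, w₂⟫ = c₁ * (ε * p₀) + c₂ * q₀ := by
    rw [hw₂def, inner_add_right, real_inner_smul_right, real_inner_smul_right, g1, g2]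
  rw [h6, s3]



lemma sublevel (α q s : ℝ) (hα : 0 < α) :
    ∃ x y : ℝ, x ≤ y ∧ {l : ℝ | α * l ^ 2 + 2 * q * l + 1 < s} = Ioo x y := by
  by_cases hΔ : 4 * q ^ 2 - 4 * α * (1 - s) ≤ 0
  · refine ⟨0, 0, le_rfl, ?_⟩
    ext l
    simp only [mem_setOf_eq, Ioo_self, mem_empty_iff_false, iff_false, not_lt]
    nlinarith [sq_nonneg (α * l + q), hα]
  · push_neg at hΔ
    set Δ : ℝ := 4 * q ^ 2 - 4 * α * (1 - s) with hΔdef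
    set r : ℝ := Real.sqrt Δ with hrdef
    have hr2 : r ^ 2 = Δ := Real.sq_sqrt hΔ.le
    have hr0 : 0 ≤ r := Real.sqrt_nonneg _
    refine ⟨(-2 * q - r) / (2 * α), (-2 * q + r) / (2 * α), ?_, ?_⟩
    · apply div_le_div_of_nonneg_right ?_ (by positivity) |>.trans_eq rfl
      · linarith
    · ext l
      simp only [mem_setOf_eq, mem_Ioo]
      set x : ℝ := (-2 * q - r) / (2 * α) with hx
      set y : ℝ := (-2 * q + r) / (2 * α) with hy
      have hxy : x ≤ y := by
        rw [hx, hy]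
        apply div_le_div_of_nonneg_right ?_ (by positivity) |>.trans_eq rfl
        · linarith
      have hfact : α * l ^ 2 + 2 * q * l + 1 - s = α * ((l - x) * (l - y)) := by
        rw [hx, hy]
        field_simp
        nlinarith [hr2]
      constructor
      · intro h
        have h2 : (l - x) * (l - y) < 0 := by
          by_contra h3
          push_neg at h3
          nlinarith
        rcases mul_neg_iff.1 h2 with ⟨h4, h5⟩ | ⟨h4, h5⟩
        · constructor <;> nlinarith
        · nlinarith
      · rintro ⟨h4, h5⟩
        nlinarith [mul_pos (sub_pos.2 h4) (sub_pos.2 (show l < y from h5))]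



set_option maxHeartbeats 1000000 in
lemma nu_bound (K : ℝ) (hK : 0 ≤ K) (ν : Measure ℝ)
    (hν : ∀ a b : ℝ, a ≤ b → ν (Icc a b) ≤ ENNReal.ofReal (K * (b - a)))
    (p₀ q₀ ε : ℝ) (hp₀ : 0 < p₀) (hε : 0 < ε) :
    ∫⁻ l, ENNReal.ofReal
        (2 * ε ^ 2 * (p₀ / ((1 + l * q₀) ^ 2 + l ^ 2 * ε ^ 2 * p₀ ^ 2))) ∂ν
      ≤ ENNReal.ofReal (2 * Real.pi * K * ε) := by
  set α : ℝ := q₀ ^ 2 + ε ^ 2 * p₀ ^ 2 with hαdef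
  set c : ℝ := ε * p₀ with hcdef
  have hc : 0 < c := mul_pos hε hp₀
  have hα : 0 < α := by rw [hαdef]; nlinarith [sq_nonneg q₀, mul_pos (pow_pos hε 2) (pow_pos hp₀ 2)]
  set D : ℝ → ℝ := fun l => (1 + l * q₀) ^ 2 + l ^ 2 * ε ^ 2 * p₀ ^ 2 with hDdef
  have hDquad : ∀ l, D l = α * l ^ 2 + 2 * q₀ * l + 1 := by
    intro l; rw [hDdef, hαdef]; ring
  have hDpos : ∀ l, 0 < D l := by
    intro l
    rcases eq_or_ne l 0 with h | h
    · simp [hDdef, h]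
    · have hl2 : 0 < l ^ 2 := by rcases h.lt_or_gt with h' | h' <;> nlinarith
      have h1 : 0 < l ^ 2 * ε ^ 2 * p₀ ^ 2 :=
        mul_pos (mul_pos hl2 (pow_pos hε 2)) (pow_pos hp₀ 2)
      show (0:ℝ) < (1 + l * q₀) ^ 2 + l ^ 2 * ε ^ 2 * p₀ ^ 2
      nlinarith [sq_nonneg (1 + l * q₀)]
  have hαD : ∀ l, α * D l = (α * l + q₀) ^ 2 + c ^ 2 := by
    intro l; rw [hDdef, hαdef, hcdef]; ring
  set G : ℝ → ℝ := fun l => 2 * ε ^ 2 * (p₀ / D l) with hGdef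
  have hGpos : ∀ l, 0 < G l := by
    intro l
    have := hDpos l
    rw [hGdef]
    positivity
  have hGcont : Continuous G := by
    rw [hGdef]
    refine continuous_const.mul (continuous_const.div ?_ fun l => (hDpos l).ne')
    rw [hDdef]; fun_prop
  have hGl : ∀ l, G l = 2 * ε ^ 2 * p₀ / D l := by
    intro l
    show 2 * ε ^ 2 * (p₀ / D l) = _
    rw [mul_div_assoc]
  suffices hmain : ∫⁻ l, ENNReal.ofReal (G l) ∂ν ≤ ENNReal.ofReal (2 * Real.pi * K * ε) by
    exact hmain
  clear_value α c D G
  -- layercake for ν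
  have hlayer_ν : ∫⁻ l, ENNReal.ofReal (G l) ∂ν
      = ∫⁻ t in Ioi (0:ℝ), ν {l : ℝ | t < G l} :=
    lintegral_eq_lintegral_meas_lt ν
      (Filter.Eventually.of_forall fun l => (hGpos l).le)
      hGcont.measurable.aemeasurable
  have hlayer_vol : ∫⁻ l, ENNReal.ofReal (G l)
      = ∫⁻ t in Ioi (0:ℝ), volume {l : ℝ | t < G l} :=
    lintegral_eq_lintegral_meas_lt volume
      (Filter.Eventually.of_forall fun l => (hGpos l).le)
      hGcont.measurable.aemeasurable
  -- pointwise comparison of level-set measures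
  have hcomp : ∀ t : ℝ, 0 < t →
      ν {l : ℝ | t < G l} ≤ ENNReal.ofReal K * volume {l : ℝ | t < G l} := by
    intro t ht
    have hset : {l : ℝ | t < G l}
        = {l : ℝ | α * l ^ 2 + 2 * q₀ * l + 1 < 2 * ε ^ 2 * p₀ / t} := by
      ext l
      simp only [mem_setOf_eq]
      rw [← hDquad l]
      rw [hGl l]
      rw [lt_div_iff₀ (hDpos l), lt_div_iff₀ ht]
      constructor
      · intro h; nlinarith
      · intro h; nlinarith
    obtain ⟨x, y, hxy, hIoo⟩ := sublevel α q₀ (2 * ε ^ 2 * p₀ / t) hα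
    rw [hset, hIoo]
    calc ν (Ioo x y) ≤ ν (Icc x y) := measure_mono Ioo_subset_Icc_self
    _ ≤ ENNReal.ofReal (K * (y - x)) := hν x y hxy
    _ = ENNReal.ofReal K * ENNReal.ofReal (y - x) := ENNReal.ofReal_mul hK
    _ = ENNReal.ofReal K * volume (Ioo x y) := by rw [Real.volume_Ioo]
  -- integrability and value of ∫ G
  set F : ℝ → ℝ := fun y => (1 + y ^ 2)⁻¹ with hFdef
  have hFint : Integrable F := integrable_inv_one_add_sq
  set N : ℝ := 2 * ε ^ 2 * p₀ * α / c ^ 2 with hNdef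
  have hGW : G = fun l => N * F (c⁻¹ * (α * l + q₀)) := by
    funext l
    have h1 : F (c⁻¹ * (α * l + q₀)) = c ^ 2 / ((α * l + q₀) ^ 2 + c ^ 2) := by
      show (1 + (c⁻¹ * (α * l + q₀)) ^ 2)⁻¹ = _
      rw [show (1 + (c⁻¹ * (α * l + q₀)) ^ 2) = ((α * l + q₀) ^ 2 + c ^ 2) / c ^ 2 by
        field_simp; ring]
      rw [inv_div]
    rw [hGl l, h1, ← hαD l]
    have hc2 : (c:ℝ) ^ 2 ≠ 0 := by positivity
    have hDl : D l ≠ 0 := (hDpos l).ne'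
    field_simp
    rw [hNdef]
    field_simp
  have hWint : Integrable (fun l => N * F (c⁻¹ * (α * l + q₀))) := by
    refine Integrable.const_mul ?_ N
    have h2 : Integrable (fun z : ℝ => F (c⁻¹ * z)) :=
      hFint.comp_mul_left' (inv_ne_zero hc.ne')
    have h3 : Integrable (fun z : ℝ => F (c⁻¹ * (z + q₀))) := h2.comp_add_right q₀
    exact h3.comp_mul_left' hα.ne'
  have hGint : Integrable G := by rw [hGW]; exact hWint
  have hGval : ∫ l, G l = 2 * Real.pi * ε := by
    rw [hGW]
    rw [MeasureTheory.integral_const_mul]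
    have h4 : ∫ l : ℝ, F (c⁻¹ * (α * l + q₀))
        = |α⁻¹| • ∫ z : ℝ, F (c⁻¹ * (z + q₀)) := by
      exact MeasureTheory.Measure.integral_comp_mul_left (fun z => F (c⁻¹ * (z + q₀))) α
    have h5 : ∫ z : ℝ, F (c⁻¹ * (z + q₀)) = ∫ z : ℝ, F (c⁻¹ * z) := by
      exact integral_add_right_eq_self (fun z => F (c⁻¹ * z)) q₀
    have h6 : ∫ z : ℝ, F (c⁻¹ * z) = |(c⁻¹)⁻¹| • ∫ y : ℝ, F y :=
      MeasureTheory.Measure.integral_comp_mul_left F c⁻¹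
    have h7 : ∫ y : ℝ, F y = Real.pi := integral_univ_inv_one_add_sq
    rw [h4, h5, h6, h7]
    rw [inv_inv, abs_of_pos hc, abs_of_pos (inv_pos.2 hα)]
    rw [hNdef, smul_eq_mul, smul_eq_mul, hcdef]
    have hεp : ε * p₀ ≠ 0 := by rw [← hcdef]; exact hc.ne'
    field_simp
  -- put everything together
  calc ∫⁻ l, ENNReal.ofReal (G l) ∂ν
      = ∫⁻ t in Ioi (0:ℝ), ν {l : ℝ | t < G l} := hlayer_ν
  _ ≤ ∫⁻ t in Ioi (0:ℝ), ENNReal.ofReal K * volume {l : ℝ | t < G l} := by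
      refine setLIntegral_mono' measurableSet_Ioi fun t ht => hcomp t ht
  _ = ENNReal.ofReal K * ∫⁻ t in Ioi (0:ℝ), volume {l : ℝ | t < G l} :=
      lintegral_const_mul' _ _ ENNReal.ofReal_ne_top
  _ = ENNReal.ofReal K * ∫⁻ l, ENNReal.ofReal (G l) := by rw [← hlayer_vol]
  _ = ENNReal.ofReal K * ENNReal.ofReal (∫ l, G l) := by
      rw [ofReal_integral_eq_lintegral_ofReal hGint
        (Filter.Eventually.of_forall fun l => (hGpos l).le)]
  _ = ENNReal.ofReal (2 * Real.pi * K * ε) := by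
      rw [hGval, ← ENNReal.ofReal_mul hK]
      ring_nf



lemma meas_le (μ' : Measure ℝ) [IsProbabilityMeasure μ'] (u ε : ℝ) (hε : 0 < ε) :
    μ' (Icc (u - ε) (u + ε))
      ≤ ENNReal.ofReal (2 * ε ^ 2 * ∫ x, ((x - u) ^ 2 + ε ^ 2)⁻¹ ∂μ') := by
  set f : ℝ → ℝ := fun x => 2 * ε ^ 2 * ((x - u) ^ 2 + ε ^ 2)⁻¹ with hfdef
  have hbpos : ∀ x : ℝ, 0 < (x - u) ^ 2 + ε ^ 2 := fun x => by positivity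
  have hcont : Continuous f := by
    rw [hfdef]
    exact continuous_const.mul
      ((((continuous_id.sub continuous_const).pow 2).add continuous_const).inv₀
        fun x => (hbpos x).ne')
  have hfnn : ∀ x, 0 ≤ f x := fun x => by
    have := hbpos x
    rw [hfdef]
    positivity
  have hint : Integrable f μ' := by
    refine Integrable.mono' (integrable_const (2:ℝ)) hcont.aestronglyMeasurable ?_
    filter_upwards with x
    rw [Real.norm_eq_abs, abs_of_nonneg (hfnn x)]
    have hb : ε ^ 2 ≤ (x - u) ^ 2 + ε ^ 2 := by nlinarith [sq_nonneg (x - u)]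
    have h2 : ((x - u) ^ 2 + ε ^ 2)⁻¹ ≤ (ε ^ 2)⁻¹ :=
      inv_anti₀ (pow_pos hε 2) hb
    have h3 : (0:ℝ) < ε ^ 2 := pow_pos hε 2
    calc f x ≤ 2 * ε ^ 2 * (ε ^ 2)⁻¹ := by
          rw [hfdef]
          exact mul_le_mul_of_nonneg_left h2 (by positivity)
    _ = 2 := by field_simp
  calc μ' (Icc (u - ε) (u + ε)) = ∫⁻ x in Icc (u - ε) (u + ε), 1 ∂μ' :=
        (setLIntegral_one _).symm
  _ ≤ ∫⁻ x in Icc (u - ε) (u + ε), ENNReal.ofReal (f x) ∂μ' := by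
      refine setLIntegral_mono' measurableSet_Icc fun x hx => ?_
      have h4 : (x - u) ^ 2 ≤ ε ^ 2 := by
        have h5 : |x - u| ≤ ε := by
          rw [abs_le]; constructor <;> [linarith [hx.1]; linarith [hx.2]]
        nlinarith [abs_nonneg (x - u), sq_abs (x - u)]
      refine ENNReal.one_le_ofReal.2 ?_
      rw [hfdef]
      rw [show (1:ℝ) = ((x - u) ^ 2 + ε ^ 2) * ((x - u) ^ 2 + ε ^ 2)⁻¹ by
        rw [mul_inv_cancel₀ (hbpos x).ne']]
      exact mul_le_mul_of_nonneg_right (by nlinarith) (by positivity)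
  _ ≤ ∫⁻ x, ENNReal.ofReal (f x) ∂μ' := setLIntegral_le_lintegral _ _
  _ = ENNReal.ofReal (∫ x, f x ∂μ') :=
      (ofReal_integral_eq_lintegral_ofReal hint
        (Filter.Eventually.of_forall hfnn)).symm
  _ = ENNReal.ofReal (2 * ε ^ 2 * ∫ x, ((x - u) ^ 2 + ε ^ 2)⁻¹ ∂μ') := by
      rw [hfdef, MeasureTheory.integral_const_mul]


end Stmt12Aux
/-- If `ν` is uniformly `1`-Hölder continuous with constant `K`, then the averaged measure
`κ(B) = ∫ μ_λ(B) dν(λ)` is uniformly `1`-Hölder continuous with a constant depending only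
on `K`. -/
theorem stmt_12 (K : ℝ) :
    ∃ K' : ℝ, ∀ (H : Type) (_ : NormedAddCommGroup H),
      ∀ (_ : @InnerProductSpace ℝ H _ _), ∀ (_ : CompleteSpace H),
      ∀ (A : H →L[ℝ] H), IsSelfAdjoint A → ∀ φ : H, ‖φ‖ = 1 →
      ∀ μ : ℝ → Measure ℝ, (∀ l : ℝ, IsProbabilityMeasure (μ l)) →
      (∀ (l : ℝ) (n : ℕ),
        Integrable (fun x : ℝ => x ^ n) (μ l) ∧
        ⟪φ, (((A + l • ((innerSL ℝ φ).smulRight φ)) ^ n) φ)⟫ = ∫ x, x ^ n ∂(μ l)) →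
      ∀ ν : Measure ℝ,
      (∀ a b : ℝ, a ≤ b → ν (Set.Icc a b) ≤ ENNReal.ofReal (K * (b - a))) →
      ∀ a b : ℝ, a ≤ b →
        (∫⁻ l, μ l (Set.Icc a b) ∂ν) ≤ ENNReal.ofReal (K' * (b - a)) := by
  refine ⟨Real.pi * max K 0 + 1, ?_⟩
  intro H hNorm hInner hComp A hA φ hφ μ hprob hmom ν hν a b hab
  haveI := fun l : ℝ => hprob l
  set Kp : ℝ := max K 0 with hKpdef
  have hKp0 : 0 ≤ Kp := le_max_right K 0
  have hπ : 0 < Real.pi := Real.pi_pos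
  have hν' : ∀ x y : ℝ, x ≤ y → ν (Set.Icc x y) ≤ ENNReal.ofReal (Kp * (y - x)) := by
    intro x y hxy
    refine (hν x y hxy).trans (ENNReal.ofReal_le_ofReal ?_)
    have h1 : K ≤ Kp := le_max_left K 0
    nlinarith
  have est : ∀ u ε : ℝ, 0 < ε →
      (∫⁻ l, μ l (Set.Icc (u - ε) (u + ε)) ∂ν)
        ≤ ENNReal.ofReal (2 * Real.pi * Kp * ε) := by
    intro u ε hε
    obtain ⟨p₀, q₀, hp₀, hval⟩ := Stmt12Aux.key A hA φ hφ μ hprob hmom u ε hε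
    calc (∫⁻ l, μ l (Set.Icc (u - ε) (u + ε)) ∂ν)
        ≤ ∫⁻ l, ENNReal.ofReal (2 * ε ^ 2 *
            (p₀ / ((1 + l * q₀) ^ 2 + l ^ 2 * ε ^ 2 * p₀ ^ 2))) ∂ν := by
          refine lintegral_mono fun l => ?_
          have h1 := Stmt12Aux.meas_le (μ l) u ε hε
          rwa [hval l] at h1
    _ ≤ ENNReal.ofReal (2 * Real.pi * Kp * ε) :=
          Stmt12Aux.nu_bound Kp hKp0 ν hν' p₀ q₀ ε hp₀ hε
  rcases lt_or_eq_of_le hab with hlt | heq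
  · have h2 := est ((a + b) / 2) ((b - a) / 2) (by linarith)
    have h3 : Set.Icc a b
        = Set.Icc ((a + b) / 2 - (b - a) / 2) ((a + b) / 2 + (b - a) / 2) := by
      congr 1 <;> ring
    rw [← h3] at h2
    refine h2.trans (ENNReal.ofReal_le_ofReal ?_)
    nlinarith
  · subst heq
    simp only [sub_self, mul_zero, ENNReal.ofReal_zero]
    refine ENNReal.le_of_forall_pos_le_add fun η hη _ => ?_
    rw [zero_add]
    have hden : (0:ℝ) < 2 * Real.pi * Kp + 1 := by nlinarith
    set δ : ℝ := (η : ℝ) / (2 * Real.pi * Kp + 1) with hδdef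
    have hδ0 : 0 < δ := by
      rw [hδdef]
      have : (0:ℝ) < (η : ℝ) := hη
      positivity
    calc (∫⁻ l, μ l (Set.Icc a a) ∂ν)
        ≤ ∫⁻ l, μ l (Set.Icc (a - δ) (a + δ)) ∂ν :=
          lintegral_mono fun l =>
            measure_mono (Set.Icc_subset_Icc (by linarith) (by linarith))
    _ ≤ ENNReal.ofReal (2 * Real.pi * Kp * δ) := est a δ hδ0
    _ ≤ ((η : NNReal) : ENNReal) := by
        rw [← ENNReal.ofReal_coe_nnreal]
        refine ENNReal.ofReal_le_ofReal ?_
        rw [hδdef]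
        rw [div_eq_inv_mul, ← mul_assoc]
        have h4 : 2 * Real.pi * Kp * (2 * Real.pi * Kp + 1)⁻¹ ≤ 1 := by
          rw [mul_inv_le_iff₀ hden]
          nlinarith
        have h5 : 2 * Real.pi * Kp * (2 * Real.pi * Kp + 1)⁻¹ * (η:ℝ)
            ≤ 1 * (η:ℝ) :=
          mul_le_mul_of_nonneg_right h4 (by positivity)
        linarith
end

section
/- Let η be a probability Borel measure on ℝ. Then for all x ∈ ℝ and ε > 0, max{ P_η(x+iε), |Q_η(x+iε)| } ≤ (2/ε) Σ_{n=0}^∞ 2^{−n} η((x − 2^{n+1}ε, x + 2^{n+1}ε)), where P_η(x+iε) = ∫ ε/((y−x)²+ε²) dη(y) and Q_η(x+iε) = ∫ (y−x)/((y−x)²+ε²) dη(y). -/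
open MeasureTheory Set

private lemma aux_main (η : Measure ℝ) [IsProbabilityMeasure η] (x ε : ℝ) (hε : 0 < ε)
    (f : ℝ → ℝ) (hfc : Continuous f) (hf0 : ∀ y, 0 ≤ f y)
    (hf1 : ∀ y, f y ≤ 1 / ε) (hf2 : ∀ y, y ≠ x → f y ≤ 1 / |y - x|) :
    ∫ y, f y ∂η ≤ (2 / ε) * ∑' n : ℕ, (2 : ℝ) ^ (-(n : ℤ)) *
        (η (Set.Ioo (x - 2 ^ (n + 1) * ε) (x + 2 ^ (n + 1) * ε))).toReal := by
  set I : ℕ → Set ℝ := fun n => Set.Ioo (x - 2 ^ (n + 1) * ε) (x + 2 ^ (n + 1) * ε) with hI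
  have hImeas : ∀ n, MeasurableSet (I n) := fun n => measurableSet_Ioo
  have hmem : ∀ (y : ℝ) (n : ℕ), |y - x| < 2 ^ (n + 1) * ε → y ∈ I n := by
    intro y n h
    rw [abs_lt] at h
    exact ⟨by linarith [h.1], by linarith [h.2]⟩
  have hc : ∀ n : ℕ, (0:ℝ) ≤ (2 : ℝ) ^ (-(n : ℤ)) / ε :=
    fun n => div_nonneg (zpow_nonneg (by norm_num) _) hε.le
  have hpt : ∀ y, ENNReal.ofReal (f y) ≤
      ∑' n : ℕ, (I n).indicator (fun _ => ENNReal.ofReal ((2 : ℝ) ^ (-(n : ℤ)) / ε)) y := by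
    intro y
    obtain ⟨m, hym, hfm⟩ : ∃ m : ℕ, y ∈ I m ∧ f y ≤ (2 : ℝ) ^ (-(m : ℤ)) / ε := by
      rcases lt_or_ge (|y - x|) (2 * ε) with h | h
      · refine ⟨0, hmem y 0 (by norm_num; linarith), ?_⟩
        simpa using hf1 y
      · have hyx : y ≠ x := by
          intro hxy
          rw [hxy, sub_self, abs_zero] at h
          linarith
        set r := |y - x| / ε with hr
        have hr2 : (2:ℝ) ≤ r := (le_div_iff₀ hε).2 (by linarith)
        set N := ⌊r⌋₊ with hN
        have hN2 : 2 ≤ N := Nat.le_floor (by exact_mod_cast hr2)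
        set m := Nat.log 2 N with hm
        have h1 : (2:ℕ) ^ m ≤ N := Nat.pow_log_le_self 2 (by omega)
        have h2 : N < 2 ^ (m + 1) := Nat.lt_pow_succ_log_self (by norm_num) N
        have hNr : (N:ℝ) ≤ r := Nat.floor_le (by positivity)
        have hrN : r < N + 1 := Nat.lt_floor_add_one r
        have hyx2 : |y - x| = r * ε := by rw [hr, div_mul_cancel₀ _ hε.ne']
        have h1' : ((2:ℝ) ^ m) ≤ (N:ℝ) := by exact_mod_cast h1
        have h2' : ((N:ℝ) + 1) ≤ 2 ^ (m + 1) := by exact_mod_cast Nat.succ_le_of_lt h2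
        have hlow : (2:ℝ) ^ m * ε ≤ |y - x| := by
          rw [hyx2]
          have : (2:ℝ) ^ m ≤ r := h1'.trans hNr
          nlinarith
        have hup : |y - x| < 2 ^ (m + 1) * ε := by
          rw [hyx2]
          have : r < 2 ^ (m + 1) := lt_of_lt_of_le hrN h2'
          nlinarith
        refine ⟨m, hmem y m hup, ?_⟩
        have hstep : 1 / |y - x| ≤ 1 / ((2:ℝ) ^ m * ε) :=
          one_div_le_one_div_of_le (by positivity) hlow
        refine (hf2 y hyx).trans (hstep.trans (le_of_eq ?_))
        rw [zpow_neg, zpow_natCast]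
        field_simp
    calc ENNReal.ofReal (f y)
        ≤ (I m).indicator (fun _ => ENNReal.ofReal ((2:ℝ) ^ (-(m:ℤ)) / ε)) y := by
          rw [Set.indicator_of_mem hym]
          exact ENNReal.ofReal_le_ofReal hfm
      _ ≤ _ := ENNReal.le_tsum m
  have hfms : AEStronglyMeasurable f η := hfc.aestronglyMeasurable
  rw [integral_eq_lintegral_of_nonneg_ae (Filter.Eventually.of_forall hf0) hfms]
  set S : ENNReal := ∑' n : ℕ, ENNReal.ofReal ((2:ℝ) ^ (-(n:ℤ)) / ε) * η (I n) with hS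
  have hlin : ∫⁻ y, ENNReal.ofReal (f y) ∂η ≤ S := by
    calc ∫⁻ y, ENNReal.ofReal (f y) ∂η
        ≤ ∫⁻ y, ∑' n : ℕ, (I n).indicator (fun _ => ENNReal.ofReal ((2:ℝ) ^ (-(n:ℤ)) / ε)) y ∂η :=
          lintegral_mono hpt
      _ = ∑' n : ℕ, ∫⁻ y, (I n).indicator (fun _ => ENNReal.ofReal ((2:ℝ) ^ (-(n:ℤ)) / ε)) y ∂η :=
          lintegral_tsum (fun n => (measurable_const.indicator (hImeas n)).aemeasurable)
      _ = S := by
          refine tsum_congr fun n => ?_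
          rw [lintegral_indicator_const (hImeas n)]
  have hsum : Summable (fun n : ℕ => (2:ℝ) ^ (-(n:ℤ)) / ε) := by
    have hgeo : Summable (fun n : ℕ => ((2:ℝ)⁻¹) ^ n) :=
      summable_geometric_of_lt_one (by norm_num) (by norm_num)
    have := hgeo.div_const ε
    refine this.congr fun n => ?_
    rw [zpow_neg, zpow_natCast, inv_pow]
  have hSfin : S ≠ ⊤ := by
    have hb : S ≤ ∑' n : ℕ, ENNReal.ofReal ((2:ℝ) ^ (-(n:ℤ)) / ε) := by
      refine ENNReal.tsum_le_tsum fun n => ?_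
      calc ENNReal.ofReal ((2:ℝ) ^ (-(n:ℤ)) / ε) * η (I n)
          ≤ ENNReal.ofReal ((2:ℝ) ^ (-(n:ℤ)) / ε) * 1 :=
            mul_le_mul_right prob_le_one _
        _ = _ := mul_one _
    have hne : (∑' n : ℕ, ENNReal.ofReal ((2:ℝ) ^ (-(n:ℤ)) / ε)) ≠ ⊤ := by
      rw [← ENNReal.ofReal_tsum_of_nonneg hc hsum]
      exact ENNReal.ofReal_ne_top
    exact ne_top_of_le_ne_top hne hb
  refine (ENNReal.toReal_mono hSfin hlin).trans ?_
  have hterm : ∀ n : ℕ, (ENNReal.ofReal ((2:ℝ) ^ (-(n:ℤ)) / ε) * η (I n)).toReal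
      = (1/ε) * ((2:ℝ) ^ (-(n:ℤ)) * (η (I n)).toReal) := by
    intro n
    rw [ENNReal.toReal_mul, ENNReal.toReal_ofReal (hc n)]
    ring
  have hStR : S.toReal = (1/ε) * ∑' n : ℕ, (2:ℝ) ^ (-(n:ℤ)) * (η (I n)).toReal := by
    rw [hS, ENNReal.tsum_toReal_eq
      (fun n => ENNReal.mul_ne_top ENNReal.ofReal_ne_top (measure_ne_top η _))]
    rw [tsum_congr hterm, tsum_mul_left]
  rw [hStR]
  have hT : 0 ≤ ∑' n : ℕ, (2:ℝ) ^ (-(n:ℤ)) * (η (I n)).toReal :=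
    tsum_nonneg fun n => mul_nonneg (zpow_nonneg (by norm_num) _) ENNReal.toReal_nonneg
  exact mul_le_mul_of_nonneg_right ((div_le_div_iff_of_pos_right hε).2 one_le_two) hT

theorem stmt_15 (η : Measure ℝ) [IsProbabilityMeasure η] (x ε : ℝ) (hε : 0 < ε) :
    max (∫ y, ε / ((y - x) ^ 2 + ε ^ 2) ∂η) |∫ y, (y - x) / ((y - x) ^ 2 + ε ^ 2) ∂η|
      ≤ (2 / ε) * ∑' n : ℕ, (2 : ℝ) ^ (-(n : ℤ)) *
          (η (Set.Ioo (x - 2 ^ (n + 1) * ε) (x + 2 ^ (n + 1) * ε))).toReal := by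
  have hden : ∀ y : ℝ, 0 < (y - x) ^ 2 + ε ^ 2 := fun y => by positivity
  apply max_le
  · refine aux_main η x ε hε _ ?_ ?_ ?_ ?_
    · exact continuous_const.div (by continuity) (fun y => (hden y).ne')
    · exact fun y => div_nonneg hε.le (hden y).le
    · intro y
      rw [div_le_div_iff₀ (hden y) hε]
      nlinarith [sq_nonneg (y - x)]
    · intro y hy
      have h0 : 0 < |y - x| := abs_pos.2 (sub_ne_zero.2 hy)
      rw [div_le_div_iff₀ (hden y) h0]
      nlinarith [sq_nonneg (|y - x| - ε), sq_abs (y - x), abs_nonneg (y - x)]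
  · have habs : |∫ y, (y - x) / ((y - x) ^ 2 + ε ^ 2) ∂η|
        ≤ ∫ y, |(y - x) / ((y - x) ^ 2 + ε ^ 2)| ∂η := by
      simpa [Real.norm_eq_abs] using
        norm_integral_le_integral_norm (μ := η) (fun y => (y - x) / ((y - x) ^ 2 + ε ^ 2))
    refine habs.trans ?_
    refine aux_main η x ε hε _ ?_ ?_ ?_ ?_
    · exact ((continuous_id.sub continuous_const).div (by continuity)
        (fun y => (hden y).ne')).abs
    · exact fun y => abs_nonneg _
    · intro y
      rw [abs_div, abs_of_pos (hden y), div_le_div_iff₀ (hden y) hε]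
      nlinarith [sq_nonneg (|y - x| - ε), sq_abs (y - x), abs_nonneg (y - x)]
    · intro y hy
      have h0 : 0 < |y - x| := abs_pos.2 (sub_ne_zero.2 hy)
      rw [abs_div, abs_of_pos (hden y), div_le_div_iff₀ (hden y) h0]
      nlinarith [sq_abs (y - x)]
end

section
/- Let μ be a Borel probability measure on ℝ, 0 < β < 1, and x ∈ ℝ with M_μ(x;δ) ≤ Λ δ^β for all δ > 0. Then |F_μ(x+iε)| ≤ (2/ε) Σ_{n=0}^∞ 2^{−n} M_μ(x; 2^{n+1}ε) ≤ Λ · 2^{2+β} (1 − 2^{β−1})^{-1} ε^{β−1} for all ε > 0, where F_μ is the Borel transform. -/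
open MeasureTheory Set
open scoped ENNReal

private lemma pow_calc (β ε : ℝ) (hε : 0 < ε) (n : ℕ) :
    (2:ℝ) ^ (-(n:ℤ)) * ((2:ℝ) ^ (n+1) * ε) ^ β
      = (2:ℝ) ^ β * ((2:ℝ) ^ (β-1)) ^ n * ε ^ β := by
  have h2 : (0:ℝ) < 2 := by norm_num
  rw [Real.mul_rpow (by positivity) hε.le,
    ← Real.rpow_natCast (2:ℝ) (n+1),
    ← Real.rpow_intCast (2:ℝ) (-(n:ℤ)),
    ← Real.rpow_natCast ((2:ℝ) ^ (β-1)) n,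
    ← Real.rpow_mul h2.le, ← Real.rpow_mul h2.le,
    ← mul_assoc, ← Real.rpow_add h2, ← Real.rpow_add h2]
  congr 2
  push_cast
  ring

theorem stmt_16 (μ : Measure ℝ) [IsProbabilityMeasure μ] (β Λ : ℝ)
    (hβ0 : 0 < β) (hβ1 : β < 1) (x : ℝ)
    (hM : ∀ δ : ℝ, 0 < δ → (μ (Set.Ioo (x - δ) (x + δ))).toReal ≤ Λ * δ ^ β) :
    ∀ ε : ℝ, 0 < ε →
      ‖∫ y, ((y : ℂ) - (x + ε * Complex.I))⁻¹ ∂μ‖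
          ≤ (2 / ε) * ∑' n : ℕ, (2 : ℝ) ^ (-(n : ℤ)) *
              (μ (Set.Ioo (x - 2 ^ (n + 1) * ε) (x + 2 ^ (n + 1) * ε))).toReal ∧
      (2 / ε) * ∑' n : ℕ, (2 : ℝ) ^ (-(n : ℤ)) *
            (μ (Set.Ioo (x - 2 ^ (n + 1) * ε) (x + 2 ^ (n + 1) * ε))).toReal
          ≤ Λ * (2 : ℝ) ^ ((2 : ℝ) + β) * (1 - (2 : ℝ) ^ (β - 1))⁻¹ * ε ^ (β - 1) := by
  intro ε hε
  set z : ℂ := (x : ℂ) + ε * Complex.I with hz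
  set Io : ℕ → Set ℝ := fun n => Set.Ioo (x - 2 ^ (n + 1) * ε) (x + 2 ^ (n + 1) * ε) with hIo
  -- constants
  have hΛ : 0 ≤ Λ := by
    have := hM 1 one_pos
    have h0 : (0:ℝ) ≤ (μ (Set.Ioo (x - 1) (x + 1))).toReal := ENNReal.toReal_nonneg
    simpa [Real.one_rpow] using le_trans h0 this
  have hr0 : (0:ℝ) ≤ (2:ℝ) ^ (β - 1) := Real.rpow_nonneg (by norm_num) _
  have hr1 : (2:ℝ) ^ (β - 1) < 1 :=
    Real.rpow_lt_one_of_one_lt_of_neg (by norm_num) (by linarith)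
  -- the real series terms
  set t : ℕ → ℝ := fun n => (2 : ℝ) ^ (-(n : ℤ)) * (μ (Io n)).toReal with ht
  have ht_nonneg : ∀ n, 0 ≤ t n := fun n => by
    apply mul_nonneg (by positivity) ENNReal.toReal_nonneg
  have hμ1 : ∀ n, (μ (Io n)).toReal ≤ 1 := fun n => by
    rw [← ENNReal.toReal_one]
    exact ENNReal.toReal_mono ENNReal.one_ne_top prob_le_one
  have ht_le : ∀ n, t n ≤ (1/2 : ℝ) ^ n := fun n => by
    have : (2:ℝ) ^ (-(n:ℤ)) = (1/2:ℝ)^n := by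
      rw [zpow_neg, zpow_natCast]; simp [one_div, inv_pow]
    rw [ht]; simp only []
    calc (2 : ℝ) ^ (-(n : ℤ)) * (μ (Io n)).toReal
        ≤ (2 : ℝ) ^ (-(n : ℤ)) * 1 := by
          apply mul_le_mul_of_nonneg_left (hμ1 n) (by positivity)
      _ = (1/2:ℝ)^n := by rw [mul_one, this]
  have ht_summable : Summable t :=
    Summable.of_nonneg_of_le ht_nonneg ht_le
      (summable_geometric_of_lt_one (by norm_num) (by norm_num))
  constructor
  · -- first inequality
    -- pointwise bound in ℝ≥0∞
    set c : ℕ → ℝ≥0∞ := fun n => ENNReal.ofReal ((2/ε) * ((2:ℝ)^n)⁻¹) with hc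
    set g : ℕ → ℝ → ℝ≥0∞ := fun n => (Io n).indicator (fun _ => c n) with hg
    have hIomeas : ∀ n, MeasurableSet (Io n) := fun n => measurableSet_Ioo
    have hpoint : ∀ y : ℝ,
        ENNReal.ofReal ‖((y : ℂ) - z)⁻¹‖ ≤ ∑' n, g n y := by
      intro y
      have hex : ∃ n : ℕ, |y - x| < 2 ^ (n + 1) * ε := by
        obtain ⟨n, hn⟩ := pow_unbounded_of_one_lt (|y - x| / ε) (by norm_num : (1:ℝ) < 2)
        exact ⟨n, by
          have : |y - x| < 2 ^ n * ε := by
            rw [div_lt_iff₀ hε] at hn; linarith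
          have h2 : (2:ℝ) ^ n * ε ≤ 2 ^ (n+1) * ε := by
            apply mul_le_mul_of_nonneg_right _ hε.le
            exact pow_le_pow_right₀ (by norm_num) (Nat.le_succ n)
          linarith⟩
      set k := Nat.find hex with hk
      have hks : |y - x| < 2 ^ (k + 1) * ε := Nat.find_spec hex
      have hmem : y ∈ Io k := by
        rw [hIo]
        constructor <;> [skip; skip] <;> cases' abs_lt.mp hks with h1 h2 <;> linarith
      have hlow : (2:ℝ) ^ k * ε ≤ ‖(y : ℂ) - z‖ := by
        rcases Nat.eq_zero_or_pos k with h0 | hpos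
        · have : |((y:ℂ) - z).im| ≤ ‖(y:ℂ) - z‖ := Complex.abs_im_le_norm _
          have him : ((y:ℂ) - z).im = -ε := by simp [hz]
          rw [him] at this
          rw [h0]
          simpa [abs_of_pos hε] using this
        · obtain ⟨m, hm⟩ := Nat.exists_eq_succ_of_ne_zero (Nat.pos_iff_ne_zero.mp hpos)
          have hnot : ¬ (|y - x| < 2 ^ (m + 1) * ε) := Nat.find_min hex (by omega)
          push_neg at hnot
          have : |((y:ℂ) - z).re| ≤ ‖(y:ℂ) - z‖ := Complex.abs_re_le_norm _
          have hre : ((y:ℂ) - z).re = y - x := by simp [hz]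
          rw [hre] at this
          rw [hm]
          calc (2:ℝ) ^ (m + 1) * ε ≤ |y - x| := hnot
            _ ≤ ‖(y:ℂ) - z‖ := this
      have habs : ‖((y : ℂ) - z)⁻¹‖ ≤ (2/ε) * ((2:ℝ)^k)⁻¹ := by
        rw [norm_inv]
        have hpos2 : (0:ℝ) < 2 ^ k * ε := by positivity
        have h1 : (‖(y:ℂ) - z‖)⁻¹ ≤ ((2:ℝ) ^ k * ε)⁻¹ :=
          inv_anti₀ hpos2 hlow
        calc (‖(y:ℂ) - z‖)⁻¹ ≤ ((2:ℝ) ^ k * ε)⁻¹ := h1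
          _ ≤ (2/ε) * ((2:ℝ)^k)⁻¹ := by
              rw [mul_inv, div_eq_mul_inv]
              have hk1 : (0:ℝ) ≤ ((2:ℝ)^k)⁻¹ := by positivity
              have hk2 : (0:ℝ) ≤ ε⁻¹ := by positivity
              nlinarith [mul_nonneg hk1 hk2]
      calc ENNReal.ofReal ‖((y : ℂ) - z)⁻¹‖ ≤ c k := ENNReal.ofReal_le_ofReal habs
        _ = g k y := by rw [hg]; simp [Set.indicator_of_mem hmem]
        _ ≤ ∑' n, g n y := ENNReal.le_tsum k
    have hlint : (∫⁻ y, ENNReal.ofReal ‖((y : ℂ) - z)⁻¹‖ ∂μ) ≤ ∑' n, c n * μ (Io n) := by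
      calc ∫⁻ y, ENNReal.ofReal ‖((y : ℂ) - z)⁻¹‖ ∂μ
          ≤ ∫⁻ y, ∑' n, g n y ∂μ := lintegral_mono hpoint
        _ = ∑' n, ∫⁻ y, g n y ∂μ := lintegral_tsum (fun n =>
            ((measurable_const.indicator (hIomeas n)).aemeasurable))
        _ = ∑' n, c n * μ (Io n) := by
            congr 1; ext n
            exact lintegral_indicator_const (hIomeas n) (c n)
    have hfin : (∑' n, c n * μ (Io n)) ≠ ⊤ := by
      have hle : ∀ n, c n * μ (Io n) ≤ ENNReal.ofReal (2/ε) * (2⁻¹ : ℝ≥0∞) ^ n := by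
        intro n
        have h1 : c n = ENNReal.ofReal (2/ε) * (2⁻¹ : ℝ≥0∞) ^ n := by
          simp only [hc]
          rw [ENNReal.ofReal_mul (by positivity)]
          congr 1
          rw [← inv_pow, ENNReal.ofReal_pow (by norm_num : (0:ℝ) ≤ 2⁻¹)]
          congr 1
          rw [ENNReal.ofReal_inv_of_pos (by norm_num)]
          norm_num
        calc c n * μ (Io n) ≤ c n * 1 := mul_le_mul_right prob_le_one _
          _ = ENNReal.ofReal (2/ε) * (2⁻¹ : ℝ≥0∞) ^ n := by rw [mul_one, h1]
      apply ne_top_of_le_ne_top _ (ENNReal.tsum_le_tsum hle)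
      rw [ENNReal.tsum_mul_left]
      apply ENNReal.mul_ne_top ENNReal.ofReal_ne_top
      rw [ENNReal.tsum_geometric]
      simp [ENNReal.sub_ne_top]
    have hterm_ne : ∀ n, c n * μ (Io n) ≠ ⊤ := fun n =>
      ENNReal.mul_ne_top ENNReal.ofReal_ne_top (measure_ne_top μ _)
    have hmain : ‖∫ y, ((y : ℂ) - z)⁻¹ ∂μ‖
        ≤ (∑' n, c n * μ (Io n)).toReal := by
      calc ‖∫ y, ((y : ℂ) - z)⁻¹ ∂μ‖
          = ‖∫ y, ((y : ℂ) - z)⁻¹ ∂μ‖ := rfl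
        _ ≤ (∫⁻ y, ENNReal.ofReal ‖((y : ℂ) - z)⁻¹‖ ∂μ).toReal :=
            norm_integral_le_lintegral_norm _
        _ ≤ (∑' n, c n * μ (Io n)).toReal :=
            ENNReal.toReal_mono hfin hlint
    have hsum_eq : (∑' n, c n * μ (Io n)).toReal = (2/ε) * ∑' n, t n := by
      rw [ENNReal.tsum_toReal_eq hterm_ne]
      rw [← tsum_mul_left]
      congr 1; ext n
      rw [ENNReal.toReal_mul, ENNReal.toReal_ofReal (by positivity), ht]
      have : (2:ℝ) ^ (-(n:ℤ)) = ((2:ℝ)^n)⁻¹ := by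
        rw [zpow_neg, zpow_natCast]
      simp only [this]
      ring
    rw [hsum_eq] at hmain
    exact hmain
  · -- second inequality
    have hb_summable : Summable (fun n : ℕ => Λ * (2:ℝ)^β * ε^β * ((2:ℝ)^(β-1))^n) :=
      (summable_geometric_of_lt_one hr0 hr1).mul_left _
    have hbound : ∀ n, t n ≤ Λ * (2:ℝ)^β * ε^β * ((2:ℝ)^(β-1))^n := by
      intro n
      have hδ : (0:ℝ) < 2 ^ (n+1) * ε := by positivity
      have h1 : (μ (Io n)).toReal ≤ Λ * ((2:ℝ)^(n+1) * ε) ^ β := hM _ hδ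
      calc t n ≤ (2:ℝ) ^ (-(n:ℤ)) * (Λ * ((2:ℝ)^(n+1) * ε) ^ β) := by
            apply mul_le_mul_of_nonneg_left h1 (by positivity)
        _ = Λ * ((2:ℝ) ^ (-(n:ℤ)) * ((2:ℝ)^(n+1) * ε) ^ β) := by ring
        _ = Λ * ((2:ℝ)^β * ((2:ℝ)^(β-1))^n * ε^β) := by rw [pow_calc β ε hε n]
        _ = Λ * (2:ℝ)^β * ε^β * ((2:ℝ)^(β-1))^n := by ring
    have hT : (∑' n, t n) ≤ Λ * (2:ℝ)^β * ε^β * (1 - (2:ℝ)^(β-1))⁻¹ := by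
      calc (∑' n, t n) ≤ ∑' n, Λ * (2:ℝ)^β * ε^β * ((2:ℝ)^(β-1))^n :=
            Summable.tsum_le_tsum hbound ht_summable hb_summable
        _ = Λ * (2:ℝ)^β * ε^β * ∑' n, ((2:ℝ)^(β-1))^n := tsum_mul_left
        _ = Λ * (2:ℝ)^β * ε^β * (1 - (2:ℝ)^(β-1))⁻¹ := by
            rw [tsum_geometric_of_lt_one hr0 hr1]
    have hinv_nonneg : (0:ℝ) ≤ (1 - (2:ℝ)^(β-1))⁻¹ := by
      apply inv_nonneg.mpr; linarith
    have h4 : (2:ℝ) ^ (2:ℝ) = 4 := by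
      rw [show ((2:ℝ):ℝ) = ((2:ℕ):ℝ) by norm_num, Real.rpow_natCast]
      norm_num
    have h2β : (2:ℝ) ^ ((2:ℝ) + β) = 4 * (2:ℝ)^β := by
      rw [Real.rpow_add (by norm_num : (0:ℝ) < 2), h4]
    have hεβ : ε ^ (β - 1) = ε ^ β * ε⁻¹ := by
      rw [Real.rpow_sub hε, Real.rpow_one, div_eq_mul_inv]
    calc (2/ε) * ∑' n, t n
        ≤ (2/ε) * (Λ * (2:ℝ)^β * ε^β * (1 - (2:ℝ)^(β-1))⁻¹) := by
          apply mul_le_mul_of_nonneg_left hT (by positivity)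
      _ ≤ Λ * (2:ℝ)^((2:ℝ)+β) * (1 - (2:ℝ)^(β-1))⁻¹ * ε^(β-1) := by
          rw [h2β, hεβ, div_eq_mul_inv]
          have h2βpos : (0:ℝ) ≤ (2:ℝ)^β := Real.rpow_nonneg (by norm_num) _
          have hεβpos : (0:ℝ) ≤ ε^β := Real.rpow_nonneg hε.le _
          have hεinv : (0:ℝ) ≤ ε⁻¹ := by positivity
          nlinarith [mul_nonneg (mul_nonneg (mul_nonneg (mul_nonneg hΛ h2βpos) hεβpos) hinv_nonneg) hεinv]
end

section
/- Let μ be a finite Borel measure on ℝ and x ∈ supp μ. Then ε^{−1} P_μ(x+iε) → ∫ 1/(x−y)² dμ(y) as ε → 0⁺ (in [0,∞]), and this limit is strictly positive. -/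
open MeasureTheory Set Filter ENNReal

lemma aux_meas (x c : ℝ) :
    Measurable fun y : ℝ => (ENNReal.ofReal ((x - y) ^ 2 + c))⁻¹ := by
  apply Measurable.inv
  exact ENNReal.measurable_ofReal.comp
    (((measurable_id.const_sub x).pow_const 2).add_const c)

lemma aux_sup (μ : Measure ℝ) (x : ℝ) :
    ⨆ n : ℕ, ∫⁻ y, (ENNReal.ofReal ((x - y) ^ 2 + ((n : ℝ) + 1)⁻¹ ^ 2))⁻¹ ∂μ
      = ∫⁻ y, (ENNReal.ofReal ((x - y) ^ 2))⁻¹ ∂μ := by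
  rw [← lintegral_iSup (fun n => aux_meas x _)]
  · refine lintegral_congr fun y => ?_
    have hmono : Antitone fun n : ℕ =>
        ENNReal.ofReal ((x - y) ^ 2 + ((n : ℝ) + 1)⁻¹ ^ 2) := by
      intro m n hmn
      apply ENNReal.ofReal_le_ofReal
      gcongr
    have htend : Tendsto (fun n : ℕ =>
        (ENNReal.ofReal ((x - y) ^ 2 + ((n : ℝ) + 1)⁻¹ ^ 2))⁻¹) atTop
        (nhds (ENNReal.ofReal ((x - y) ^ 2))⁻¹) := by
      apply Filter.Tendsto.inv
      apply ENNReal.tendsto_ofReal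
      have : Tendsto (fun n : ℕ => ((n : ℝ) + 1)⁻¹ ^ 2) atTop (nhds 0) := by
        have := tendsto_one_div_add_atTop_nhds_zero_nat (𝕜 := ℝ)
        simp only [one_div] at this
        simpa using this.pow 2
      simpa using tendsto_const_nhds.add this
    exact iSup_eq_of_tendsto (fun m n hmn => ENNReal.inv_le_inv.2 (hmono hmn)) htend
  · intro m n hmn
    intro y
    exact ENNReal.inv_le_inv.2 (by
      apply ENNReal.ofReal_le_ofReal
      gcongr)

/-- For `x` in the topological support of a finite measure `μ`,
`ε⁻¹ P_μ(x+iε) → ∫ (x-y)⁻² dμ(y)` as `ε → 0⁺` (in `[0,∞]`), and the limit is positive. -/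
theorem stmt_17 (μ : Measure ℝ) [IsFiniteMeasure μ] (x : ℝ)
    (hx : ∀ δ : ℝ, 0 < δ → μ (Set.Ioo (x - δ) (x + δ)) ≠ 0) :
    Filter.Tendsto
        (fun ε : ℝ => ENNReal.ofReal ε⁻¹ *
          ∫⁻ y, ENNReal.ofReal (ε / ((y - x) ^ 2 + ε ^ 2)) ∂μ)
        (nhdsWithin 0 (Set.Ioi 0))
        (nhds (∫⁻ y, (ENNReal.ofReal ((x - y) ^ 2))⁻¹ ∂μ)) ∧
      0 < ∫⁻ y, (ENNReal.ofReal ((x - y) ^ 2))⁻¹ ∂μ := by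
  set L : ℝ≥0∞ := ∫⁻ y, (ENNReal.ofReal ((x - y) ^ 2))⁻¹ ∂μ with hL
  set g : ℝ → ℝ≥0∞ := fun ε => ∫⁻ y, (ENNReal.ofReal ((x - y) ^ 2 + ε ^ 2))⁻¹ ∂μ with hg
  -- the original function equals g on Ioi 0
  have heq : ∀ ε ∈ Set.Ioi (0 : ℝ),
      ENNReal.ofReal ε⁻¹ * ∫⁻ y, ENNReal.ofReal (ε / ((y - x) ^ 2 + ε ^ 2)) ∂μ = g ε := by
    intro ε hε
    rw [Set.mem_Ioi] at hε
    rw [← lintegral_const_mul' _ _ ENNReal.ofReal_ne_top]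
    refine lintegral_congr fun y => ?_
    have hεpos : 0 < (y - x) ^ 2 + ε ^ 2 := by positivity
    rw [← ENNReal.ofReal_mul (by positivity)]
    rw [show ε⁻¹ * (ε / ((y - x) ^ 2 + ε ^ 2)) = ((x - y) ^ 2 + ε ^ 2)⁻¹ by
      rw [show (x - y) ^ 2 = (y - x) ^ 2 by ring]; field_simp]
    rw [ENNReal.ofReal_inv_of_pos (by nlinarith [sq_nonneg (x - y)])]
  -- g is antitone on Ioi 0
  have hAnti : AntitoneOn g (Set.Ioi (0 : ℝ)) := by
    intro a ha b hb hab
    apply lintegral_mono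
    intro y
    apply ENNReal.inv_le_inv.2
    apply ENNReal.ofReal_le_ofReal
    have : a ^ 2 ≤ b ^ 2 := by nlinarith [ha.out, hb.out]
    linarith
  -- g ε ≤ L for ε > 0
  have hle : ∀ ε ∈ Set.Ioi (0 : ℝ), g ε ≤ L := by
    intro ε hε
    apply lintegral_mono
    intro y
    apply ENNReal.inv_le_inv.2
    apply ENNReal.ofReal_le_ofReal
    nlinarith [sq_nonneg ε]
  -- sSup of image is L
  have hsup : sSup (g '' Set.Ioi (0 : ℝ)) = L := by
    apply le_antisymm
    · exact sSup_le (fun b ⟨ε, hε, hb⟩ => hb ▸ hle ε hε)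
    · rw [hL, ← aux_sup μ x]
      apply iSup_le
      intro n
      apply le_sSup
      exact ⟨((n : ℝ) + 1)⁻¹, by simp [Set.mem_Ioi]; positivity, rfl⟩
  constructor
  · have := hAnti.tendsto_nhdsGT (OrderTop.bddAbove _)
    rw [hsup] at this
    exact this.congr' (eventuallyEq_nhdsWithin_of_eqOn fun ε hε => (heq ε hε).symm)
  · -- positivity
    have hμ : μ (Set.Ioo (x - 1) (x + 1)) ≠ 0 := hx 1 one_pos
    calc (0 : ℝ≥0∞) < μ (Set.Ioo (x - 1) (x + 1)) := pos_iff_ne_zero.2 hμ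
      _ = ∫⁻ y, (Set.Ioo (x - 1) (x + 1)).indicator 1 y ∂μ := by
          rw [lintegral_indicator_one measurableSet_Ioo]
      _ ≤ L := by
          apply lintegral_mono
          intro y
          by_cases hy : y ∈ Set.Ioo (x - 1) (x + 1)
          · rw [Set.indicator_of_mem hy]
            simp only [Pi.one_apply]
            rw [ENNReal.one_le_inv]
            apply ENNReal.ofReal_le_one.2
            obtain ⟨h1, h2⟩ := hy
            nlinarith
          · rw [Set.indicator_of_notMem hy]; exact zero_le
end
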